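/- arXiv:2207.06125 — 6 statements merged into one kernel-verified Lean document; each statement's English description precedes it below -/
import Mathlib

section
/- Let 0 ≤ σ₁ < σ₂ and for i = 1,2 let V_i : (α_i,1] → ℝ be a right solution with speed σ_i. Then V₁(u) > V₂(u) for every u ∈ (max(α₁,α₂), 1). -/
open Set Filter Topology
open scoped ENNReal

noncomputable section

/-- The strip `Ω` between `-ω` and `ω` over `[0,1]`:
`Ω = {(u,s) : u ∈ [0,1], -ω(u) < s < ω(u)}`. -/
def OmegaSet (ω : ℝ → ℝ≥0∞) : Set (ℝ × ℝ) :=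
  {p | p.1 ∈ Set.Icc (0:ℝ) 1 ∧ ENNReal.ofReal |p.2| < ω p.1}

/-- The set `𝒟` between `a₋ = -a₊` and `a₊` over `[0,1]`. -/
def DSet (aplus : ℝ → ℝ≥0∞) : Set (ℝ × ℝ) :=
  {p | p.1 ∈ Set.Icc (0:ℝ) 1 ∧ ENNReal.ofReal |p.2| < aplus p.1}

/-- Standing data and hypotheses: a lower semicontinuous width `ω : [0,1] → (0,∞]`,
a regular flux `a` on `Ω` (odd in `s`, C¹, with `∂a/∂s > 0`), the maximal fluxes
`a₊(u) = lim_{s→ω(u)⁻} a(u,s)` (equivalently, the supremum over `0 < s < ω(u)`),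
which are `+∞` whenever `ω(u) < ∞`, the partial inverse `g` on `𝒟` defined by
`a(u, g(u,v)) = v`, and a logistic-type reaction term `f`. -/
structure FluxData where
  ω : ℝ → ℝ≥0∞
  a : ℝ → ℝ → ℝ
  aplus : ℝ → ℝ≥0∞
  g : ℝ → ℝ → ℝ
  f : ℝ → ℝ
  ω_pos : ∀ u ∈ Set.Icc (0:ℝ) 1, 0 < ω u
  ω_lsc : LowerSemicontinuousOn ω (Set.Icc (0:ℝ) 1)
  a_odd : ∀ u s, (u, s) ∈ OmegaSet ω → a u (-s) = - a u s
  a_C1 : ContDiffOn ℝ 1 (fun p : ℝ × ℝ => a p.1 p.2) (OmegaSet ω)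
  a_deriv_pos : ∀ u s, (u, s) ∈ OmegaSet ω → ∃ d : ℝ, 0 < d ∧ HasDerivAt (a u) d s
  aplus_def : ∀ u ∈ Set.Icc (0:ℝ) 1,
      aplus u = ⨆ s ∈ {s : ℝ | 0 < s ∧ (u, s) ∈ OmegaSet ω}, ENNReal.ofReal (a u s)
  aplus_pos : ∀ u ∈ Set.Icc (0:ℝ) 1, 0 < aplus u
  aplus_top : ∀ u ∈ Set.Icc (0:ℝ) 1, ω u < ⊤ → aplus u = ⊤
  g_spec : ∀ p ∈ DSet aplus, (p.1, g p.1 p.2) ∈ OmegaSet ω ∧ a p.1 (g p.1 p.2) = p.2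
  f_C1 : ContDiffOn ℝ 1 f (Set.Icc (0:ℝ) 1)
  f_zero : f 0 = 0
  f_one : f 1 = 0
  f_pos : ∀ u ∈ Set.Ioo (0:ℝ) 1, 0 < f u

/-- A classic traveling wave of `u_t = (b(u,u_x))_x + f(u)` moving at speed `σ`:
a C² increasing profile `u` with values in `(0,1)`, `0 < u' < ω(u)`, connecting
`0` at `-∞` to `1` at `+∞`, such that `ξ ↦ b(u(ξ),u'(ξ))` is differentiable and
`(b(u,u'))' - σ u' + f(u) = 0`. -/
def IsClassicTW (F : FluxData) (b : ℝ → ℝ → ℝ) (σ : ℝ) (u : ℝ → ℝ) : Prop :=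
  ContDiff ℝ 2 u ∧
  (∀ ξ : ℝ, u ξ ∈ Set.Ioo (0:ℝ) 1) ∧
  (∀ ξ : ℝ, 0 < deriv u ξ ∧ ENNReal.ofReal (deriv u ξ) < F.ω (u ξ)) ∧
  Filter.Tendsto u Filter.atBot (nhds 0) ∧
  Filter.Tendsto u Filter.atTop (nhds 1) ∧
  (∀ ξ : ℝ, HasDerivAt (fun t => b (u t) (deriv u t)) (σ * deriv u ξ - F.f (u ξ)) ξ)

/-- A right solution with speed `σ`: `V : (α,1] → ℝ`, continuous on `(α,1]`,
C¹ on `(α,1)`, `V(1) = 0`, and on `(α,1)` : `V > 0`, `(u,V(u)) ∈ 𝒟` and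
`V' = σ - f(u)/g(u,V(u))`. -/
def IsRightSolution (F : FluxData) (σ α : ℝ) (V : ℝ → ℝ) : Prop :=
  α ∈ Set.Ico (0:ℝ) 1 ∧
  ContinuousOn V (Set.Ioc α 1) ∧
  V 1 = 0 ∧
  ∀ u ∈ Set.Ioo α 1, 0 < V u ∧ (u, V u) ∈ DSet F.aplus ∧
    HasDerivAt V (σ - F.f u / F.g u (V u)) u

open Classical in
/-- `ℋ(u,V) = 1/g(u,V)` if `0 < V < a₊(u)`, and `0` if `V ≥ a₊(u)`. -/
def Hfun (F : FluxData) (u V : ℝ) : ℝ :=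
  if ENNReal.ofReal V < F.aplus u then 1 / F.g u V else 0

/-- The solution `𝒱_σ` of the extended problem: continuous on `[0,1]`, C¹ on `(0,1)`,
`𝒱(1) = 0`, `𝒱 > 0` on `(0,1)` and `𝒱' = σ - f(u)·ℋ(u,𝒱(u))` on `(0,1)`. -/
def IsVsol (F : FluxData) (σ : ℝ) (V : ℝ → ℝ) : Prop :=
  ContinuousOn V (Set.Icc (0:ℝ) 1) ∧ V 1 = 0 ∧
  (∀ u ∈ Set.Ioo (0:ℝ) 1, 0 < V u) ∧
  (∀ u ∈ Set.Ioo (0:ℝ) 1, HasDerivAt V (σ - F.f u * Hfun F u (V u)) u)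

lemma a_strictMonoOn (F : FluxData) {u : ℝ} (hu : u ∈ Set.Icc (0:ℝ) 1) :
    StrictMonoOn (F.a u) {s : ℝ | ENNReal.ofReal |s| < F.ω u} := by
  set S := {s : ℝ | ENNReal.ofReal |s| < F.ω u} with hS
  have hopen : IsOpen S := by
    have hc : Continuous fun s : ℝ => ENNReal.ofReal |s| :=
      ENNReal.continuous_ofReal.comp continuous_abs
    exact isOpen_Iio.preimage hc
  have hconv : Convex ℝ S := by
    intro x hx y hy a b ha hb hab
    have h1 : |a • x + b • y| ≤ max |x| |y| := by
      calc |a • x + b • y| ≤ |a • x| + |b • y| := abs_add_le _ _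
        _ = a * |x| + b * |y| := by
            simp [abs_mul, abs_of_nonneg ha, abs_of_nonneg hb, smul_eq_mul]
        _ ≤ a * max |x| |y| + b * max |x| |y| := by
            gcongr <;> [exact le_max_left _ _; exact le_max_right _ _]
        _ = max |x| |y| := by rw [← add_mul, hab, one_mul]
    have : ENNReal.ofReal |a • x + b • y| ≤ max (ENNReal.ofReal |x|) (ENNReal.ofReal |y|) := by
      refine (ENNReal.ofReal_le_ofReal h1).trans ?_
      rcases max_cases |x| |y| with ⟨h, _⟩ | ⟨h, _⟩ <;> rw [h]
      · exact le_max_left _ _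
      · exact le_max_right _ _
    exact lt_of_le_of_lt this (max_lt hx hy)
  have hcont : ContinuousOn (F.a u) S := by
    have hc : ContinuousOn (fun p : ℝ × ℝ => F.a p.1 p.2) (OmegaSet F.ω) :=
      F.a_C1.continuousOn
    exact hc.comp ((Continuous.prodMk_right u).continuousOn) (fun s hs => ⟨hu, hs⟩)
  refine strictMonoOn_of_deriv_pos hconv hcont ?_
  intro x hx
  rw [hopen.interior_eq] at hx
  obtain ⟨d, hd, hder⟩ := F.a_deriv_pos u x ⟨hu, hx⟩
  rwa [hder.deriv]

lemma a_zero (F : FluxData) {u : ℝ} (hu : u ∈ Set.Icc (0:ℝ) 1) : F.a u 0 = 0 := by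
  have h0 : (u, (0:ℝ)) ∈ OmegaSet F.ω := by
    refine ⟨hu, ?_⟩; simpa using F.ω_pos u hu
  have := F.a_odd u 0 h0
  simp at this
  linarith

lemma zero_mem_section (F : FluxData) {u : ℝ} (hu : u ∈ Set.Icc (0:ℝ) 1) :
    (0:ℝ) ∈ {s : ℝ | ENNReal.ofReal |s| < F.ω u} := by
  simpa using F.ω_pos u hu

lemma g_pos (F : FluxData) {u v : ℝ} (hv : (u, v) ∈ DSet F.aplus) (hv0 : 0 < v) :
    0 < F.g u v := by
  obtain ⟨hmem, heq⟩ := F.g_spec (u, v) hv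
  have hu : u ∈ Set.Icc (0:ℝ) 1 := hv.1
  by_contra h
  push_neg at h
  have hle : F.a u (F.g u v) ≤ F.a u 0 :=
    (a_strictMonoOn F hu).monotoneOn hmem.2 (zero_mem_section F hu) h
  rw [heq, a_zero F hu] at hle
  linarith

lemma g_mono (F : FluxData) {u v₁ v₂ : ℝ} (h₁ : (u, v₁) ∈ DSet F.aplus)
    (h₂ : (u, v₂) ∈ DSet F.aplus) (h : v₁ ≤ v₂) : F.g u v₁ ≤ F.g u v₂ := by
  obtain ⟨hm₁, he₁⟩ := F.g_spec (u, v₁) h₁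
  obtain ⟨hm₂, he₂⟩ := F.g_spec (u, v₂) h₂
  have hu : u ∈ Set.Icc (0:ℝ) 1 := h₁.1
  by_contra hc
  push_neg at hc
  have := (a_strictMonoOn F hu) hm₂.2 hm₁.2 hc
  rw [he₁, he₂] at this
  linarith

theorem stmt2 (F : FluxData) (σ₁ σ₂ : ℝ) (hσ₁ : 0 ≤ σ₁) (hσ₁₂ : σ₁ < σ₂)
    (α₁ α₂ : ℝ) (V₁ V₂ : ℝ → ℝ)
    (hV₁ : IsRightSolution F σ₁ α₁ V₁) (hV₂ : IsRightSolution F σ₂ α₂ V₂) :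
    ∀ u ∈ Set.Ioo (max α₁ α₂) 1, V₂ u < V₁ u := by
  obtain ⟨hα₁, hcont₁, hone₁, hsol₁⟩ := hV₁
  obtain ⟨hα₂, hcont₂, hone₂, hsol₂⟩ := hV₂
  set β := max α₁ α₂ with hβ
  set W : ℝ → ℝ := fun u => V₁ u - V₂ u with hW
  have hβ0 : 0 ≤ β := le_max_of_le_left hα₁.1
  -- continuity of W on Ioc β 1
  have hWc : ContinuousOn W (Set.Ioc β 1) := by
    apply ContinuousOn.sub
    · exact hcont₁.mono (Set.Ioc_subset_Ioc_left (le_max_left _ _))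
    · exact hcont₂.mono (Set.Ioc_subset_Ioc_left (le_max_right _ _))
  have hW1 : W 1 = 0 := by simp [hW, hone₁, hone₂]
  -- derivative of W at points of Ioo β 1
  have hWder : ∀ u ∈ Set.Ioo β 1,
      HasDerivAt W ((σ₁ - F.f u / F.g u (V₁ u)) - (σ₂ - F.f u / F.g u (V₂ u))) u := by
    intro u hu
    have hu₁ : u ∈ Set.Ioo α₁ 1 := ⟨lt_of_le_of_lt (le_max_left _ _) hu.1, hu.2⟩
    have hu₂ : u ∈ Set.Ioo α₂ 1 := ⟨lt_of_le_of_lt (le_max_right _ _) hu.1, hu.2⟩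
    exact ((hsol₁ u hu₁).2.2).sub ((hsol₂ u hu₂).2.2)
  -- key: wherever W u ≤ 0 on Ioo β 1, the derivative value is < 0
  have hkey : ∀ u ∈ Set.Ioo β 1, W u ≤ 0 →
      (σ₁ - F.f u / F.g u (V₁ u)) - (σ₂ - F.f u / F.g u (V₂ u)) < 0 := by
    intro u hu hWu
    have hu₁ : u ∈ Set.Ioo α₁ 1 := ⟨lt_of_le_of_lt (le_max_left _ _) hu.1, hu.2⟩
    have hu₂ : u ∈ Set.Ioo α₂ 1 := ⟨lt_of_le_of_lt (le_max_right _ _) hu.1, hu.2⟩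
    obtain ⟨hV₁pos, hD₁, _⟩ := hsol₁ u hu₁
    obtain ⟨hV₂pos, hD₂, _⟩ := hsol₂ u hu₂
    have hfu : 0 < F.f u := F.f_pos u ⟨lt_of_le_of_lt hβ0 hu.1, hu.2⟩
    have hg₁ : 0 < F.g u (V₁ u) := g_pos F hD₁ hV₁pos
    have hVle : V₁ u ≤ V₂ u := by simpa [hW, sub_nonpos] using hWu
    have hgle : F.g u (V₁ u) ≤ F.g u (V₂ u) := g_mono F hD₁ hD₂ hVle
    have hfle : F.f u / F.g u (V₂ u) ≤ F.f u / F.g u (V₁ u) :=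
      div_le_div_of_nonneg_left hfu.le hg₁ hgle
    linarith
  -- Main claim: 0 < W on Ioo β 1.
  -- Step: if W u₀ < 0 for some u₀ ∈ Ioo β 1, contradiction.
  have hneg : ∀ u₀ ∈ Set.Ioo β 1, ¬ (W u₀ < 0) := by
    intro u₀ hu₀ hWneg
    -- first zero of W after u₀
    set Z := {u ∈ Set.Icc u₀ 1 | W u = 0} with hZ
    have hZne : Z.Nonempty := ⟨1, ⟨hu₀.2.le, le_rfl⟩, hW1⟩
    have hZbdd : BddBelow Z := ⟨u₀, fun x hx => hx.1.1⟩
    set u₁ := sInf Z with hu₁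
    have hsub : Set.Icc u₀ 1 ⊆ Set.Ioc β 1 := fun x hx => ⟨lt_of_lt_of_le hu₀.1 hx.1, hx.2⟩
    have hZclosed : IsClosed Z := by
      have : Z = Set.Icc u₀ 1 ∩ W ⁻¹' {0} := by ext x; simp [hZ, Set.mem_setOf_eq]
      rw [this]
      exact (hWc.mono hsub).preimage_isClosed_of_isClosed isClosed_Icc isClosed_singleton
    have hu₁Z : u₁ ∈ Z := hZclosed.csInf_mem hZne hZbdd
    have hu₁Icc : u₁ ∈ Set.Icc u₀ 1 := hu₁Z.1
    have hWu₁ : W u₁ = 0 := hu₁Z.2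
    have hu₀lt : u₀ < u₁ := by
      rcases lt_or_eq_of_le hu₁Icc.1 with h | h
      · exact h
      · exact absurd hWu₁ (by rw [← h]; linarith)
    -- W < 0 on Ico u₀ u₁
    have hWneg' : ∀ x ∈ Set.Ico u₀ u₁, W x < 0 := by
      intro x hx
      rcases lt_trichotomy (W x) 0 with h | h | h
      · exact h
      · exact absurd (csInf_le hZbdd ⟨⟨hx.1, hx.2.le.trans hu₁Icc.2⟩, h⟩) (not_le.mpr hx.2)
      · -- IVT gives a zero in Icc u₀ x, contradicting minimality
        have hcx : ContinuousOn W (Set.Icc u₀ x) :=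
          hWc.mono (fun y hy => hsub ⟨hy.1, hy.2.trans (hx.2.le.trans hu₁Icc.2)⟩)
        obtain ⟨z, hz, hz0⟩ := intermediate_value_Icc hx.1 hcx
          (show (0:ℝ) ∈ Set.Icc (W u₀) (W x) from ⟨hWneg.le, h.le⟩)
        have : u₁ ≤ z := csInf_le hZbdd ⟨⟨hz.1, hz.2.trans (hx.2.le.trans hu₁Icc.2)⟩, hz0⟩
        linarith [hz.2, hx.2]
    -- W is strictly decreasing on Icc u₀ u₁
    have hanti : StrictAntiOn W (Set.Icc u₀ u₁) := by
      apply strictAntiOn_of_deriv_neg (convex_Icc u₀ u₁)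
        (hWc.mono (fun y hy => hsub ⟨hy.1, hy.2.trans hu₁Icc.2⟩))
      intro x hx
      rw [interior_Icc] at hx
      have hx' : x ∈ Set.Ioo β 1 := ⟨lt_trans hu₀.1 hx.1, lt_of_lt_of_le hx.2 hu₁Icc.2⟩
      rw [(hWder x hx').deriv]
      exact hkey x hx' (hWneg' x ⟨hx.1.le, hx.2⟩).le
    have := hanti (Set.left_mem_Icc.mpr hu₀lt.le) (Set.right_mem_Icc.mpr hu₀lt.le) hu₀lt
    linarith
  -- Now show W u₀ > 0 for all u₀ ∈ Ioo β 1
  intro u₀ hu₀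
  rw [← sub_pos]
  show 0 < W u₀
  rcases lt_trichotomy (W u₀) 0 with h | h | h
  · exact absurd h (hneg u₀ hu₀)
  · -- W u₀ = 0 : derivative is < 0, so W goes negative just to the right
    exfalso
    have hd := hWder u₀ hu₀
    have hdneg := hkey u₀ hu₀ h.le
    have hslope : Tendsto (slope W u₀) (𝓝[>] u₀) (𝓝 _) :=
      (hasDerivAt_iff_tendsto_slope.mp hd).mono_left (nhdsWithin_mono _ (by
        intro x hx; exact ne_of_gt hx))
    have hev : ∀ᶠ x in 𝓝[>] u₀, slope W u₀ x < 0 :=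
      hslope.eventually_lt_const hdneg
    have hev2 : ∀ᶠ x in 𝓝[>] u₀, x < 1 :=
      eventually_nhdsWithin_of_eventually_nhds (tendsto_id.eventually_lt_const hu₀.2)
    obtain ⟨x, ⟨hsx, hx1⟩, hxgt⟩ := ((hev.and hev2).and self_mem_nhdsWithin).exists
    have hxgt' : u₀ < x := hxgt
    have : W x - W u₀ < 0 := by
      have := mul_neg_of_neg_of_pos hsx (sub_pos.mpr hxgt')
      rwa [slope_def_field, div_mul_cancel₀ _ (by linarith : x - u₀ ≠ 0)] at this
    rw [h, sub_zero] at this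
    exact hneg x ⟨lt_trans hu₀.1 hxgt', hx1⟩ this
  · exact h
end
end

section
/- Assume (H_c) and fix σ ≥ 0. For each ε > 0, the map s ↦ a(u,s) + εs is a strictly increasing bijection from (−ω(u),ω(u)) onto ℝ for each u ∈ [0,1]; let g^ε(u,·) be its inverse, and let V^ε be the unique function, continuous on [0,1] and C¹ on (0,1), with V^ε(1) = 0, V^ε(u) > 0 for u ∈ (0,1), and (V^ε)'(u) = σ − f(u)/g^ε(u,V^ε(u)) for u ∈ (0,1). Then for all 0 < ε₁ < ε₂ and all u ∈ [0,1]: 𝒱_σ(u) ≤ V^{ε₁}(u) ≤ V^{ε₂}(u). -/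
open Set Filter Topology
open scoped ENNReal

noncomputable section

namespace Stmt9Aux

/-- Section of `Ω` over `u`. -/
def sec (F : FluxData) (u : ℝ) : Set ℝ := {s : ℝ | (u, s) ∈ OmegaSet F.ω}

variable {F : FluxData}

lemma sec_eq {u : ℝ} (hu : u ∈ Set.Icc (0:ℝ) 1) :
    sec F u = {s : ℝ | ENNReal.ofReal |s| < F.ω u} := by
  ext s
  simp only [sec, OmegaSet, Set.mem_setOf_eq]
  exact ⟨fun h => h.2, fun h => ⟨hu, h⟩⟩

lemma isOpen_sec {u : ℝ} (hu : u ∈ Set.Icc (0:ℝ) 1) : IsOpen (sec F u) := by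
  rw [sec_eq hu]
  exact (ENNReal.continuous_ofReal.comp continuous_abs).isOpen_preimage _ isOpen_Iio

lemma convex_sec {u : ℝ} (hu : u ∈ Set.Icc (0:ℝ) 1) : Convex ℝ (sec F u) := by
  rw [sec_eq hu]
  intro x hx y hy a b ha hb hab
  simp only [Set.mem_setOf_eq] at hx hy ⊢
  have h1 : |a • x + b • y| ≤ max |x| |y| := by
    calc |a • x + b • y| ≤ a * |x| + b * |y| := by
          simp only [smul_eq_mul]
          calc |a * x + b * y| ≤ |a * x| + |b * y| := abs_add_le _ _
            _ = a * |x| + b * |y| := by rw [abs_mul, abs_mul, abs_of_nonneg ha, abs_of_nonneg hb]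
      _ ≤ a * max |x| |y| + b * max |x| |y| := by
          gcongr <;> [exact le_max_left _ _; exact le_max_right _ _]
      _ = max |x| |y| := by rw [← add_mul, hab, one_mul]
  calc ENNReal.ofReal |a • x + b • y| ≤ ENNReal.ofReal (max |x| |y|) :=
        ENNReal.ofReal_le_ofReal h1
    _ = max (ENNReal.ofReal |x|) (ENNReal.ofReal |y|) := by
        rcases le_total |x| |y| with h | h
        · rw [max_eq_right h, max_eq_right (ENNReal.ofReal_le_ofReal h)]
        · rw [max_eq_left h, max_eq_left (ENNReal.ofReal_le_ofReal h)]
    _ < F.ω u := max_lt hx hy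

lemma zero_mem_sec {u : ℝ} (hu : u ∈ Set.Icc (0:ℝ) 1) : (0:ℝ) ∈ sec F u := by
  rw [sec_eq hu]
  simpa using F.ω_pos u hu

lemma a_zero {u : ℝ} (hu : u ∈ Set.Icc (0:ℝ) 1) : F.a u 0 = 0 := by
  have h0 : (u, (0:ℝ)) ∈ OmegaSet F.ω := zero_mem_sec hu
  have := F.a_odd u 0 h0
  simp only [neg_zero] at this
  linarith

lemma hasDerivAt_phi (ε : ℝ) {u s : ℝ} (h : s ∈ sec F u) :
    ∃ d : ℝ, 0 < d ∧ HasDerivAt (fun t => F.a u t + ε * t) (d + ε) s := by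
  obtain ⟨d, hd, hda⟩ := F.a_deriv_pos u s h
  refine ⟨d, hd, ?_⟩
  have h2 : HasDerivAt (fun t : ℝ => ε * t) ε s := by
    simpa using (hasDerivAt_id s).const_mul ε
  exact hda.add h2

lemma contOn_phi (ε : ℝ) {u : ℝ} :
    ContinuousOn (fun s => F.a u s + ε * s) (sec F u) := by
  intro x hx
  obtain ⟨d, _, h⟩ := hasDerivAt_phi ε hx
  exact h.continuousAt.continuousWithinAt

lemma sm_phi' (ε : ℝ) (hε : 0 ≤ ε) {u : ℝ} (hu : u ∈ Set.Icc (0:ℝ) 1) :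
    StrictMonoOn (fun s => F.a u s + ε * s) (sec F u) := by
  apply strictMonoOn_of_deriv_pos (convex_sec hu) (contOn_phi ε)
  intro x hx
  rw [(isOpen_sec hu).interior_eq] at hx
  obtain ⟨d, hd, h⟩ := hasDerivAt_phi ε hx
  rw [h.deriv]
  linarith

lemma sm_a {u : ℝ} (hu : u ∈ Set.Icc (0:ℝ) 1) : StrictMonoOn (F.a u) (sec F u) := by
  have h := sm_phi' (F := F) 0 le_rfl hu
  intro x hx y hy hxy
  have := h hx hy hxy
  simpa using this

lemma exists_big (ε : ℝ) (hε : 0 < ε) {u : ℝ} (hu : u ∈ Set.Icc (0:ℝ) 1) (v : ℝ) :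
    ∃ s, s ∈ sec F u ∧ 0 < s ∧ v ≤ F.a u s + ε * s := by
  rcases eq_or_ne (F.ω u) ⊤ with hw | hw
  · have hmem : ∀ s : ℝ, s ∈ sec F u := by
      intro s
      rw [sec_eq hu, hw]
      exact ENNReal.ofReal_lt_top
    set s := max 1 ((v - F.a u 1) / ε) with hs
    have h1pos : (0:ℝ) < s := lt_of_lt_of_le one_pos (le_max_left _ _)
    have ha1 : F.a u 1 ≤ F.a u s :=
      (sm_a hu).monotoneOn (hmem 1) (hmem s) (le_max_left _ _)
    refine ⟨s, hmem s, h1pos, ?_⟩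
    have h2 : (v - F.a u 1) / ε ≤ s := le_max_right _ _
    rw [div_le_iff₀ hε] at h2
    nlinarith
  · have htop : F.aplus u = ⊤ := F.aplus_top u hu (lt_top_iff_ne_top.2 hw)
    have hsup := F.aplus_def u hu
    rw [htop] at hsup
    have hlt : ENNReal.ofReal |v| <
        ⨆ s ∈ {s : ℝ | 0 < s ∧ (u, s) ∈ OmegaSet F.ω}, ENNReal.ofReal (F.a u s) := by
      rw [← hsup]; exact ENNReal.ofReal_lt_top
    simp only [lt_iSup_iff] at hlt
    obtain ⟨s, hs, hlt⟩ := hlt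
    have hv : |v| < F.a u s := by
      by_contra h
      push_neg at h
      exact absurd (ENNReal.ofReal_le_ofReal h) (not_le.2 hlt)
    refine ⟨s, hs.2, hs.1, ?_⟩
    nlinarith [le_abs_self v, hs.1]

lemma surjOn_phi (ε : ℝ) (hε : 0 < ε) {u : ℝ} (hu : u ∈ Set.Icc (0:ℝ) 1) :
    Set.SurjOn (fun s => F.a u s + ε * s) (sec F u) Set.univ := by
  intro v _
  obtain ⟨s, hs, hspos, hbig⟩ := exists_big ε hε hu |v|
  have hnegs : -s ∈ sec F u := by
    rw [sec_eq hu] at hs ⊢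
    simpa using hs
  have hodd : F.a u (-s) = -F.a u s := F.a_odd u s hs
  have hle : -s ≤ s := by linarith
  have hIccsub : Set.Icc (-s) s ⊆ sec F u :=
    (convex_sec hu).ordConnected.out hnegs hs
  have hcont : ContinuousOn (fun t => F.a u t + ε * t) (Set.Icc (-s) s) :=
    (contOn_phi ε).mono hIccsub
  have hvmem : v ∈ Set.Icc (F.a u (-s) + ε * (-s)) (F.a u s + ε * s) := by
    constructor
    · rw [hodd]
      have := neg_abs_le v
      nlinarith
    · linarith [le_abs_self v]
  obtain ⟨t, ht, hft⟩ := intermediate_value_Icc hle hcont hvmem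
  exact ⟨t, hIccsub ht, hft⟩

lemma bijOn_phi (ε : ℝ) (hε : 0 < ε) {u : ℝ} (hu : u ∈ Set.Icc (0:ℝ) 1) :
    Set.BijOn (fun s => F.a u s + ε * s) (sec F u) Set.univ :=
  ⟨fun _ _ => Set.mem_univ _, (sm_phi' ε hε.le hu).injOn, surjOn_phi ε hε hu⟩

section gLemmas

variable {ε : ℝ} {g : ℝ → ℝ → ℝ}
  (hg : ∀ u ∈ Set.Icc (0:ℝ) 1, ∀ v : ℝ,
    (u, g u v) ∈ OmegaSet F.ω ∧ F.a u (g u v) + ε * g u v = v)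

include hg

lemma gpos (hε : 0 < ε) {u : ℝ} (hu : u ∈ Set.Icc (0:ℝ) 1) {v : ℝ} (hv : 0 < v) :
    0 < g u v := by
  by_contra h
  push_neg at h
  have hgm : g u v ∈ sec F u := (hg u hu v).1
  have hmono := (sm_phi' ε hε.le hu).monotoneOn hgm (zero_mem_sec hu) h
  have h2 : F.a u (g u v) + ε * g u v ≤ F.a u 0 + ε * 0 := hmono
  have heq := (hg u hu v).2
  have ha0 := a_zero (F := F) hu
  linarith

lemma gmono (hε : 0 < ε) {u : ℝ} (hu : u ∈ Set.Icc (0:ℝ) 1) {v v' : ℝ}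
    (hvv' : v ≤ v') : g u v ≤ g u v' := by
  by_contra h
  push_neg at h
  have hlt := sm_phi' ε hε.le hu (hg u hu v').1 (hg u hu v).1 h
  have h1 : F.a u (g u v') + ε * g u v' < F.a u (g u v) + ε * g u v := hlt
  rw [(hg u hu v).2, (hg u hu v').2] at h1
  linarith

end gLemmas

/-- For `v > 0` the inverse for the larger `ε` is smaller. -/
lemma g_lt_g {ε₁ ε₂ : ℝ} {g1 g2 : ℝ → ℝ → ℝ} (hε₁ : 0 < ε₁) (hε₁₂ : ε₁ < ε₂)
    (hg1 : ∀ u ∈ Set.Icc (0:ℝ) 1, ∀ v : ℝ,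
      (u, g1 u v) ∈ OmegaSet F.ω ∧ F.a u (g1 u v) + ε₁ * g1 u v = v)
    (hg2 : ∀ u ∈ Set.Icc (0:ℝ) 1, ∀ v : ℝ,
      (u, g2 u v) ∈ OmegaSet F.ω ∧ F.a u (g2 u v) + ε₂ * g2 u v = v)
    {u : ℝ} (hu : u ∈ Set.Icc (0:ℝ) 1) {v : ℝ} (hv : 0 < v) :
    g2 u v < g1 u v := by
  have hg2pos : 0 < g2 u v := gpos hg2 (hε₁.trans hε₁₂) hu hv
  by_contra h
  push_neg at h
  have hmono := (sm_phi' ε₁ hε₁.le hu).monotoneOn (hg1 u hu v).1 (hg2 u hu v).1 h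
  have h1 : F.a u (g1 u v) + ε₁ * g1 u v ≤ F.a u (g2 u v) + ε₁ * g2 u v := hmono
  rw [(hg1 u hu v).2] at h1
  have h2 := (hg2 u hu v).2
  nlinarith

/-- Facts about `F.g` on `𝒟 ∩ {v > 0}`. -/
lemma Fg_facts {u v : ℝ} (hu : u ∈ Set.Icc (0:ℝ) 1) (hv : 0 < v)
    (hva : ENNReal.ofReal v < F.aplus u) :
    (u, F.g u v) ∈ OmegaSet F.ω ∧ F.a u (F.g u v) = v ∧ 0 < F.g u v := by
  have hd : (u, v) ∈ DSet F.aplus := ⟨hu, by rwa [abs_of_pos hv]⟩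
  obtain ⟨hmem, heq⟩ := F.g_spec (u, v) hd
  refine ⟨hmem, heq, ?_⟩
  by_contra h
  push_neg at h
  have := (sm_a hu).monotoneOn (show F.g u v ∈ sec F u from hmem) (zero_mem_sec hu) h
  rw [heq, a_zero hu] at this
  linarith

/-- `g1 < F.g` where both are defined. -/
lemma g1_lt_Fg {ε₁ : ℝ} {g1 : ℝ → ℝ → ℝ} (hε₁ : 0 < ε₁)
    (hg1 : ∀ u ∈ Set.Icc (0:ℝ) 1, ∀ v : ℝ,
      (u, g1 u v) ∈ OmegaSet F.ω ∧ F.a u (g1 u v) + ε₁ * g1 u v = v)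
    {u v : ℝ} (hu : u ∈ Set.Icc (0:ℝ) 1) (hv : 0 < v)
    (hva : ENNReal.ofReal v < F.aplus u) :
    g1 u v < F.g u v := by
  obtain ⟨hmem, heq, hFgpos⟩ := Fg_facts (F := F) hu hv hva
  have hg1pos : 0 < g1 u v := gpos hg1 hε₁ hu hv
  by_contra h
  push_neg at h
  have hmono := (sm_a hu).monotoneOn (show F.g u v ∈ sec F u from hmem)
    (show g1 u v ∈ sec F u from (hg1 u hu v).1) h
  rw [heq] at hmono
  have h2 := (hg1 u hu v).2
  nlinarith

lemma Hfun_lt {ε₁ : ℝ} {g1 : ℝ → ℝ → ℝ} (hε₁ : 0 < ε₁)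
    (hg1 : ∀ u ∈ Set.Icc (0:ℝ) 1, ∀ v : ℝ,
      (u, g1 u v) ∈ OmegaSet F.ω ∧ F.a u (g1 u v) + ε₁ * g1 u v = v)
    {u v : ℝ} (hu : u ∈ Set.Icc (0:ℝ) 1) (hv : 0 < v) :
    Hfun F u v < 1 / g1 u v := by
  have hg1pos : 0 < g1 u v := gpos hg1 hε₁ hu hv
  unfold Hfun
  split_ifs with h
  · exact one_div_lt_one_div_of_lt hg1pos (g1_lt_Fg hε₁ hg1 hu hv h)
  · positivity

lemma Hfun_anti {u v v' : ℝ} (hu : u ∈ Set.Icc (0:ℝ) 1) (hv : 0 < v) (hvv' : v ≤ v') :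
    Hfun F u v' ≤ Hfun F u v := by
  unfold Hfun
  split_ifs with h1 h2 h3
  · obtain ⟨hm, he, hp⟩ := Fg_facts (F := F) hu hv h2
    obtain ⟨hm', he', hp'⟩ := Fg_facts (F := F) hu (hv.trans_le hvv') h1
    have hle : F.g u v ≤ F.g u v' := by
      by_contra hc
      push_neg at hc
      have := sm_a hu (show F.g u v' ∈ sec F u from hm') (show F.g u v ∈ sec F u from hm) hc
      rw [he, he'] at this
      linarith
    exact one_div_le_one_div_of_le hp hle
  · exact absurd ((ENNReal.ofReal_le_ofReal hvv').trans_lt h1) h2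
  · obtain ⟨_, _, hp⟩ := Fg_facts (F := F) hu hv h3
    positivity
  · exact le_rfl

/-- Backward-in-`u` comparison principle on `[0,1]` with common value `0` at `1`. -/
lemma comparison (W1 W2 D1 D2 : ℝ → ℝ)
    (hc1 : ContinuousOn W1 (Set.Icc (0:ℝ) 1)) (hc2 : ContinuousOn W2 (Set.Icc (0:ℝ) 1))
    (h11 : W1 1 = 0) (h21 : W2 1 = 0)
    (hd1 : ∀ u ∈ Set.Ioo (0:ℝ) 1, HasDerivAt W1 (D1 u) u)
    (hd2 : ∀ u ∈ Set.Ioo (0:ℝ) 1, HasDerivAt W2 (D2 u) u)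
    (key : ∀ u ∈ Set.Ioo (0:ℝ) 1, W2 u ≤ W1 u → D2 u < D1 u) :
    ∀ u ∈ Set.Icc (0:ℝ) 1, W1 u ≤ W2 u := by
  set w : ℝ → ℝ := fun u => W1 u - W2 u with hwdef
  have hwc : ContinuousOn w (Set.Icc (0:ℝ) 1) := hc1.sub hc2
  have hder : ∀ t ∈ Set.Ioo (0:ℝ) 1, 0 ≤ w t →
      HasDerivAt w (D1 t - D2 t) t ∧ 0 < D1 t - D2 t := by
    intro t ht hwt
    refine ⟨(hd1 t ht).sub (hd2 t ht), ?_⟩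
    have hle : W2 t ≤ W1 t := by
      have : 0 ≤ W1 t - W2 t := hwt
      linarith
    linarith [key t ht hle]
  have main : ∀ u ∈ Set.Ioo (0:ℝ) 1, w u ≤ 0 := by
    intro u0 hu0
    by_contra hpos
    push_neg at hpos
    obtain ⟨hderiv, hdpos⟩ := hder u0 hu0 hpos.le
    -- local increase to the right of u0
    have hslope := hasDerivAt_iff_tendsto_slope.mp hderiv
    have hev : ∀ᶠ t in nhdsWithin u0 {u0}ᶜ, 0 < slope w u0 t :=
      hslope.eventually (eventually_gt_nhds hdpos)
    have hev' : ∀ᶠ t in nhdsWithin u0 (Set.Ioi u0), w u0 < w t := by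
      have h1 : ∀ᶠ t in nhdsWithin u0 (Set.Ioi u0), 0 < slope w u0 t :=
        hev.filter_mono (nhdsWithin_mono u0 (fun x hx => ne_of_gt hx))
      have h2 : ∀ᶠ t in nhdsWithin u0 (Set.Ioi u0), u0 < t :=
        eventually_mem_nhdsWithin
      filter_upwards [h1, h2] with t ht1 ht2
      have hs : slope w u0 t = (w t - w u0) / (t - u0) := by
        simp [slope_def_field]
      rw [hs] at ht1
      have := (div_pos_iff.mp ht1)
      rcases this with ⟨h, _⟩ | ⟨_, h⟩
      · linarith
      · linarith
    obtain ⟨δ', hδ'mem, hδ'⟩ := mem_nhdsGT_iff_exists_Ioo_subset.mp hev'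
    -- the set where w drops below w u0
    set A := {t : ℝ | t ∈ Set.Icc u0 1 ∧ w t < w u0} with hA
    have h1A : (1:ℝ) ∈ A := by
      refine ⟨⟨hu0.2.le, le_rfl⟩, ?_⟩
      have : w 1 = 0 := by simp [hwdef, h11, h21]
      rw [this]; exact hpos
    have hane : A.Nonempty := ⟨1, h1A⟩
    have hbdd : BddBelow A := ⟨u0, fun t ht => ht.1.1⟩
    set m := sInf A with hm
    have hmlb : u0 ≤ m := le_csInf hane fun t ht => ht.1.1
    have hmub : m ≤ 1 := csInf_le hbdd h1A
    have hmcl : m ∈ closure A := csInf_mem_closure hane hbdd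
    have hAsub : A ⊆ Set.Icc (0:ℝ) 1 := fun t ht => ⟨le_trans hu0.1.le ht.1.1, ht.1.2⟩
    have hmIcc : m ∈ Set.Icc (0:ℝ) 1 := ⟨le_trans hu0.1.le hmlb, hmub⟩
    have hwm_le : w m ≤ w u0 := by
      have hcm : ContinuousWithinAt w A m := ((hwc m hmIcc).mono hAsub)
      haveI : Filter.NeBot (nhdsWithin m A) := mem_closure_iff_nhdsWithin_neBot.mp hmcl
      exact le_of_tendsto hcm
        (Filter.eventually_of_mem self_mem_nhdsWithin fun t ht => ht.2.le)
    -- u0 < m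
    have hu0m : u0 < m := by
      have hb : min δ' 1 > u0 := lt_min hδ'mem hu0.2
      refine lt_of_lt_of_le hb (le_csInf hane ?_)
      intro t ht
      by_contra hc
      push_neg at hc
      have htne : t ≠ u0 := by
        intro h
        rw [h] at ht
        exact lt_irrefl _ ht.2
      have ht1 : u0 < t := lt_of_le_of_ne ht.1.1 (Ne.symm htne)
      have ht2 : t < δ' := lt_of_lt_of_le hc (min_le_left _ _)
      exact absurd (hδ' ⟨ht1, ht2⟩) (not_lt.2 ht.2.le)
    -- on [u0, m) we have w ≥ w u0
    have hIco : ∀ t ∈ Set.Ico u0 m, w u0 ≤ w t := by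
      intro t ht
      by_contra hlt'
      push_neg at hlt'
      have htA : t ∈ A := ⟨⟨ht.1, le_trans ht.2.le hmub⟩, hlt'⟩
      exact absurd (csInf_le hbdd htA) (not_le.2 ht.2)
    -- strict monotonicity on [u0, m]
    have hIccsub : Set.Icc u0 m ⊆ Set.Icc (0:ℝ) 1 := Set.Icc_subset_Icc hu0.1.le hmub
    have hsm : StrictMonoOn w (Set.Icc u0 m) := by
      apply strictMonoOn_of_deriv_pos (convex_Icc _ _) (hwc.mono hIccsub)
      intro x hx
      rw [interior_Icc] at hx
      have hxI : x ∈ Set.Ioo (0:ℝ) 1 := ⟨lt_trans hu0.1 hx.1, lt_of_lt_of_le hx.2 hmub⟩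
      have hwx : 0 ≤ w x := le_trans hpos.le (hIco x ⟨hx.1.le, hx.2⟩)
      obtain ⟨hdx, hpx⟩ := hder x hxI hwx
      rw [hdx.deriv]
      exact hpx
    have := hsm ⟨le_rfl, hmlb⟩ ⟨hmlb, le_rfl⟩ hu0m
    linarith
  intro u hu
  rcases eq_or_lt_of_le hu.1 with h0 | h0
  · -- u = 0 : pass to the limit
    have hne : (nhdsWithin (0:ℝ) (Set.Ioo (0:ℝ) 1)).NeBot := by
      apply mem_closure_iff_nhdsWithin_neBot.mp
      rw [closure_Ioo (one_ne_zero).symm]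
      exact ⟨le_rfl, zero_le_one⟩
    have hcw : ContinuousWithinAt w (Set.Ioo (0:ℝ) 1) 0 :=
      (hwc 0 (Set.left_mem_Icc.2 zero_le_one)).mono Set.Ioo_subset_Icc_self
    have hle0 : w 0 ≤ 0 :=
      le_of_tendsto hcw (Filter.eventually_of_mem self_mem_nhdsWithin fun t ht => main t ht)
    rw [← h0]
    have : W1 0 - W2 0 ≤ 0 := hle0
    linarith
  rcases eq_or_lt_of_le hu.2 with h1 | h1
  · rw [h1, h11, h21]
  · have : w u ≤ 0 := main u ⟨h0, h1⟩
    have h2 : W1 u - W2 u ≤ 0 := this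
    linarith

end Stmt9Aux
theorem stmt9 (F : FluxData) (hc : ContinuousOn F.aplus (Set.Icc (0:ℝ) 1))
    (σ : ℝ) (hσ : 0 ≤ σ) (𝒱σ : ℝ → ℝ) (h𝒱σ : IsVsol F σ 𝒱σ)
    (ε₁ ε₂ : ℝ) (hε₁ : 0 < ε₁) (hε₁₂ : ε₁ < ε₂)
    (g1 g2 : ℝ → ℝ → ℝ)
    (hg1 : ∀ u ∈ Set.Icc (0:ℝ) 1, ∀ v : ℝ,
      (u, g1 u v) ∈ OmegaSet F.ω ∧ F.a u (g1 u v) + ε₁ * g1 u v = v)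
    (hg2 : ∀ u ∈ Set.Icc (0:ℝ) 1, ∀ v : ℝ,
      (u, g2 u v) ∈ OmegaSet F.ω ∧ F.a u (g2 u v) + ε₂ * g2 u v = v)
    (V1 V2 : ℝ → ℝ)
    (hV1 : ContinuousOn V1 (Set.Icc (0:ℝ) 1) ∧ V1 1 = 0 ∧
      (∀ u ∈ Set.Ioo (0:ℝ) 1, 0 < V1 u) ∧
      (∀ u ∈ Set.Ioo (0:ℝ) 1, HasDerivAt V1 (σ - F.f u / g1 u (V1 u)) u))
    (hV2 : ContinuousOn V2 (Set.Icc (0:ℝ) 1) ∧ V2 1 = 0 ∧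
      (∀ u ∈ Set.Ioo (0:ℝ) 1, 0 < V2 u) ∧
      (∀ u ∈ Set.Ioo (0:ℝ) 1, HasDerivAt V2 (σ - F.f u / g2 u (V2 u)) u)) :
    (∀ ε : ℝ, 0 < ε → ∀ u ∈ Set.Icc (0:ℝ) 1,
      StrictMonoOn (fun s => F.a u s + ε * s) {s : ℝ | (u, s) ∈ OmegaSet F.ω} ∧
      Set.BijOn (fun s => F.a u s + ε * s) {s : ℝ | (u, s) ∈ OmegaSet F.ω} Set.univ) ∧
    (∀ u ∈ Set.Icc (0:ℝ) 1, 𝒱σ u ≤ V1 u ∧ V1 u ≤ V2 u) := by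
  obtain ⟨h𝒱c, h𝒱1, h𝒱pos, h𝒱d⟩ := h𝒱σ
  obtain ⟨hV1c, hV11, hV1pos, hV1d⟩ := hV1
  obtain ⟨hV2c, hV21, hV2pos, hV2d⟩ := hV2
  constructor
  · intro ε hε u hu
    exact ⟨Stmt9Aux.sm_phi' ε hε.le hu, Stmt9Aux.bijOn_phi ε hε hu⟩
  · -- comparisons
    have hcomp12 : ∀ u ∈ Set.Icc (0:ℝ) 1, V1 u ≤ V2 u := by
      apply Stmt9Aux.comparison V1 V2
        (fun u => σ - F.f u / g1 u (V1 u)) (fun u => σ - F.f u / g2 u (V2 u))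
        hV1c hV2c hV11 hV21 hV1d hV2d
      intro t ht hle
      have htI : t ∈ Set.Icc (0:ℝ) 1 := Set.Ioo_subset_Icc_self ht
      have hfpos : 0 < F.f t := F.f_pos t ht
      have hv2 : 0 < V2 t := hV2pos t ht
      have hg1v2 : 0 < g1 t (V2 t) := Stmt9Aux.gpos hg1 hε₁ htI hv2
      have hg2v2 : 0 < g2 t (V2 t) := Stmt9Aux.gpos hg2 (hε₁.trans hε₁₂) htI hv2
      have hmono : g1 t (V2 t) ≤ g1 t (V1 t) := Stmt9Aux.gmono hg1 hε₁ htI hle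
      have h1 : F.f t / g1 t (V1 t) ≤ F.f t / g1 t (V2 t) :=
        div_le_div_of_nonneg_left hfpos.le hg1v2 hmono
      have h2 : F.f t / g1 t (V2 t) < F.f t / g2 t (V2 t) :=
        div_lt_div_of_pos_left hfpos hg2v2 (Stmt9Aux.g_lt_g hε₁ hε₁₂ hg1 hg2 htI hv2)
      linarith
    have hcompσ1 : ∀ u ∈ Set.Icc (0:ℝ) 1, 𝒱σ u ≤ V1 u := by
      apply Stmt9Aux.comparison 𝒱σ V1
        (fun u => σ - F.f u * Hfun F u (𝒱σ u)) (fun u => σ - F.f u / g1 u (V1 u))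
        h𝒱c hV1c h𝒱1 hV11 h𝒱d hV1d
      intro t ht hle
      have htI : t ∈ Set.Icc (0:ℝ) 1 := Set.Ioo_subset_Icc_self ht
      have hfpos : 0 < F.f t := F.f_pos t ht
      have hv1 : 0 < V1 t := hV1pos t ht
      have hg1v1 : 0 < g1 t (V1 t) := Stmt9Aux.gpos hg1 hε₁ htI hv1
      have hH1 : Hfun F t (𝒱σ t) ≤ Hfun F t (V1 t) := Stmt9Aux.Hfun_anti htI hv1 hle
      have hH2 : Hfun F t (V1 t) < 1 / g1 t (V1 t) := Stmt9Aux.Hfun_lt hε₁ hg1 htI hv1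
      have h1 : F.f t * Hfun F t (𝒱σ t) ≤ F.f t * Hfun F t (V1 t) :=
        mul_le_mul_of_nonneg_left hH1 hfpos.le
      have h2 : F.f t * Hfun F t (V1 t) < F.f t * (1 / g1 t (V1 t)) :=
        mul_lt_mul_of_pos_left hH2 hfpos
      rw [mul_one_div] at h2
      linarith
    exact fun u hu => ⟨hcompσ1 u hu, hcomp12 u hu⟩
end
end

section
/- Assume (H_c). Let (u_p, s_p) be a sequence in [0,1] × (0,∞) with s_p < ω(u_p) for every p, u_p → u₀ ∈ [0,1], and s_p → +∞. Then a(u_p,s_p) → a₊(u₀) in [0,+∞] (in particular, if a₊(u₀) = +∞ then a(u_p,s_p) → +∞). -/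
open Set Filter Topology
open scoped ENNReal

noncomputable section

lemma aux_mono (F : FluxData) {u s₁ s₂ : ℝ} (h0 : 0 < s₁) (h12 : s₁ ≤ s₂)
    (hΩ : (u, s₂) ∈ OmegaSet F.ω) : F.a u s₁ ≤ F.a u s₂ := by
  have hmemI : ∀ s ∈ Set.Icc s₁ s₂, (u, s) ∈ OmegaSet F.ω := by
    intro s hs
    refine ⟨hΩ.1, ?_⟩
    have habs : |s| ≤ |s₂| := by
      rw [abs_of_pos (lt_of_lt_of_le h0 hs.1), abs_of_pos (lt_of_lt_of_le h0 h12)]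
      exact hs.2
    exact lt_of_le_of_lt (ENNReal.ofReal_le_ofReal habs) hΩ.2
  have hdiff : ∀ s ∈ Set.Icc s₁ s₂, ∃ d, 0 < d ∧ HasDerivAt (F.a u) d s :=
    fun s hs => F.a_deriv_pos u s (hmemI s hs)
  have hmono : StrictMonoOn (F.a u) (Set.Icc s₁ s₂) := by
    apply strictMonoOn_of_deriv_pos (convex_Icc _ _)
    · intro s hs
      obtain ⟨d, _, hd⟩ := hdiff s hs
      exact hd.continuousAt.continuousWithinAt
    · intro s hs
      rw [interior_Icc] at hs
      obtain ⟨d, hdpos, hd⟩ := hdiff s (Set.Ioo_subset_Icc_self hs)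
      rw [hd.deriv]; exact hdpos
  exact hmono.monotoneOn (Set.left_mem_Icc.mpr h12) (Set.right_mem_Icc.mpr h12) h12

theorem stmt10 (F : FluxData) (hc : ContinuousOn F.aplus (Set.Icc (0:ℝ) 1))
    (up sp : ℕ → ℝ) (u₀ : ℝ) (hu₀ : u₀ ∈ Set.Icc (0:ℝ) 1)
    (hmem : ∀ p : ℕ, 0 < sp p ∧ (up p, sp p) ∈ OmegaSet F.ω)
    (hup : Filter.Tendsto up Filter.atTop (nhds u₀))
    (hsp : Filter.Tendsto sp Filter.atTop Filter.atTop) :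
    Filter.Tendsto (fun p => ENNReal.ofReal (F.a (up p) (sp p))) Filter.atTop
      (nhds (F.aplus u₀)) := by
  have hub : ∀ p, ENNReal.ofReal (F.a (up p) (sp p)) ≤ F.aplus (up p) := by
    intro p
    obtain ⟨hsp0, hΩ⟩ := hmem p
    rw [F.aplus_def (up p) hΩ.1]
    exact le_iSup₂ (f := fun s _ => ENNReal.ofReal (F.a (up p) s)) (sp p) ⟨hsp0, hΩ⟩
  have haplus_tendsto : Tendsto (fun p => F.aplus (up p)) atTop (nhds (F.aplus u₀)) := by
    refine (hc u₀ hu₀).tendsto.comp ?_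
    rw [tendsto_nhdsWithin_iff]
    exact ⟨hup, Filter.Eventually.of_forall fun p => (hmem p).2.1⟩
  refine tendsto_of_le_liminf_of_limsup_le ?_ ?_
  · rw [le_liminf_iff]
    intro c hc'
    rw [F.aplus_def u₀ hu₀] at hc'
    simp only [lt_iSup_iff] at hc'
    obtain ⟨s, ⟨hs0, hsΩ⟩, hcs⟩ := hc'
    -- continuity of a at (u₀, s) within Ω
    have hev : ∀ᶠ p in atTop, s ≤ sp p := hsp.eventually_ge_atTop s
    have hmemΩ : ∀ᶠ p in atTop, ((up p, s) : ℝ × ℝ) ∈ OmegaSet F.ω := by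
      filter_upwards [hev] with p hp
      refine ⟨(hmem p).2.1, ?_⟩
      have : |s| ≤ |sp p| := by
        rw [abs_of_pos hs0, abs_of_pos (lt_of_lt_of_le hs0 hp)]; exact hp
      exact lt_of_le_of_lt (ENNReal.ofReal_le_ofReal this) (hmem p).2.2
    have htend : Tendsto (fun p => F.a (up p) s) atTop (nhds (F.a u₀ s)) := by
      have hca : ContinuousWithinAt (fun p : ℝ × ℝ => F.a p.1 p.2) (OmegaSet F.ω) (u₀, s) :=
        (F.a_C1.continuousOn) (u₀, s) hsΩ
      have h2 : Tendsto (fun p => ((up p, s) : ℝ × ℝ)) atTop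
          (nhdsWithin (u₀, s) (OmegaSet F.ω)) := by
        rw [tendsto_nhdsWithin_iff]
        exact ⟨hup.prodMk_nhds tendsto_const_nhds, hmemΩ⟩
      exact hca.tendsto.comp h2
    have htend' : Tendsto (fun p => ENNReal.ofReal (F.a (up p) s)) atTop
        (nhds (ENNReal.ofReal (F.a u₀ s))) :=
      (ENNReal.continuous_ofReal.tendsto _).comp htend
    have hgt : ∀ᶠ p in atTop, c < ENNReal.ofReal (F.a (up p) s) :=
      htend'.eventually_const_lt hcs
    filter_upwards [hgt, hev] with p hp1 hp2
    exact lt_of_lt_of_le hp1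
      (ENNReal.ofReal_le_ofReal (aux_mono F hs0 hp2 (hmem p).2))
  · calc limsup (fun p => ENNReal.ofReal (F.a (up p) (sp p))) atTop
        ≤ limsup (fun p => F.aplus (up p)) atTop :=
          limsup_le_limsup (Filter.Eventually.of_forall hub)
      _ = F.aplus u₀ := haplus_tendsto.limsup_eq
end
end

section
/- Assume (H_c). Fix σ ≥ σ_s and u₀ ∈ (0,1), and define 𝒢_σ(u) := ∫_{u₀}^u ℋ(δ,𝒱_σ(δ)) dδ for u ∈ (0,1). Then 𝒢_σ is a nondecreasing C¹ function on (0,1) with 𝒢_σ(u) → −∞ as u → 0⁺ and 𝒢_σ(u) → +∞ as u → 1⁻; moreover the set of critical levels S_σ := {ξ ∈ ℝ : there exists u ∈ (0,1) with 𝒢_σ(u) = ξ and 𝒢_σ'(u) = 0} is compact. -/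
open Set Filter Topology
open scoped ENNReal

noncomputable section

namespace FluxData
variable (F : FluxData)

lemma mem_omega_zero {u : ℝ} (hu : u ∈ Set.Icc (0:ℝ) 1) : (u, (0:ℝ)) ∈ OmegaSet F.ω :=
  ⟨hu, by simpa using F.ω_pos u hu⟩

lemma a_zero {u : ℝ} (hu : u ∈ Set.Icc (0:ℝ) 1) : F.a u 0 = 0 := by
  have h := F.a_odd u 0 (F.mem_omega_zero hu)
  simp only [neg_zero] at h
  linarith

/-- the `s`-slice of `Ω` at `u`. -/
def slice (u : ℝ) : Set ℝ := {s | ENNReal.ofReal |s| < F.ω u}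

lemma mem_omega_iff {u s : ℝ} (hu : u ∈ Set.Icc (0:ℝ) 1) :
    (u, s) ∈ OmegaSet F.ω ↔ s ∈ F.slice u :=
  ⟨fun h => h.2, fun h => ⟨hu, h⟩⟩

lemma zero_mem_slice {u : ℝ} (hu : u ∈ Set.Icc (0:ℝ) 1) : (0:ℝ) ∈ F.slice u := by
  simpa [slice] using F.ω_pos u hu

lemma convex_slice (u : ℝ) : Convex ℝ (F.slice u) := by
  rw [convex_iff_ordConnected]
  constructor
  intro x hx y hy z hz
  have : |z| ≤ max |x| |y| := abs_le_max_abs_abs hz.1 hz.2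
  rcases le_max_iff.1 this with h | h
  · exact lt_of_le_of_lt (ENNReal.ofReal_le_ofReal h) hx
  · exact lt_of_le_of_lt (ENNReal.ofReal_le_ofReal h) hy

lemma isOpen_slice (u : ℝ) : IsOpen (F.slice u) :=
  (ENNReal.continuous_ofReal.comp continuous_abs).isOpen_preimage (Set.Iio (F.ω u)) isOpen_Iio

lemma a_hasDerivAt {u s : ℝ} (h : (u, s) ∈ OmegaSet F.ω) :
    ∃ d : ℝ, 0 < d ∧ HasDerivAt (F.a u) d s := F.a_deriv_pos u s h

lemma a_strictMonoOn {u : ℝ} (hu : u ∈ Set.Icc (0:ℝ) 1) :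
    StrictMonoOn (F.a u) (F.slice u) := by
  apply strictMonoOn_of_deriv_pos (F.convex_slice u)
  · intro s hs
    obtain ⟨d, _, hd⟩ := F.a_hasDerivAt ((F.mem_omega_iff hu).2 hs)
    exact (hd.continuousAt).continuousWithinAt
  · intro s hs
    rw [(F.isOpen_slice u).interior_eq] at hs
    obtain ⟨d, hdpos, hd⟩ := F.a_hasDerivAt ((F.mem_omega_iff hu).2 hs)
    rwa [hd.deriv]

lemma g_mem {u V : ℝ} (hu : u ∈ Set.Icc (0:ℝ) 1) (hV : 0 ≤ V)
    (h : ENNReal.ofReal V < F.aplus u) :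
    F.g u V ∈ F.slice u ∧ F.a u (F.g u V) = V := by
  have hD : (u, V) ∈ DSet F.aplus := ⟨hu, by rwa [abs_of_nonneg hV]⟩
  obtain ⟨h1, h2⟩ := F.g_spec (u, V) hD
  exact ⟨(F.mem_omega_iff hu).1 h1, h2⟩

lemma g_pos {u V : ℝ} (hu : u ∈ Set.Icc (0:ℝ) 1) (hV : 0 < V)
    (h : ENNReal.ofReal V < F.aplus u) : 0 < F.g u V := by
  obtain ⟨hm, ha⟩ := F.g_mem hu hV.le h
  have : F.a u 0 < F.a u (F.g u V) := by rw [F.a_zero hu, ha]; exact hV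
  exact ((F.a_strictMonoOn hu).lt_iff_lt (F.zero_mem_slice hu) hm).1 this

lemma g_mono {u V V' : ℝ} (hu : u ∈ Set.Icc (0:ℝ) 1) (hV : 0 ≤ V) (hVV' : V ≤ V')
    (h' : ENNReal.ofReal V' < F.aplus u) : F.g u V ≤ F.g u V' := by
  have h : ENNReal.ofReal V < F.aplus u := lt_of_le_of_lt (ENNReal.ofReal_le_ofReal hVV') h'
  obtain ⟨hm, ha⟩ := F.g_mem hu hV h
  obtain ⟨hm', ha'⟩ := F.g_mem hu (hV.trans hVV') h'
  have : F.a u (F.g u V) ≤ F.a u (F.g u V') := by rw [ha, ha']; exact hVV'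
  exact ((F.a_strictMonoOn hu).le_iff_le hm hm').1 this

lemma Hfun_nonneg {u V : ℝ} (hu : u ∈ Set.Icc (0:ℝ) 1) (hV : 0 < V) :
    0 ≤ Hfun F u V := by
  unfold Hfun
  split_ifs with h
  · have := F.g_pos hu hV h
    positivity
  · exact le_rfl

end FluxData
namespace FluxData
variable (F : FluxData)

lemma Hfun_pos {u V : ℝ} (hu : u ∈ Set.Icc (0:ℝ) 1) (hV : 0 < V)
    (h : ENNReal.ofReal V < F.aplus u) : 0 < Hfun F u V := by
  have := F.g_pos hu hV h
  unfold Hfun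
  rw [if_pos h]
  positivity

lemma Hfun_anti {u V V' : ℝ} (hu : u ∈ Set.Icc (0:ℝ) 1) (hV : 0 < V) (hVV' : V ≤ V') :
    Hfun F u V' ≤ Hfun F u V := by
  by_cases h' : ENNReal.ofReal V' < F.aplus u
  · have h : ENNReal.ofReal V < F.aplus u :=
      lt_of_le_of_lt (ENNReal.ofReal_le_ofReal hVV') h'
    unfold Hfun
    rw [if_pos h, if_pos h']
    exact one_div_le_one_div_of_le (F.g_pos hu hV h) (F.g_mono hu hV.le hVV' h')
  · unfold Hfun
    rw [if_neg h']
    exact F.Hfun_nonneg hu hV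

/-- endpoint comparison from the open interval, at `0`. -/
lemma le_at_zero {h h' : ℝ → ℝ} (hc : ContinuousOn h (Set.Icc (0:ℝ) 1))
    (hc' : ContinuousOn h' (Set.Icc (0:ℝ) 1))
    (hle : ∀ u ∈ Set.Ioo (0:ℝ) 1, h u ≤ h' u) : h 0 ≤ h' 0 := by
  have h0 : (0:ℝ) ∈ Set.Icc (0:ℝ) 1 := ⟨le_refl _, zero_le_one⟩
  have hcl : (0:ℝ) ∈ closure (Set.Ioo (0:ℝ) 1) := by
    rw [closure_Ioo (by norm_num : (0:ℝ) ≠ 1)]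
    exact h0
  haveI : (nhdsWithin (0:ℝ) (Set.Ioo (0:ℝ) 1)).NeBot :=
    mem_closure_iff_nhdsWithin_neBot.mp hcl
  have t1 : Filter.Tendsto h (nhdsWithin 0 (Set.Ioo (0:ℝ) 1)) (nhds (h 0)) :=
    (hc 0 h0).mono Set.Ioo_subset_Icc_self
  have t2 : Filter.Tendsto h' (nhdsWithin 0 (Set.Ioo (0:ℝ) 1)) (nhds (h' 0)) :=
    (hc' 0 h0).mono Set.Ioo_subset_Icc_self
  exact le_of_tendsto_of_tendsto t1 t2 (by filter_upwards [self_mem_nhdsWithin] with u hu using hle u hu)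

variable {𝒱 : ℝ → ℝ → ℝ}

/-- The comparison principle: larger speed gives smaller solution. -/
lemma comp_le (h𝒱 : ∀ σ : ℝ, 0 ≤ σ → IsVsol F σ (𝒱 σ)) {τ σ : ℝ} (hτ : 0 ≤ τ)
    (hτσ : τ ≤ σ) : ∀ u ∈ Set.Ioo (0:ℝ) 1, 𝒱 σ u ≤ 𝒱 τ u := by
  obtain ⟨cτ, zτ, pτ, dτ⟩ := h𝒱 τ hτ
  obtain ⟨cσ, zσ, pσ, dσ⟩ := h𝒱 σ (hτ.trans hτσ)
  set d : ℝ → ℝ := fun u => 𝒱 σ u - 𝒱 τ u with hd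
  have cd : ContinuousOn d (Set.Icc (0:ℝ) 1) := cσ.sub cτ
  by_contra hcon
  push_neg at hcon
  obtain ⟨u₁, hu₁, hdu₁⟩ := hcon
  rw [← sub_pos] at hdu₁
  -- the "bad" set
  set B : Set ℝ := {u | u ∈ Set.Icc u₁ 1 ∧ d u ≤ d u₁ / 2} with hB
  have hIccsub : Set.Icc u₁ 1 ⊆ Set.Icc (0:ℝ) 1 := Set.Icc_subset_Icc hu₁.1.le le_rfl
  have hBclosed : IsClosed B := by
    have : B = Set.Icc u₁ 1 ∩ d ⁻¹' Set.Iic (d u₁ / 2) := rfl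
    rw [this]
    exact ContinuousOn.preimage_isClosed_of_isClosed (cd.mono hIccsub)
      isClosed_Icc isClosed_Iic
  have h1B : (1:ℝ) ∈ B := by
    refine ⟨⟨hu₁.2.le, le_refl _⟩, ?_⟩
    have : d 1 = 0 := by simp [hd, zσ, zτ]
    rw [this]; positivity
  have hBne : B.Nonempty := ⟨1, h1B⟩
  have hBbdd : BddBelow B := ⟨u₁, fun x hx => hx.1.1⟩
  set c : ℝ := sInf B with hc
  have hcB : c ∈ B := hBclosed.csInf_mem hBne hBbdd
  have hu₁c : u₁ < c := by
    rcases lt_or_eq_of_le (hcB.1.1) with h | h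
    · exact h
    · exfalso
      have := hcB.2
      rw [← h] at this
      linarith
  have hdpos : ∀ u ∈ Set.Ico u₁ c, d u₁ / 2 < d u := by
    intro u hu
    by_contra hle
    push_neg at hle
    have huB : u ∈ B := ⟨⟨hu.1, hu.2.le.trans hcB.1.2⟩, hle⟩
    have := csInf_le hBbdd huB
    exact absurd this (not_le.2 hu.2)
  have hmono : MonotoneOn d (Set.Icc u₁ c) := by
    apply monotoneOn_of_deriv_nonneg (convex_Icc u₁ c)
      (cd.mono (Set.Icc_subset_Icc hu₁.1.le hcB.1.2))
    · intro u hu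
      rw [interior_Icc] at hu
      have huI : u ∈ Set.Ioo (0:ℝ) 1 :=
        ⟨hu₁.1.trans hu.1, lt_of_lt_of_le hu.2 hcB.1.2⟩
      exact (((dσ u huI).sub (dτ u huI)).differentiableAt).differentiableWithinAt
    · intro u hu
      rw [interior_Icc] at hu
      have huI : u ∈ Set.Ioo (0:ℝ) 1 :=
        ⟨hu₁.1.trans hu.1, lt_of_lt_of_le hu.2 hcB.1.2⟩
      have hder : HasDerivAt d ((σ - F.f u * Hfun F u (𝒱 σ u)) -
          (τ - F.f u * Hfun F u (𝒱 τ u))) u := (dσ u huI).sub (dτ u huI)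
      rw [hder.deriv]
      have hVlt : 𝒱 τ u ≤ 𝒱 σ u := by
        have := hdpos u ⟨hu.1.le, hu.2⟩
        have : 0 < d u := lt_of_le_of_lt (by positivity) this
        simpa [hd, sub_pos] using this.le
      have hHle : Hfun F u (𝒱 σ u) ≤ Hfun F u (𝒱 τ u) :=
        F.Hfun_anti (Set.mem_Icc_of_Ioo huI) (pτ u huI) hVlt
      have hf : 0 < F.f u := F.f_pos u huI
      nlinarith
  have : d u₁ ≤ d c := hmono ⟨le_refl _, hu₁c.le⟩ ⟨hu₁c.le, le_refl _⟩ hu₁c.le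
  have h2 := hcB.2
  have hdu₁' : 0 < d u₁ := hdu₁
  simp only [hd] at this h2 hdu₁'
  linarith

end FluxData
namespace FluxData
variable (F : FluxData) {𝒱 : ℝ → ℝ → ℝ}

lemma Vsol_zero_nonneg {σ : ℝ} {V : ℝ → ℝ} (h : IsVsol F σ V) : 0 ≤ V 0 := by
  have := le_at_zero (continuousOn_const (c := (0:ℝ))) h.1
    (fun u hu => (h.2.2.1 u hu).le)
  simpa using this

lemma Vzero (h𝒱 : ∀ σ : ℝ, 0 ≤ σ → IsVsol F σ (𝒱 σ)) {σs σ : ℝ}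
    (hσs : σs = sInf {σ : ℝ | 0 ≤ σ ∧ 𝒱 σ 0 = 0})
    (hne : {σ : ℝ | 0 ≤ σ ∧ 𝒱 σ 0 = 0}.Nonempty)
    (hσ : σs ≤ σ) : 𝒱 σ 0 = 0 := by
  set S := {σ : ℝ | 0 ≤ σ ∧ 𝒱 σ 0 = 0} with hS
  have h0σs : 0 ≤ σs := by
    rw [hσs]
    exact le_csInf hne fun x hx => hx.1
  have hσ0 : 0 ≤ σ := h0σs.trans hσ
  have hnn : 0 ≤ 𝒱 σ 0 := F.Vsol_zero_nonneg (h𝒱 σ hσ0)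
  by_contra hcon
  have hpos : 0 < 𝒱 σ 0 := lt_of_le_of_ne hnn (Ne.symm hcon)
  set ε := 𝒱 σ 0 with hε
  obtain ⟨σ', hσ'S, hσ'lt⟩ : ∃ σ' ∈ S, σ' < σs + ε := by
    apply exists_lt_of_csInf_lt hne
    rw [← hσs]
    linarith
  have hσ'0 : 0 ≤ σ' := hσ'S.1
  rcases le_or_gt σ' σ with hle | hlt
  · have := le_at_zero (h𝒱 σ hσ0).1 (h𝒱 σ' hσ'0).1
      (F.comp_le h𝒱 hσ'0 hle)
    rw [hσ'S.2] at this
    linarith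
  · -- σ < σ'
    set d : ℝ → ℝ := fun u => 𝒱 σ u - 𝒱 σ' u with hd
    obtain ⟨cσ, zσ, pσ, dσ⟩ := h𝒱 σ hσ0
    obtain ⟨cσ', zσ', pσ', dσ'⟩ := h𝒱 σ' hσ'0
    have cd : ContinuousOn d (Set.Icc (0:ℝ) 1) := cσ.sub cσ'
    have hderiv : ∀ u ∈ Set.Ioo (0:ℝ) 1,
        HasDerivAt d ((σ - F.f u * Hfun F u (𝒱 σ u)) -
          (σ' - F.f u * Hfun F u (𝒱 σ' u))) u :=
      fun u hu => (dσ u hu).sub (dσ' u hu)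
    have key : (σ - σ') * (1 - 0) ≤ d 1 - d 0 := by
      apply Convex.mul_sub_le_image_sub_of_le_deriv (convex_Icc (0:ℝ) 1) cd
      · intro u hu
        rw [interior_Icc] at hu
        exact ((hderiv u hu).differentiableAt).differentiableWithinAt
      · intro u hu
        rw [interior_Icc] at hu
        rw [(hderiv u hu).deriv]
        have hVle : 𝒱 σ' u ≤ 𝒱 σ u := F.comp_le h𝒱 hσ0 hlt.le u hu
        have hH : Hfun F u (𝒱 σ u) ≤ Hfun F u (𝒱 σ' u) :=
          F.Hfun_anti (Set.mem_Icc_of_Ioo hu) (pσ' u hu) hVle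
        have hf : 0 < F.f u := F.f_pos u hu
        nlinarith
      · exact ⟨le_refl _, zero_le_one⟩
      · exact ⟨zero_le_one, le_refl _⟩
      · exact zero_le_one
    have hd1 : d 1 = 0 := by simp [hd, zσ, zσ']
    have hd0 : d 0 = ε := by simp [hd, hε, hσ'S.2]
    rw [hd1, hd0] at key
    linarith

end FluxData
namespace FluxData
variable (F : FluxData)

lemma mem_ball_prod {p q : ℝ × ℝ} {ρ : ℝ} (h : q ∈ Metric.ball p ρ) :
    |q.1 - p.1| < ρ ∧ |q.2 - p.2| < ρ := by
  rw [Metric.mem_ball, Prod.dist_eq, sup_lt_iff, Real.dist_eq, Real.dist_eq] at h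
  exact h

lemma local_box {p : ℝ × ℝ} (hp : p ∈ OmegaSet F.ω) :
    ∃ ρ > 0, ∀ q : ℝ × ℝ, q.1 ∈ Set.Icc (0:ℝ) 1 → |q.1 - p.1| < ρ → |q.2 - p.2| < ρ →
      q ∈ OmegaSet F.ω := by
  obtain ⟨hu, hs⟩ := hp
  obtain ⟨r, hr0, hr1, hr2⟩ := ENNReal.lt_iff_exists_real_btwn.1 hs
  have hpr : |p.2| < r := (ENNReal.ofReal_lt_ofReal_iff_of_nonneg (abs_nonneg _)).1 hr1
  have hrpos : 0 < r := lt_of_le_of_lt (abs_nonneg _) hpr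
  have hev : ∀ᶠ u' in nhds p.1, u' ∈ Set.Icc (0:ℝ) 1 → ENNReal.ofReal r < F.ω u' := by
    have := F.ω_lsc p.1 hu _ hr2
    rwa [eventually_nhdsWithin_iff] at this
  rw [Metric.eventually_nhds_iff] at hev
  obtain ⟨δ, hδ0, hδ⟩ := hev
  refine ⟨min δ (r - |p.2|), by simp [hδ0]; linarith, ?_⟩
  intro q hq1 hq2 hq3
  refine ⟨hq1, ?_⟩
  have h1 : ENNReal.ofReal r < F.ω q.1 := by
    refine hδ ?_ hq1
    rw [Real.dist_eq]
    exact lt_of_lt_of_le hq2 (min_le_left _ _)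
  have h2 : |q.2| < r := by
    have := abs_sub_abs_le_abs_sub q.2 p.2
    have := lt_of_lt_of_le hq3 (min_le_right _ _)
    linarith
  exact lt_trans ((ENNReal.ofReal_lt_ofReal_iff hrpos).2 h2) h1

lemma isOpen_omega_inter :
    IsOpen {p : ℝ × ℝ | p.1 ∈ Set.Ioo (0:ℝ) 1 ∧ p ∈ OmegaSet F.ω} := by
  rw [isOpen_iff_mem_nhds]
  rintro p ⟨hpo, hpΩ⟩
  obtain ⟨ρ, hρ0, hρ⟩ := F.local_box hpΩ
  have h1 : {q : ℝ × ℝ | q.1 ∈ Set.Ioo (0:ℝ) 1} ∈ nhds p :=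
    (isOpen_Ioo.preimage continuous_fst).mem_nhds hpo
  have h2 : Metric.ball p ρ ∈ nhds p := Metric.ball_mem_nhds p hρ0
  filter_upwards [h1, h2] with q hq1 hq2
  exact ⟨hq1, hρ q (Set.mem_Icc_of_Ioo hq1) (mem_ball_prod hq2).1 (mem_ball_prod hq2).2⟩

lemma omega_mem_nhds {p : ℝ × ℝ} (hp1 : p.1 ∈ Set.Ioo (0:ℝ) 1) (hp : p ∈ OmegaSet F.ω) :
    OmegaSet F.ω ∈ nhds p :=
  Filter.mem_of_superset (F.isOpen_omega_inter.mem_nhds ⟨hp1, hp⟩) fun _ h => h.2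

lemma a_continuousAt {p : ℝ × ℝ} (hp1 : p.1 ∈ Set.Ioo (0:ℝ) 1) (hp : p ∈ OmegaSet F.ω) :
    ContinuousAt (fun q : ℝ × ℝ => F.a q.1 q.2) p :=
  F.a_C1.continuousOn.continuousAt (F.omega_mem_nhds hp1 hp)

lemma uniqueDiffOn_omega : UniqueDiffOn ℝ (OmegaSet F.ω) := by
  intro p hp
  obtain ⟨ρ, hρ0, hρ⟩ := F.local_box hp
  have h1 : UniqueDiffWithinAt ℝ (Set.Icc (0:ℝ) 1 ×ˢ (Set.univ : Set ℝ)) p := by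
    apply (uniqueDiffOn_Icc_zero_one.prod uniqueDiffOn_univ) p
    exact ⟨hp.1, Set.mem_univ _⟩
  have h2 := h1.inter (Metric.ball_mem_nhds p hρ0)
  apply h2.mono
  rintro q ⟨⟨hq1, _⟩, hq2⟩
  exact hρ q hq1 (mem_ball_prod hq2).1 (mem_ball_prod hq2).2

/-- The partial derivative of `a` in the `s` direction. -/
def D (p : ℝ × ℝ) : ℝ :=
  fderivWithin ℝ (fun q : ℝ × ℝ => F.a q.1 q.2) (OmegaSet F.ω) p ((0:ℝ), (1:ℝ))

lemma continuousOn_D : ContinuousOn F.D (OmegaSet F.ω) :=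
  ContinuousOn.clm_apply (F.a_C1.continuousOn_fderivWithin F.uniqueDiffOn_omega le_rfl)
    continuousOn_const

lemma hasDerivAt_D {p : ℝ × ℝ} (hp : p ∈ OmegaSet F.ω) :
    HasDerivAt (F.a p.1) (F.D p) p.2 := by
  obtain ⟨ρ, hρ0, hρ⟩ := F.local_box hp
  have hF : HasFDerivWithinAt (fun q : ℝ × ℝ => F.a q.1 q.2)
      (fderivWithin ℝ (fun q : ℝ × ℝ => F.a q.1 q.2) (OmegaSet F.ω) p) (OmegaSet F.ω) p :=
    ((F.a_C1.differentiableOn one_ne_zero) p hp).hasFDerivWithinAt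
  set ι : ℝ → ℝ × ℝ := fun t => (p.1, t) with hι
  have hι' : HasDerivAt ι ((0:ℝ), (1:ℝ)) p.2 :=
    (hasDerivAt_const p.2 p.1).prodMk (hasDerivAt_id p.2)
  have hmaps : Set.MapsTo ι (ι ⁻¹' OmegaSet F.ω) (OmegaSet F.ω) := fun t ht => ht
  have hcomp : HasDerivWithinAt (fun t => F.a p.1 t) (F.D p) (ι ⁻¹' OmegaSet F.ω) p.2 :=
    (show HasFDerivWithinAt (fun q : ℝ × ℝ => F.a q.1 q.2) _ (OmegaSet F.ω) (ι p.2) from hF).comp_hasDerivWithinAt (x := p.2) (hι'.hasDerivWithinAt) hmaps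
  apply hcomp.hasDerivAt
  have : Metric.ball p.2 ρ ⊆ ι ⁻¹' OmegaSet F.ω := by
    intro t ht
    apply hρ (p.1, t) hp.1 (by simpa using hρ0)
    simpa [Real.dist_eq] using Metric.mem_ball.1 ht
  exact Filter.mem_of_superset (Metric.ball_mem_nhds p.2 hρ0) this

lemma D_pos {p : ℝ × ℝ} (hp : p ∈ OmegaSet F.ω) : 0 < F.D p := by
  obtain ⟨d, hd0, hd⟩ := F.a_deriv_pos p.1 p.2 hp
  rwa [hd.unique (F.hasDerivAt_D hp)] at hd0

end FluxData
namespace FluxData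
variable (F : FluxData)

/-- the good region where `Hfun = 1/g` and everything is continuous -/
def good (F : FluxData) : Set (ℝ × ℝ) :=
  {p : ℝ × ℝ | p.1 ∈ Set.Ioo (0:ℝ) 1 ∧ 0 < p.2 ∧ ENNReal.ofReal p.2 < F.aplus p.1}

lemma aplus_continuousAt (hc : ContinuousOn F.aplus (Set.Icc (0:ℝ) 1)) {u : ℝ}
    (hu : u ∈ Set.Ioo (0:ℝ) 1) : ContinuousAt F.aplus u :=
  hc.continuousAt (Icc_mem_nhds hu.1 hu.2)

lemma isOpen_good (hc : ContinuousOn F.aplus (Set.Icc (0:ℝ) 1)) : IsOpen F.good := by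
  rw [isOpen_iff_mem_nhds]
  rintro p ⟨h1, h2, h3⟩
  have e1 : ∀ᶠ q : ℝ × ℝ in nhds p, q.1 ∈ Set.Ioo (0:ℝ) 1 :=
    (isOpen_Ioo.preimage continuous_fst).mem_nhds h1
  have e2 : ∀ᶠ q : ℝ × ℝ in nhds p, 0 < q.2 :=
    (isOpen_lt continuous_const continuous_snd).mem_nhds h2
  have caplus : ContinuousAt (fun q : ℝ × ℝ => F.aplus q.1) p :=
    (F.aplus_continuousAt hc h1).comp continuous_fst.continuousAt
  have cof : ContinuousAt (fun q : ℝ × ℝ => ENNReal.ofReal q.2) p :=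
    (ENNReal.continuous_ofReal.comp continuous_snd).continuousAt
  have e3 : ∀ᶠ q : ℝ × ℝ in nhds p, ENNReal.ofReal q.2 < F.aplus q.1 := by
    have hop : IsOpen {x : ℝ≥0∞ × ℝ≥0∞ | x.1 < x.2} := isOpen_lt continuous_fst continuous_snd
    have := (cof.prodMk caplus).preimage_mem_nhds (hop.mem_nhds h3)
    filter_upwards [this] with q hq using hq
  filter_upwards [e1, e2, e3] with q q1 q2 q3
  exact ⟨q1, q2, q3⟩

lemma g_continuousAt (hc : ContinuousOn F.aplus (Set.Icc (0:ℝ) 1)) {p : ℝ × ℝ}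
    (hp : p ∈ F.good) : ContinuousAt (fun q : ℝ × ℝ => F.g q.1 q.2) p := by
  obtain ⟨hp1, hp2, hp3⟩ := hp
  have hp1' : p.1 ∈ Set.Icc (0:ℝ) 1 := Set.mem_Icc_of_Ioo hp1
  obtain ⟨hs0, ha0⟩ := F.g_mem hp1' hp2.le hp3
  set s0 : ℝ := F.g p.1 p.2 with hs0def
  rw [ContinuousAt, Metric.tendsto_nhds]
  intro ε hε
  -- find η with ball s0 η ⊆ slice p.1
  obtain ⟨η, hη0, hη⟩ := Metric.isOpen_iff.1 (F.isOpen_slice p.1) s0 hs0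
  set ε' : ℝ := min (ε / 2) (η / 2) with hε'def
  have hε'0 : 0 < ε' := by
    apply lt_min (by linarith) (by linarith)
  have hmem : ∀ s : ℝ, |s - s0| ≤ ε' → s ∈ F.slice p.1 := by
    intro s hs
    apply hη
    rw [Metric.mem_ball, Real.dist_eq]
    have : ε' < η := lt_of_le_of_lt (min_le_right _ _) (by linarith)
    linarith [hs]
  have hsm : s0 - ε' ∈ F.slice p.1 := hmem _ (by rw [abs_of_nonpos] <;> linarith)
  have hsp : s0 + ε' ∈ F.slice p.1 := hmem _ (by rw [abs_of_nonneg] <;> linarith)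
  have hs0mem : s0 ∈ F.slice p.1 := hs0
  have hlt1 : F.a p.1 (s0 - ε') < p.2 := by
    rw [← ha0]
    exact (F.a_strictMonoOn hp1') hsm hs0mem (by linarith)
  have hlt2 : p.2 < F.a p.1 (s0 + ε') := by
    rw [← ha0]
    exact (F.a_strictMonoOn hp1') hs0mem hsp (by linarith)
  -- eventual facts
  have E0 : ∀ᶠ q : ℝ × ℝ in nhds p, q ∈ F.good :=
    (F.isOpen_good hc).mem_nhds ⟨hp1, hp2, hp3⟩
  have hcnm : ContinuousAt (fun q : ℝ × ℝ => F.a q.1 (s0 - ε')) p := by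
    have := F.a_continuousAt (p := (p.1, s0 - ε')) hp1 ((F.mem_omega_iff hp1').2 hsm)
    exact ContinuousAt.comp (x := p) (f := fun q : ℝ × ℝ => (q.1, s0 - ε')) this
      ((continuous_fst.prodMk continuous_const).continuousAt)
  have hcnp : ContinuousAt (fun q : ℝ × ℝ => F.a q.1 (s0 + ε')) p := by
    have := F.a_continuousAt (p := (p.1, s0 + ε')) hp1 ((F.mem_omega_iff hp1').2 hsp)
    exact ContinuousAt.comp (x := p) (f := fun q : ℝ × ℝ => (q.1, s0 + ε')) this
      ((continuous_fst.prodMk continuous_const).continuousAt)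
  have E1 : ∀ᶠ q : ℝ × ℝ in nhds p, F.a q.1 (s0 - ε') < q.2 := by
    have : ContinuousAt (fun q : ℝ × ℝ => (F.a q.1 (s0 - ε'), q.2)) p :=
      hcnm.prodMk continuous_snd.continuousAt
    have hop : IsOpen {x : ℝ × ℝ | x.1 < x.2} := isOpen_lt continuous_fst continuous_snd
    filter_upwards [this.preimage_mem_nhds (hop.mem_nhds hlt1)] with q hq using hq
  have E2 : ∀ᶠ q : ℝ × ℝ in nhds p, q.2 < F.a q.1 (s0 + ε') := by
    have : ContinuousAt (fun q : ℝ × ℝ => (q.2, F.a q.1 (s0 + ε'))) p :=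
      continuous_snd.continuousAt.prodMk hcnp
    have hop : IsOpen {x : ℝ × ℝ | x.1 < x.2} := isOpen_lt continuous_fst continuous_snd
    filter_upwards [this.preimage_mem_nhds (hop.mem_nhds hlt2)] with q hq using hq
  obtain ⟨ρm, hρm0, hρm⟩ := F.local_box ((F.mem_omega_iff hp1').2 hsm)
  obtain ⟨ρp, hρp0, hρp⟩ := F.local_box ((F.mem_omega_iff hp1').2 hsp)
  have E3 : ∀ᶠ q : ℝ × ℝ in nhds p, |q.1 - p.1| < min ρm ρp := by
    have : ContinuousAt (fun q : ℝ × ℝ => |q.1 - p.1|) p :=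
      ((continuous_fst.sub continuous_const).abs).continuousAt
    have h0 : |p.1 - p.1| < min ρm ρp := by simp [lt_min hρm0 hρp0]
    have hop : IsOpen {x : ℝ | x < min ρm ρp} := isOpen_Iio
    filter_upwards [this.preimage_mem_nhds (hop.mem_nhds h0)] with q hq using hq
  filter_upwards [E0, E1, E2, E3] with q hq0 hq1 hq2 hq3
  obtain ⟨hq0a, hq0b, hq0c⟩ := hq0
  have hq1' : q.1 ∈ Set.Icc (0:ℝ) 1 := Set.mem_Icc_of_Ioo hq0a
  obtain ⟨hgq, haq⟩ := F.g_mem hq1' hq0b.le hq0c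
  have hsmq : (s0 - ε') ∈ F.slice q.1 := by
    have := hρm (q.1, s0 - ε') hq1' (lt_of_lt_of_le hq3 (min_le_left _ _)) (by simpa using hρm0)
    exact (F.mem_omega_iff hq1').1 this
  have hspq : (s0 + ε') ∈ F.slice q.1 := by
    have := hρp (q.1, s0 + ε') hq1' (lt_of_lt_of_le hq3 (min_le_right _ _)) (by simpa using hρp0)
    exact (F.mem_omega_iff hq1').1 this
  have hlo : s0 - ε' < F.g q.1 q.2 := by
    by_contra hcon
    push_neg at hcon
    have := (F.a_strictMonoOn hq1').le_iff_le hgq hsmq |>.2 hcon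
    rw [haq] at this
    linarith
  have hhi : F.g q.1 q.2 < s0 + ε' := by
    by_contra hcon
    push_neg at hcon
    have := (F.a_strictMonoOn hq1').le_iff_le hspq hgq |>.2 hcon
    rw [haq] at this
    linarith
  rw [Real.dist_eq, ← hs0def]
  have : |F.g q.1 q.2 - s0| < ε' := abs_lt.2 ⟨by linarith, by linarith⟩
  have hε'ε : ε' ≤ ε / 2 := min_le_left _ _
  linarith

end FluxData
namespace FluxData
variable (F : FluxData)

lemma aplus_le {u s : ℝ} (hu : u ∈ Set.Icc (0:ℝ) 1) (hs : 0 < s)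
    (hmem : (u, s) ∈ OmegaSet F.ω) : ENNReal.ofReal (F.a u s) ≤ F.aplus u := by
  rw [F.aplus_def u hu]
  exact le_iSup₂_of_le s ⟨hs, hmem⟩ le_rfl

lemma a_pos {u s : ℝ} (hu : u ∈ Set.Icc (0:ℝ) 1) (hs : 0 < s)
    (hmem : s ∈ F.slice u) : 0 < F.a u s := by
  have := (F.a_strictMonoOn hu) (F.zero_mem_slice hu) hmem hs
  rwa [F.a_zero hu] at this

lemma Hfun_comp_continuousAt (hc : ContinuousOn F.aplus (Set.Icc (0:ℝ) 1))
    {z : ℝ → ℝ} (hz : ContinuousOn z (Set.Icc (0:ℝ) 1))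
    (hzpos : ∀ u ∈ Set.Ioo (0:ℝ) 1, 0 < z u) {u : ℝ} (hu : u ∈ Set.Ioo (0:ℝ) 1) :
    ContinuousAt (fun t => Hfun F t (z t)) u := by
  have hu' : u ∈ Set.Icc (0:ℝ) 1 := Set.mem_Icc_of_Ioo hu
  have hzc : ContinuousAt z u := hz.continuousAt (Icc_mem_nhds hu.1 hu.2)
  have hzu : 0 < z u := hzpos u hu
  rcases lt_trichotomy (ENNReal.ofReal (z u)) (F.aplus u) with hlt | heq | hgt
  · -- branch 1 : Hfun = 1/g near u
    have hmem : (u, z u) ∈ F.good := ⟨hu, hzu, hlt⟩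
    have hφ : ContinuousAt (fun t : ℝ => ((t, z t) : ℝ × ℝ)) u :=
      continuousAt_id.prodMk hzc
    have E : ∀ᶠ t in nhds u, ((t, z t) : ℝ × ℝ) ∈ F.good :=
      hφ.preimage_mem_nhds ((F.isOpen_good hc).mem_nhds hmem)
    have hgc : ContinuousAt (fun t => F.g t (z t)) u :=
      ContinuousAt.comp (x := u) (f := fun t : ℝ => ((t, z t) : ℝ × ℝ))
        (F.g_continuousAt hc hmem) hφ
    have hgne : F.g u (z u) ≠ 0 := ne_of_gt (F.g_pos hu' hzu hlt)
    have hcont : ContinuousAt (fun t => 1 / F.g t (z t)) u :=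
      continuousAt_const.div hgc hgne
    apply hcont.congr
    filter_upwards [E] with t ht
    have : Hfun F t (z t) = 1 / F.g t (z t) := by
      unfold Hfun; rw [if_pos ht.2.2]
    rw [this]
  · -- boundary case : Hfun value is 0 and tends to 0
    have haplus_ne_top : F.aplus u ≠ ⊤ := by
      rw [← heq]; exact ENNReal.ofReal_ne_top
    have hωtop : F.ω u = ⊤ := by
      by_contra hne
      exact haplus_ne_top (F.aplus_top u hu' (lt_top_iff_ne_top.2 hne))
    have hval : Hfun F u (z u) = 0 := by
      unfold Hfun; rw [if_neg (by rw [heq]; exact lt_irrefl _)]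
    rw [ContinuousAt, hval, NormedAddCommGroup.tendsto_nhds_zero]
    intro ε hε
    set Mb : ℝ := 1 / ε + 1 with hMb
    have hMb0 : 0 < Mb := by positivity
    have hMbε : 1 / Mb < ε := by
      rw [div_lt_iff₀ hMb0]
      have hεMb : ε * Mb = 1 + ε := by
        rw [hMb]
        field_simp
      linarith
    have hMbmem : Mb ∈ F.slice u := by simp [slice, hωtop]
    have hMb1mem : Mb + 1 ∈ F.slice u := by simp [slice, hωtop]
    have hkey : F.a u Mb < z u := by
      have h1 : F.a u Mb < F.a u (Mb + 1) :=
        (F.a_strictMonoOn hu') hMbmem hMb1mem (by linarith)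
      have h2 : ENNReal.ofReal (F.a u (Mb + 1)) ≤ F.aplus u :=
        F.aplus_le hu' (by linarith) ((F.mem_omega_iff hu').2 hMb1mem)
      have h3 : ENNReal.ofReal (F.a u Mb) < ENNReal.ofReal (z u) := by
        rw [heq]
        exact lt_of_lt_of_le ((ENNReal.ofReal_lt_ofReal_iff (F.a_pos hu' (by linarith) hMb1mem)).2 h1) h2
      exact (ENNReal.ofReal_lt_ofReal_iff_of_nonneg (F.a_pos hu' hMb0 hMbmem).le).1 h3
    -- eventual facts
    have hacM : ContinuousAt (fun t : ℝ => F.a t Mb) u := by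
      have := F.a_continuousAt (p := (u, Mb)) hu ((F.mem_omega_iff hu').2 hMbmem)
      exact ContinuousAt.comp (x := u) (f := fun t : ℝ => ((t, Mb) : ℝ × ℝ)) this
        (continuousAt_id.prodMk continuousAt_const)
    have E1 : ∀ᶠ t in nhds u, F.a t Mb < z t := by
      have hp : ContinuousAt (fun t : ℝ => ((F.a t Mb, z t) : ℝ × ℝ)) u := hacM.prodMk hzc
      have hop : IsOpen {x : ℝ × ℝ | x.1 < x.2} := isOpen_lt continuous_fst continuous_snd
      filter_upwards [hp.preimage_mem_nhds (hop.mem_nhds hkey)] with t ht using ht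
    obtain ⟨ρ, hρ0, hρ⟩ := F.local_box ((F.mem_omega_iff hu').2 hMbmem)
    have E2 : ∀ᶠ t in nhds u, |t - u| < ρ := by
      have : ContinuousAt (fun t : ℝ => |t - u|) u := ((continuous_id.sub continuous_const).abs).continuousAt
      have h0 : |u - u| < ρ := by simpa using hρ0
      filter_upwards [this.preimage_mem_nhds (isOpen_Iio.mem_nhds h0)] with t ht using ht
    have E3 : ∀ᶠ t in nhds u, t ∈ Set.Ioo (0:ℝ) 1 := isOpen_Ioo.mem_nhds hu
    have E4 : ∀ᶠ t in nhds u, 0 < z t := by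
      filter_upwards [hzc.preimage_mem_nhds (isOpen_Ioi.mem_nhds hzu)] with t ht using ht
    filter_upwards [E1, E2, E3, E4] with t h1 h2 h3 h4
    have ht' : t ∈ Set.Icc (0:ℝ) 1 := Set.mem_Icc_of_Ioo h3
    have hMbt : Mb ∈ F.slice t :=
      (F.mem_omega_iff ht').1 (hρ (t, Mb) ht' h2 (by simpa using hρ0))
    unfold Hfun
    split_ifs with hb
    · obtain ⟨hgt, hat⟩ := F.g_mem ht' h4.le hb
      have hgMb : Mb < F.g t (z t) := by
        by_contra hcon
        push_neg at hcon
        have := (F.a_strictMonoOn ht').le_iff_le hgt hMbt |>.2 hcon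
        rw [hat] at this
        linarith
      have hgpos : 0 < F.g t (z t) := lt_trans hMb0 hgMb
      rw [Real.norm_eq_abs, abs_of_pos (by positivity)]
      calc 1 / F.g t (z t) < 1 / Mb := by
            apply one_div_lt_one_div_of_lt hMb0 hgMb
        _ < ε := hMbε
    · simpa using hε
  · -- Hfun = 0 near u
    have E : ∀ᶠ t in nhds u, F.aplus t < ENNReal.ofReal (z t) := by
      have hp : ContinuousAt (fun t : ℝ => ((F.aplus t, ENNReal.ofReal (z t)) : ℝ≥0∞ × ℝ≥0∞)) u :=
        (F.aplus_continuousAt hc hu).prodMk (ENNReal.continuous_ofReal.continuousAt.comp hzc)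
      have hop : IsOpen {x : ℝ≥0∞ × ℝ≥0∞ | x.1 < x.2} := isOpen_lt continuous_fst continuous_snd
      filter_upwards [hp.preimage_mem_nhds (hop.mem_nhds hgt)] with t ht using ht
    apply continuousAt_const.congr
    filter_upwards [E] with t ht
    show (0:ℝ) = Hfun F t (z t)
    unfold Hfun
    rw [if_neg (not_lt.2 ht.le)]

lemma Hfun_comp_continuousOn (hc : ContinuousOn F.aplus (Set.Icc (0:ℝ) 1))
    {z : ℝ → ℝ} (hz : ContinuousOn z (Set.Icc (0:ℝ) 1))
    (hzpos : ∀ u ∈ Set.Ioo (0:ℝ) 1, 0 < z u) :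
    ContinuousOn (fun t => Hfun F t (z t)) (Set.Ioo (0:ℝ) 1) :=
  fun u hu => (F.Hfun_comp_continuousAt hc hz hzpos hu).continuousWithinAt

end FluxData
namespace FluxData
variable (F : FluxData)

/-- Uniform two-sided linear bounds for `a` on a small box near `(u*, 0)`. -/
lemma endpoint_box {ustar : ℝ} (hu : ustar ∈ Set.Icc (0:ℝ) 1) :
    ∃ δ > 0, ∃ s₀ > 0, ∃ m M : ℝ, 0 < m ∧ m ≤ M ∧
      ∀ t ∈ Set.Icc (0:ℝ) 1, |t - ustar| ≤ δ →
        (∀ s : ℝ, |s| ≤ s₀ → (t, s) ∈ OmegaSet F.ω) ∧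
        (∀ s ∈ Set.Icc (0:ℝ) s₀, m * s ≤ F.a t s ∧ F.a t s ≤ M * s) := by
  obtain ⟨ρ, hρ0, hρ⟩ := F.local_box (F.mem_omega_zero hu)
  set δ : ℝ := ρ / 2 with hδdef
  have hδ0 : 0 < δ := by positivity
  have hbox : ∀ t ∈ Set.Icc (0:ℝ) 1, |t - ustar| ≤ δ → ∀ s : ℝ, |s| ≤ δ →
      (t, s) ∈ OmegaSet F.ω := by
    intro t ht htδ s hs
    exact hρ (t, s) ht (by simp only; linarith [abs_nonneg (t - ustar)]) (by simp only [sub_zero]; linarith [abs_nonneg s])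
  -- the compact box
  set K : Set (ℝ × ℝ) := (Set.Icc (ustar - δ) (ustar + δ) ∩ Set.Icc 0 1) ×ˢ Set.Icc (-δ) δ
    with hKdef
  have hKΩ : K ⊆ OmegaSet F.ω := by
    rintro ⟨t, s⟩ ⟨⟨ht1, ht2⟩, hs⟩
    apply hbox t ht2 (abs_le.2 ⟨by linarith [ht1.1], by linarith [ht1.2]⟩) s
      (abs_le.2 ⟨hs.1, hs.2⟩)
  have hKcomp : IsCompact K := (isCompact_Icc.inter_right isClosed_Icc).prod isCompact_Icc
  have hKne : K.Nonempty := ⟨(ustar, 0), ⟨⟨⟨by linarith, by linarith⟩, hu⟩, by constructor <;> simp [hδ0.le]⟩⟩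
  have hDcont : ContinuousOn F.D K := F.continuousOn_D.mono hKΩ
  obtain ⟨pm, hpmK, hpm⟩ := hKcomp.exists_isMinOn hKne hDcont
  obtain ⟨pM, hpMK, hpM⟩ := hKcomp.exists_isMaxOn hKne hDcont
  set m : ℝ := F.D pm with hm
  set M : ℝ := F.D pM with hM
  have hm0 : 0 < m := F.D_pos (hKΩ hpmK)
  have hmM : m ≤ M := le_trans (hpm hpMK) (le_refl _)
  refine ⟨δ, hδ0, δ, hδ0, m, M, hm0, hmM, ?_⟩
  intro t ht htδ
  refine ⟨hbox t ht htδ, ?_⟩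
  intro s hs
  have htmem : t ∈ Set.Icc (ustar - δ) (ustar + δ) ∩ Set.Icc 0 1 := by
    refine ⟨?_, ht⟩
    rw [abs_le] at htδ
    exact ⟨by linarith [htδ.1], by linarith [htδ.2]⟩
  have hKt : ∀ s' ∈ Set.Icc (0:ℝ) δ, ((t, s') : ℝ × ℝ) ∈ K := by
    intro s' hs'
    exact ⟨htmem, ⟨by linarith [hs'.1], hs'.2⟩⟩
  have hda : ∀ s' ∈ Set.Icc (0:ℝ) δ, HasDerivAt (F.a t) (F.D (t, s')) s' :=
    fun s' hs' => F.hasDerivAt_D (hKΩ (hKt s' hs'))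
  have hcont : ContinuousOn (F.a t) (Set.Icc (0:ℝ) δ) :=
    fun s' hs' => ((hda s' hs').continuousAt).continuousWithinAt
  have hdiff : DifferentiableOn ℝ (F.a t) (interior (Set.Icc (0:ℝ) δ)) := by
    intro s' hs'
    rw [interior_Icc] at hs'
    exact ((hda s' (Set.mem_Icc_of_Ioo hs')).differentiableAt).differentiableWithinAt
  have hderlow : ∀ x ∈ interior (Set.Icc (0:ℝ) δ), m ≤ deriv (F.a t) x := by
    intro x hx
    rw [interior_Icc] at hx
    rw [(hda x (Set.mem_Icc_of_Ioo hx)).deriv]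
    exact hpm (hKt x (Set.mem_Icc_of_Ioo hx))
  have hderhigh : ∀ x ∈ interior (Set.Icc (0:ℝ) δ), deriv (F.a t) x ≤ M := by
    intro x hx
    rw [interior_Icc] at hx
    rw [(hda x (Set.mem_Icc_of_Ioo hx)).deriv]
    exact hpM (hKt x (Set.mem_Icc_of_Ioo hx))
  have hlow : m * (s - 0) ≤ F.a t s - F.a t 0 :=
    Convex.mul_sub_le_image_sub_of_le_deriv (convex_Icc (0:ℝ) δ) hcont hdiff hderlow
      0 (Set.left_mem_Icc.2 hδ0.le) s hs hs.1
  have hhigh : F.a t s - F.a t 0 ≤ M * (s - 0) :=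
    Convex.image_sub_le_mul_sub_of_deriv_le (convex_Icc (0:ℝ) δ) hcont hdiff hderhigh
      0 (Set.left_mem_Icc.2 hδ0.le) s hs hs.1
  rw [sub_zero] at hlow hhigh
  rw [F.a_zero ht] at hlow hhigh
  constructor <;> linarith

/-- A linear bound on `f` vanishing at both endpoints. -/
lemma f_bound : ∃ L > 0, ∀ t ∈ Set.Icc (0:ℝ) 1,
    F.f t ≤ L * (1 - t) ∧ F.f t ≤ L * t := by
  have hdc : ContinuousOn (derivWithin F.f (Set.Icc (0:ℝ) 1)) (Set.Icc (0:ℝ) 1) :=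
    F.f_C1.continuousOn_derivWithin uniqueDiffOn_Icc_zero_one le_rfl
  obtain ⟨C, hC⟩ := isCompact_Icc.exists_bound_of_continuousOn hdc
  set L : ℝ := |C| + 1 with hL
  have hL0 : 0 < L := by positivity
  have hbound : ∀ x ∈ Set.Icc (0:ℝ) 1, ‖derivWithin F.f (Set.Icc (0:ℝ) 1) x‖ ≤ L := by
    intro x hx
    calc ‖derivWithin F.f (Set.Icc (0:ℝ) 1) x‖ ≤ C := hC x hx
      _ ≤ |C| := le_abs_self C
      _ ≤ L := by rw [hL]; linarith
  have hdiff : DifferentiableOn ℝ F.f (Set.Icc (0:ℝ) 1) := F.f_C1.differentiableOn one_ne_zero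
  refine ⟨L, hL0, ?_⟩
  intro t ht
  constructor
  · have := Convex.norm_image_sub_le_of_norm_derivWithin_le hdiff hbound (convex_Icc 0 1)
      (Set.right_mem_Icc.2 zero_le_one) ht
    rw [F.f_one] at this
    simp only [sub_zero] at this
    calc F.f t ≤ ‖F.f t‖ := le_abs_self _
      _ ≤ L * ‖t - 1‖ := this
      _ = L * (1 - t) := by rw [Real.norm_eq_abs, abs_sub_comm, abs_of_nonneg (by linarith [ht.2])]
  · have := Convex.norm_image_sub_le_of_norm_derivWithin_le hdiff hbound (convex_Icc 0 1)
      (Set.left_mem_Icc.2 zero_le_one) ht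
    rw [F.f_zero] at this
    simp only [sub_zero] at this
    calc F.f t ≤ ‖F.f t‖ := le_abs_self _
      _ ≤ L * ‖t‖ := this
      _ = L * t := by rw [Real.norm_eq_abs, abs_of_nonneg ht.1]

end FluxData
namespace FluxData
variable (F : FluxData)

lemma sigma_pos {σ : ℝ} {z : ℝ → ℝ} (hσ0 : 0 ≤ σ) (hz : IsVsol F σ z)
    (h0 : z 0 = 0) : 0 < σ := by
  rcases hσ0.lt_or_eq with h | h
  · exact h
  · exfalso
    obtain ⟨hcont, hz1, hpos, hder⟩ := hz
    have hanti : AntitoneOn z (Set.Icc (0:ℝ) 1) := by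
      apply antitoneOn_of_deriv_nonpos (convex_Icc 0 1) hcont
      · intro x hx
        rw [interior_Icc] at hx
        exact ((hder x hx).differentiableAt).differentiableWithinAt
      · intro x hx
        rw [interior_Icc] at hx
        rw [(hder x hx).deriv, ← h]
        have h1 : 0 < F.f x := F.f_pos x hx
        have h2 : 0 ≤ Hfun F x (z x) := F.Hfun_nonneg (Set.mem_Icc_of_Ioo hx) (hpos x hx)
        nlinarith
    have hhalf : (0:ℝ) < z (1/2) := hpos (1/2) (by norm_num)
    have := hanti (Set.left_mem_Icc.2 zero_le_one) (by norm_num : (1:ℝ)/2 ∈ Set.Icc (0:ℝ) 1)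
      (by norm_num)
    rw [h0] at this
    linarith

lemma eventually_small (hc : ContinuousOn F.aplus (Set.Icc (0:ℝ) 1))
    {z : ℝ → ℝ} (hzc : ContinuousOn z (Set.Icc (0:ℝ) 1)) {e : ℝ}
    (he : e ∈ Set.Icc (0:ℝ) 1) (hze : z e = 0) {η : ℝ} (hη : 0 < η) :
    ∃ δ > 0, ∀ t ∈ Set.Icc (0:ℝ) 1, |t - e| ≤ δ →
      z t < η ∧ ENNReal.ofReal (z t) < F.aplus t := by
  obtain ⟨r, hr0, hr1, hr2⟩ := ENNReal.lt_iff_exists_real_btwn.1 (F.aplus_pos e he)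
  have hrpos : 0 < r := by
    by_contra hcon
    push_neg at hcon
    rw [ENNReal.ofReal_eq_zero.2 hcon] at hr1
    exact lt_irrefl _ hr1
  have E1 : ∀ᶠ t in nhdsWithin e (Set.Icc (0:ℝ) 1), ENNReal.ofReal r < F.aplus t := by
    exact (hc e he).eventually_mem (isOpen_Ioi.mem_nhds hr2)
  have E2 : ∀ᶠ t in nhdsWithin e (Set.Icc (0:ℝ) 1), z t < min η r := by
    have := (hzc e he).eventually_mem (isOpen_Iio.mem_nhds
      (by rw [hze]; exact lt_min hη hrpos))
    filter_upwards [this] with t ht using ht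
  have E := E1.and E2
  rw [eventually_nhdsWithin_iff, Metric.eventually_nhds_iff] at E
  obtain ⟨ε, hε0, hε⟩ := E
  refine ⟨ε / 2, by positivity, ?_⟩
  intro t ht htδ
  have hdist : dist t e < ε := by
    rw [Real.dist_eq]
    linarith [htδ]
  obtain ⟨h1, h2⟩ := hε hdist ht
  refine ⟨lt_of_lt_of_le h2 (min_le_left _ _), ?_⟩
  calc ENNReal.ofReal (z t) < ENNReal.ofReal r :=
        (ENNReal.ofReal_lt_ofReal_iff hrpos).2 (lt_of_lt_of_le h2 (min_le_right _ _))
    _ < F.aplus t := h1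

lemma lower_bound_near_one (hc : ContinuousOn F.aplus (Set.Icc (0:ℝ) 1))
    {σ : ℝ} {z : ℝ → ℝ} (hσ0 : 0 ≤ σ) (hz : IsVsol F σ z) :
    ∃ δ ∈ Set.Ioo (0:ℝ) (1/2), ∃ c > 0, ∀ t ∈ Set.Ico (1 - δ) 1,
      c / (1 - t) ≤ Hfun F t (z t) := by
  obtain ⟨hcont, hz1, hpos, hder⟩ := hz
  obtain ⟨δ₁, hδ₁0, s₀, hs₀0, m, M, hm0, hmM, hbox⟩ :=
    F.endpoint_box (Set.right_mem_Icc.2 zero_le_one)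
  obtain ⟨L, hL0, hLb⟩ := F.f_bound
  obtain ⟨δ₂, hδ₂0, hsm⟩ := F.eventually_small hc hcont (Set.right_mem_Icc.2 zero_le_one) hz1
    (mul_pos hm0 hs₀0)
  set δ : ℝ := min (min δ₁ δ₂) (1/4) with hδdef
  have hδ0 : 0 < δ := lt_min (lt_min hδ₁0 hδ₂0) (by norm_num)
  have hδhalf : δ < 1/2 := lt_of_le_of_lt (min_le_right _ _) (by norm_num)
  have hδδ₁ : δ ≤ δ₁ := (min_le_left _ _).trans (min_le_left _ _)
  have hδδ₂ : δ ≤ δ₂ := (min_le_left _ _).trans (min_le_right _ _)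
  have hM0 : 0 < M := lt_of_lt_of_le hm0 hmM
  set c : ℝ := m / Real.sqrt (L * M) with hcdef
  have hsqrt0 : 0 < Real.sqrt (L * M) := Real.sqrt_pos.2 (by positivity)
  have hc0 : 0 < c := by positivity
  -- generic facts for t in the interval
  have hIcc : ∀ t ∈ Set.Ico (1 - δ) 1, t ∈ Set.Icc (0:ℝ) 1 := by
    intro t ht
    exact ⟨by linarith [ht.1], ht.2.le⟩
  have habs : ∀ t ∈ Set.Ico (1 - δ) 1, |t - 1| ≤ δ := by
    intro t ht
    rw [abs_of_nonpos (by linarith [ht.2])]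
    linarith [ht.1]
  -- key facts about g on the interval
  have hkey : ∀ t ∈ Set.Ico (1 - δ) 1, t ∈ Set.Ioo (0:ℝ) 1 ∧
      (ENNReal.ofReal (z t) < F.aplus t) ∧ 0 < F.g t (z t) ∧ F.g t (z t) ≤ s₀ ∧
      m * F.g t (z t) ≤ z t ∧ z t ≤ M * F.g t (z t) := by
    intro t ht
    have ht' := hIcc t ht
    have htIoo : t ∈ Set.Ioo (0:ℝ) 1 := ⟨by linarith [ht.1], ht.2⟩
    obtain ⟨hzsmall, hbr⟩ := hsm t ht' (le_trans (habs t ht) hδδ₂)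
    have hztpos : 0 < z t := hpos t htIoo
    obtain ⟨hslice, hbnds⟩ := hbox t ht' (le_trans (habs t ht) hδδ₁)
    obtain ⟨hgsl, hga⟩ := F.g_mem ht' hztpos.le hbr
    have hgpos : 0 < F.g t (z t) := F.g_pos ht' hztpos hbr
    have hs₀sl : s₀ ∈ F.slice t :=
      (F.mem_omega_iff ht').1 (hslice s₀ (by rw [abs_of_pos hs₀0]))
    have hgs₀ : F.g t (z t) < s₀ := by
      by_contra hcon
      push_neg at hcon
      have h1 : F.a t s₀ ≤ F.a t (F.g t (z t)) :=
        ((F.a_strictMonoOn ht').le_iff_le hs₀sl hgsl).2 hcon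
      have h2 := (hbnds s₀ ⟨hs₀0.le, le_refl _⟩).1
      rw [hga] at h1
      linarith
    obtain ⟨hlo, hhi⟩ := hbnds (F.g t (z t)) ⟨hgpos.le, hgs₀.le⟩
    rw [hga] at hlo hhi
    exact ⟨htIoo, hbr, hgpos, hgs₀.le, hlo, hhi⟩
  -- energy estimate : z t ≤ sqrt (L*M) * (1 - t) on the closed interval
  have hzb : ∀ t ∈ Set.Ico (1 - δ) 1, z t ≤ Real.sqrt (L * M) * (1 - t) := by
    set ψ : ℝ → ℝ := fun t => z t ^ 2 - L * M * (1 - t) ^ 2 with hψdef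
    have hψder : ∀ t ∈ Set.Ioo (1 - δ) 1,
        HasDerivAt ψ (2 * z t ^ 1 * (σ - F.f t * Hfun F t (z t)) -
          L * M * (2 * (1 - t) ^ 1 * (0 - 1))) t := by
      intro t ht
      have htIoo : t ∈ Set.Ioo (0:ℝ) 1 := ⟨by linarith [ht.1], ht.2⟩
      have h1 : HasDerivAt (fun t => z t ^ 2) (2 * z t ^ 1 * (σ - F.f t * Hfun F t (z t))) t :=
        (hder t htIoo).pow 2
      have h2 : HasDerivAt (fun t : ℝ => (1 - t) ^ 2) (2 * (1 - t) ^ 1 * (0 - 1)) t := by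
        have := ((hasDerivAt_const t (1:ℝ)).sub (hasDerivAt_id t)).fun_pow 2
        simpa using this
      exact h1.sub (h2.const_mul (L * M))
    have hψmono : MonotoneOn ψ (Set.Icc (1 - δ) 1) := by
      apply monotoneOn_of_deriv_nonneg (convex_Icc _ _)
      · apply ContinuousOn.sub
        · exact ((hcont.mono (Set.Icc_subset_Icc (by linarith) le_rfl)).pow 2)
        · exact (continuousOn_const.mul (((continuousOn_const.sub continuousOn_id).pow 2)))
      · intro x hx
        rw [interior_Icc] at hx
        exact ((hψder x hx).differentiableAt).differentiableWithinAt
      · intro x hx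
        rw [interior_Icc] at hx
        rw [(hψder x hx).deriv]
        obtain ⟨hxIoo, hbr, hgpos, hgs₀, hlo, hhi⟩ := hkey x ⟨hx.1.le, hx.2⟩
        have hH : Hfun F x (z x) = 1 / F.g x (z x) := by
          unfold Hfun; rw [if_pos hbr]
        have hzx : 0 < z x := hpos x hxIoo
        have hfx : 0 < F.f x := F.f_pos x hxIoo
        have hfxL : F.f x ≤ L * (1 - x) := (hLb x (Set.mem_Icc_of_Ioo hxIoo)).1
        have hzH : z x * Hfun F x (z x) ≤ M := by
          rw [hH]
          rw [mul_one_div, div_le_iff₀ hgpos]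
          linarith
        have hzHpos : 0 ≤ z x * Hfun F x (z x) :=
          mul_nonneg hzx.le (F.Hfun_nonneg (Set.mem_Icc_of_Ioo hxIoo) hzx)
        have hfzH : F.f x * (z x * Hfun F x (z x)) ≤ L * (1 - x) * M := by
          apply mul_le_mul hfxL hzH hzHpos
          exact mul_nonneg hL0.le (by linarith [hx.2])
        have h1x : 0 < 1 - x := by linarith [hx.2]
        nlinarith [mul_nonneg hσ0 hzx.le]
    intro t ht
    have h1 : ψ t ≤ ψ 1 := hψmono ⟨ht.1, ht.2.le⟩ (Set.right_mem_Icc.2 (by linarith)) ht.2.le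
    have hψ1 : ψ 1 = 0 := by simp [hψdef, hz1]
    rw [hψ1] at h1
    have hsq : z t ^ 2 ≤ L * M * (1 - t) ^ 2 := by
      simp only [hψdef] at h1
      linarith
    have hzt : 0 < z t := hpos t ⟨by linarith [ht.1], ht.2⟩
    have h1t : (0:ℝ) ≤ 1 - t := by linarith [ht.2]
    calc z t = Real.sqrt (z t ^ 2) := (Real.sqrt_sq hzt.le).symm
      _ ≤ Real.sqrt (L * M * (1 - t) ^ 2) := Real.sqrt_le_sqrt hsq
      _ = Real.sqrt (L * M) * (1 - t) := by
          rw [Real.sqrt_mul (by positivity), Real.sqrt_sq h1t]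
  refine ⟨δ, ⟨hδ0, hδhalf⟩, c, hc0, ?_⟩
  intro t ht
  obtain ⟨htIoo, hbr, hgpos, hgs₀, hlo, hhi⟩ := hkey t ht
  have hzt : 0 < z t := hpos t htIoo
  have hH : Hfun F t (z t) = 1 / F.g t (z t) := by
    unfold Hfun; rw [if_pos hbr]
  have h1t : 0 < 1 - t := by linarith [ht.2]
  have step1 : m / z t ≤ Hfun F t (z t) := by
    rw [hH, div_le_div_iff₀ hzt hgpos, one_mul]
    linarith
  have step2 : c / (1 - t) ≤ m / z t := by
    have heq : c / (1 - t) = m / (Real.sqrt (L * M) * (1 - t)) := by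
      rw [hcdef, div_div]
    rw [heq, div_le_div_iff₀ (by positivity) hzt]
    have := hzb t ht
    nlinarith
  exact le_trans step2 step1

end FluxData
namespace FluxData
variable (F : FluxData)

lemma lower_bound_near_zero (hc : ContinuousOn F.aplus (Set.Icc (0:ℝ) 1))
    {σ : ℝ} {z : ℝ → ℝ} (hσ0 : 0 < σ) (hz : IsVsol F σ z) (hz0 : z 0 = 0) :
    ∃ δ ∈ Set.Ioo (0:ℝ) (1/2), ∃ c > 0, ∀ t ∈ Set.Ioc 0 δ,
      c / t ≤ Hfun F t (z t) := by
  obtain ⟨hcont, hz1, hpos, hder⟩ := hz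
  obtain ⟨δ₁, hδ₁0, s₀, hs₀0, m, M, hm0, hmM, hbox⟩ :=
    F.endpoint_box (Set.left_mem_Icc.2 zero_le_one)
  obtain ⟨δ₂, hδ₂0, hsm⟩ := F.eventually_small hc hcont (Set.left_mem_Icc.2 zero_le_one) hz0
    (mul_pos hm0 hs₀0)
  -- global bound z t ≤ σ t
  have hderle : ∀ x ∈ interior (Set.Icc (0:ℝ) 1), deriv z x ≤ σ := by
    intro x hx
    rw [interior_Icc] at hx
    rw [(hder x hx).deriv]
    have h1 : 0 < F.f x := F.f_pos x hx
    have h2 : 0 ≤ Hfun F x (z x) := F.Hfun_nonneg (Set.mem_Icc_of_Ioo hx) (hpos x hx)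
    nlinarith
  have hdiff : DifferentiableOn ℝ z (interior (Set.Icc (0:ℝ) 1)) := by
    intro x hx
    rw [interior_Icc] at hx
    exact ((hder x hx).differentiableAt).differentiableWithinAt
  have hzlin : ∀ t ∈ Set.Icc (0:ℝ) 1, z t ≤ σ * t := by
    intro t ht
    have := Convex.image_sub_le_mul_sub_of_deriv_le (convex_Icc (0:ℝ) 1) hcont hdiff hderle
      0 (Set.left_mem_Icc.2 zero_le_one) t ht ht.1
    rw [hz0, sub_zero, sub_zero] at this
    exact this
  set δ : ℝ := min (min δ₁ δ₂) (1/4) with hδdef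
  have hδ0 : 0 < δ := lt_min (lt_min hδ₁0 hδ₂0) (by norm_num)
  have hδhalf : δ < 1/2 := lt_of_le_of_lt (min_le_right _ _) (by norm_num)
  have hδδ₁ : δ ≤ δ₁ := (min_le_left _ _).trans (min_le_left _ _)
  have hδδ₂ : δ ≤ δ₂ := (min_le_left _ _).trans (min_le_right _ _)
  refine ⟨δ, ⟨hδ0, hδhalf⟩, m / σ, div_pos hm0 hσ0, ?_⟩
  intro t ht
  have htIoo : t ∈ Set.Ioo (0:ℝ) 1 := ⟨ht.1, lt_of_le_of_lt ht.2 (by linarith)⟩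
  have ht' : t ∈ Set.Icc (0:ℝ) 1 := Set.mem_Icc_of_Ioo htIoo
  have habs : |t - 0| ≤ δ := by
    rw [sub_zero, abs_of_pos ht.1]
    exact ht.2
  obtain ⟨hzsmall, hbr⟩ := hsm t ht' (le_trans habs hδδ₂)
  have hztpos : 0 < z t := hpos t htIoo
  obtain ⟨hslice, hbnds⟩ := hbox t ht' (le_trans habs hδδ₁)
  obtain ⟨hgsl, hga⟩ := F.g_mem ht' hztpos.le hbr
  have hgpos : 0 < F.g t (z t) := F.g_pos ht' hztpos hbr
  have hs₀sl : s₀ ∈ F.slice t :=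
    (F.mem_omega_iff ht').1 (hslice s₀ (by rw [abs_of_pos hs₀0]))
  have hgs₀ : F.g t (z t) < s₀ := by
    by_contra hcon
    push_neg at hcon
    have h1 : F.a t s₀ ≤ F.a t (F.g t (z t)) :=
      ((F.a_strictMonoOn ht').le_iff_le hs₀sl hgsl).2 hcon
    have h2 := (hbnds s₀ ⟨hs₀0.le, le_refl _⟩).1
    rw [hga] at h1
    linarith
  have hlo := (hbnds (F.g t (z t)) ⟨hgpos.le, hgs₀.le⟩).1
  rw [hga] at hlo
  have hH : Hfun F t (z t) = 1 / F.g t (z t) := by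
    unfold Hfun; rw [if_pos hbr]
  have step1 : m / z t ≤ Hfun F t (z t) := by
    rw [hH, div_le_div_iff₀ hztpos hgpos, one_mul]
    linarith
  have step2 : m / σ / t ≤ m / z t := by
    have heq : m / σ / t = m / (σ * t) := by rw [div_div]
    rw [heq, div_le_div_iff₀ (mul_pos hσ0 ht.1) hztpos]
    have := hzlin t ht'
    nlinarith
  exact le_trans step2 step1

end FluxData
theorem stmt11 (F : FluxData) (hc : ContinuousOn F.aplus (Set.Icc (0:ℝ) 1))
    (𝒱 : ℝ → ℝ → ℝ) (h𝒱 : ∀ σ : ℝ, 0 ≤ σ → IsVsol F σ (𝒱 σ))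
    (σs : ℝ) (hσs : σs = sInf {σ : ℝ | 0 ≤ σ ∧ 𝒱 σ 0 = 0})
    (hne : {σ : ℝ | 0 ≤ σ ∧ 𝒱 σ 0 = 0}.Nonempty)
    (σ : ℝ) (hσ : σs ≤ σ) (u₀ : ℝ) (hu₀ : u₀ ∈ Set.Ioo (0:ℝ) 1)
    (G : ℝ → ℝ) (hG : ∀ u : ℝ, G u = ∫ t in u₀..u, Hfun F t (𝒱 σ t)) :
    (∀ u ∈ Set.Ioo (0:ℝ) 1, HasDerivAt G (Hfun F u (𝒱 σ u)) u) ∧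
    ContDiffOn ℝ 1 G (Set.Ioo (0:ℝ) 1) ∧
    MonotoneOn G (Set.Ioo (0:ℝ) 1) ∧
    Filter.Tendsto G (nhdsWithin 0 (Set.Ioi 0)) Filter.atBot ∧
    Filter.Tendsto G (nhdsWithin 1 (Set.Iio 1)) Filter.atTop ∧
    IsCompact {ξ : ℝ | ∃ u ∈ Set.Ioo (0:ℝ) 1, G u = ξ ∧ deriv G u = 0} := by
  classical
  have hσs0 : 0 ≤ σs := by
    rw [hσs]
    exact le_csInf hne fun x hx => hx.1
  have hσ0 : 0 ≤ σ := hσs0.trans hσ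
  obtain ⟨hzc, hz1, hzpos, hzder⟩ := h𝒱 σ hσ0
  have hz0 : 𝒱 σ 0 = 0 := F.Vzero h𝒱 hσs hne hσ
  have hσpos : 0 < σ := F.sigma_pos hσ0 (h𝒱 σ hσ0) hz0
  set H : ℝ → ℝ := fun t => Hfun F t (𝒱 σ t) with hHdef
  have hHcont : ContinuousOn H (Set.Ioo 0 1) := F.Hfun_comp_continuousOn hc hzc hzpos
  have hHnn : ∀ t ∈ Set.Ioo (0:ℝ) 1, 0 ≤ H t :=
    fun t ht => F.Hfun_nonneg (Set.mem_Icc_of_Ioo ht) (hzpos t ht)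
  have hsub : ∀ a b : ℝ, a ∈ Set.Ioo (0:ℝ) 1 → b ∈ Set.Ioo (0:ℝ) 1 →
      Set.uIcc a b ⊆ Set.Ioo (0:ℝ) 1 := by
    intro a b ha hb x hx
    rw [Set.mem_uIcc] at hx
    rcases hx with h | h
    · exact ⟨lt_of_lt_of_le ha.1 h.1, lt_of_le_of_lt h.2 hb.2⟩
    · exact ⟨lt_of_lt_of_le hb.1 h.1, lt_of_le_of_lt h.2 ha.2⟩
  have hint : ∀ a b : ℝ, a ∈ Set.Ioo (0:ℝ) 1 → b ∈ Set.Ioo (0:ℝ) 1 →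
      IntervalIntegrable H MeasureTheory.volume a b := fun a b ha hb =>
    (hHcont.mono (hsub a b ha hb)).intervalIntegrable
  have hd1 : ∀ u ∈ Set.Ioo (0:ℝ) 1, HasDerivAt G (H u) u := by
    intro u hu
    have hGfun : G = fun v => ∫ t in u₀..v, H t := funext hG
    rw [hGfun]
    exact intervalIntegral.integral_hasDerivAt_right (hint u₀ u hu₀ hu)
      (hHcont.stronglyMeasurableAtFilter isOpen_Ioo u hu)
      (hHcont.continuousAt (isOpen_Ioo.mem_nhds hu))
  have hGsub : ∀ a b : ℝ, a ∈ Set.Ioo (0:ℝ) 1 → b ∈ Set.Ioo (0:ℝ) 1 →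
      G b - G a = ∫ t in a..b, H t := by
    intro a b ha hb
    rw [hG a, hG b]
    exact intervalIntegral.integral_interval_sub_left (hint u₀ b hu₀ hb) (hint u₀ a hu₀ ha)
  have hGc : ContinuousOn G (Set.Ioo (0:ℝ) 1) :=
    fun u hu => ((hd1 u hu).differentiableAt).continuousAt.continuousWithinAt
  refine ⟨hd1, ?_, ?_, ?_, ?_, ?_⟩
  · -- C¹
    rw [show (1 : WithTop ℕ∞) = 0 + 1 by norm_num,
      contDiffOn_succ_iff_deriv_of_isOpen isOpen_Ioo]
    refine ⟨fun u hu => ((hd1 u hu).differentiableAt).differentiableWithinAt, ?_, ?_⟩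
    · intro hω
      exact absurd hω (by simp)
    · rw [contDiffOn_zero]
      exact hHcont.congr fun u hu => (hd1 u hu).deriv
  · -- monotone
    apply monotoneOn_of_deriv_nonneg (convex_Ioo 0 1) hGc
    · rw [interior_Ioo]
      exact fun u hu => ((hd1 u hu).differentiableAt).differentiableWithinAt
    · rw [interior_Ioo]
      intro u hu
      rw [(hd1 u hu).deriv]
      exact hHnn u hu
  · -- tendsto atBot at 0
    obtain ⟨δ, hδm, c, hc0, hlow⟩ := F.lower_bound_near_zero hc hσpos (h𝒱 σ hσ0) hz0
    set u₂ : ℝ := min u₀ δ with hu₂def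
    have hu₂Ioo : u₂ ∈ Set.Ioo (0:ℝ) 1 :=
      ⟨lt_min hu₀.1 hδm.1, lt_of_le_of_lt (min_le_left _ _) hu₀.2⟩
    have hu₂δ : u₂ ≤ δ := min_le_right _ _
    have hbound : ∀ u ∈ Set.Ioo (0:ℝ) u₂, G u ≤ G u₂ - c * Real.log (u₂ / u) := by
      intro u hu
      have huIoo : u ∈ Set.Ioo (0:ℝ) 1 := ⟨hu.1, lt_trans hu.2 hu₂Ioo.2⟩
      have hdiff := hGsub u u₂ huIoo hu₂Ioo
      have hii : IntervalIntegrable (fun t : ℝ => c * t⁻¹) MeasureTheory.volume u u₂ := by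
        apply ContinuousOn.intervalIntegrable
        apply ContinuousOn.mul continuousOn_const
        apply ContinuousOn.inv₀ continuousOn_id
        intro x hx
        rw [Set.uIcc_of_le hu.2.le] at hx
        exact ne_of_gt (lt_of_lt_of_le hu.1 hx.1)
      have hmono : (∫ t in u..u₂, c * t⁻¹) ≤ ∫ t in u..u₂, H t := by
        apply intervalIntegral.integral_mono_on hu.2.le hii (hint u u₂ huIoo hu₂Ioo)
        intro x hx
        have hx1 : x ∈ Set.Ioc (0:ℝ) δ := ⟨lt_of_lt_of_le hu.1 hx.1, hx.2.trans hu₂δ⟩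
        calc c * x⁻¹ = c / x := (div_eq_mul_inv c x).symm
          _ ≤ H x := hlow x hx1
      have hcalc : (∫ t in u..u₂, c * t⁻¹) = c * Real.log (u₂ / u) := by
        rw [intervalIntegral.integral_const_mul, integral_inv_of_pos hu.1 hu₂Ioo.1]
      rw [hcalc] at hmono
      linarith
    have htend : Filter.Tendsto (fun u => G u₂ - c * Real.log (u₂ / u))
        (nhdsWithin 0 (Set.Ioi 0)) Filter.atBot := by
      have h1 : Filter.Tendsto (fun u : ℝ => u₂ / u) (nhdsWithin 0 (Set.Ioi 0)) Filter.atTop := by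
        simp only [div_eq_mul_inv]
        exact tendsto_inv_nhdsGT_zero.const_mul_atTop hu₂Ioo.1
      have h2 : Filter.Tendsto (fun u : ℝ => Real.log (u₂ / u))
          (nhdsWithin 0 (Set.Ioi 0)) Filter.atTop := Real.tendsto_log_atTop.comp h1
      have h3 : Filter.Tendsto (fun u : ℝ => c * Real.log (u₂ / u))
          (nhdsWithin 0 (Set.Ioi 0)) Filter.atTop := h2.const_mul_atTop hc0
      have h4 : Filter.Tendsto (fun u : ℝ => -(c * Real.log (u₂ / u)))
          (nhdsWithin 0 (Set.Ioi 0)) Filter.atBot := tendsto_neg_atTop_atBot.comp h3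
      have h5 := tendsto_atBot_add_const_left (nhdsWithin (0:ℝ) (Set.Ioi 0)) (G u₂) h4
      simpa [sub_eq_add_neg] using h5
    apply tendsto_atBot_mono' _ ?_ htend
    filter_upwards [Ioo_mem_nhdsGT_of_mem (Set.left_mem_Ico.2 hu₂Ioo.1)] with u hu
    exact hbound u hu
  · -- tendsto atTop at 1
    obtain ⟨δ, hδm, c, hc0, hlow⟩ := F.lower_bound_near_one hc hσ0 (h𝒱 σ hσ0)
    set u₁ : ℝ := max u₀ (1 - δ) with hu₁def
    have hu₁Ioo : u₁ ∈ Set.Ioo (0:ℝ) 1 :=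
      ⟨lt_of_lt_of_le hu₀.1 (le_max_left _ _), max_lt hu₀.2 (by linarith [hδm.1])⟩
    have hu₁δ : 1 - δ ≤ u₁ := le_max_right _ _
    have hbound : ∀ u ∈ Set.Ioo u₁ 1, G u₁ + c * Real.log ((1 - u₁) / (1 - u)) ≤ G u := by
      intro u hu
      have huIoo : u ∈ Set.Ioo (0:ℝ) 1 := ⟨lt_trans hu₁Ioo.1 hu.1, hu.2⟩
      have hdiff := hGsub u₁ u hu₁Ioo huIoo
      have hii : IntervalIntegrable (fun t : ℝ => c * (1 - t)⁻¹) MeasureTheory.volume u₁ u := by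
        apply ContinuousOn.intervalIntegrable
        apply ContinuousOn.mul continuousOn_const
        apply ContinuousOn.inv₀ (continuousOn_const.sub continuousOn_id)
        intro x hx
        rw [Set.uIcc_of_le hu.1.le] at hx
        have hx1 : x < 1 := lt_of_le_of_lt hx.2 hu.2
        exact ne_of_gt (show (0:ℝ) < 1 - id x by simp only [id]; linarith)
      have hmono : (∫ t in u₁..u, c * (1 - t)⁻¹) ≤ ∫ t in u₁..u, H t := by
        apply intervalIntegral.integral_mono_on hu.1.le hii (hint u₁ u hu₁Ioo huIoo)
        intro x hx
        have hx1 : x ∈ Set.Ico (1 - δ) 1 :=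
          ⟨le_trans hu₁δ hx.1, lt_of_le_of_lt hx.2 hu.2⟩
        calc c * (1 - x)⁻¹ = c / (1 - x) := (div_eq_mul_inv c _).symm
          _ ≤ H x := hlow x hx1
      have hcalc : (∫ t in u₁..u, c * (1 - t)⁻¹) = c * Real.log ((1 - u₁) / (1 - u)) := by
        rw [intervalIntegral.integral_const_mul]
        have hcs := intervalIntegral.integral_comp_sub_left (a := u₁) (b := u)
          (fun x : ℝ => x⁻¹) 1
        rw [hcs, integral_inv_of_pos (by linarith [hu.2] : (0:ℝ) < 1 - u)
          (by linarith [hu₁Ioo.2] : (0:ℝ) < 1 - u₁)]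
      rw [hcalc] at hmono
      linarith
    have htend : Filter.Tendsto (fun u => G u₁ + c * Real.log ((1 - u₁) / (1 - u)))
        (nhdsWithin 1 (Set.Iio 1)) Filter.atTop := by
      have h1 : Filter.Tendsto (fun u : ℝ => 1 - u) (nhdsWithin 1 (Set.Iio 1))
          (nhdsWithin 0 (Set.Ioi 0)) := by
        rw [tendsto_nhdsWithin_iff]
        constructor
        · have : Filter.Tendsto (fun u : ℝ => 1 - u) (nhds 1) (nhds (1 - 1)) :=
            (continuous_const.sub continuous_id).tendsto 1
          simpa using this.mono_left nhdsWithin_le_nhds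
        · filter_upwards [self_mem_nhdsWithin] with u hu
          exact Set.mem_Ioi.2 (by simp only [Set.mem_Iio] at hu; linarith)
      have h2 : Filter.Tendsto (fun u : ℝ => (1 - u)⁻¹) (nhdsWithin 1 (Set.Iio 1))
          Filter.atTop := tendsto_inv_nhdsGT_zero.comp h1
      have h3 : Filter.Tendsto (fun u : ℝ => (1 - u₁) * (1 - u)⁻¹)
          (nhdsWithin 1 (Set.Iio 1)) Filter.atTop :=
        h2.const_mul_atTop (by linarith [hu₁Ioo.2])
      have h3' : Filter.Tendsto (fun u : ℝ => (1 - u₁) / (1 - u))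
          (nhdsWithin 1 (Set.Iio 1)) Filter.atTop := by
        simpa [div_eq_mul_inv] using h3
      have h4 : Filter.Tendsto (fun u : ℝ => Real.log ((1 - u₁) / (1 - u)))
          (nhdsWithin 1 (Set.Iio 1)) Filter.atTop := Real.tendsto_log_atTop.comp h3'
      have h5 : Filter.Tendsto (fun u : ℝ => c * Real.log ((1 - u₁) / (1 - u)))
          (nhdsWithin 1 (Set.Iio 1)) Filter.atTop := h4.const_mul_atTop hc0
      exact tendsto_atTop_add_const_left _ (G u₁) h5
    apply tendsto_atTop_mono' _ ?_ htend
    filter_upwards [Ioo_mem_nhdsLT_of_mem (Set.mem_Ioc.2 ⟨hu₁Ioo.2, le_refl (1:ℝ)⟩)] with u hu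
    exact hbound u hu
  · -- compactness of the set of critical values
    obtain ⟨δ0, hδ0m, c0, hc00, hlow0⟩ := F.lower_bound_near_zero hc hσpos (h𝒱 σ hσ0) hz0
    obtain ⟨δ1, hδ1m, c1, hc10, hlow1⟩ := F.lower_bound_near_one hc hσ0 (h𝒱 σ hσ0)
    have hUopen : IsOpen {u : ℝ | u ∈ Set.Ioo (0:ℝ) 1 ∧
        ENNReal.ofReal (𝒱 σ u) < F.aplus u} := by
      rw [isOpen_iff_mem_nhds]
      rintro u ⟨hu1, hu2⟩
      have e1 : ∀ᶠ t in nhds u, t ∈ Set.Ioo (0:ℝ) 1 := isOpen_Ioo.mem_nhds hu1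
      have hzca : ContinuousAt (𝒱 σ) u := hzc.continuousAt (Icc_mem_nhds hu1.1 hu1.2)
      have hp : ContinuousAt
          (fun t => ((ENNReal.ofReal (𝒱 σ t), F.aplus t) : ℝ≥0∞ × ℝ≥0∞)) u :=
        (ENNReal.continuous_ofReal.continuousAt.comp hzca).prodMk (F.aplus_continuousAt hc hu1)
      have hop : IsOpen {x : ℝ≥0∞ × ℝ≥0∞ | x.1 < x.2} :=
        isOpen_lt continuous_fst continuous_snd
      filter_upwards [e1, hp.preimage_mem_nhds (hop.mem_nhds hu2)] with t h1 h2
      exact ⟨h1, h2⟩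
    set K : Set ℝ := Set.Icc δ0 (1 - δ1) ∩
      {u : ℝ | u ∈ Set.Ioo (0:ℝ) 1 ∧ ENNReal.ofReal (𝒱 σ u) < F.aplus u}ᶜ with hK
    have hKIoo : Set.Icc δ0 (1 - δ1) ⊆ Set.Ioo (0:ℝ) 1 := fun x hx =>
      ⟨lt_of_lt_of_le hδ0m.1 hx.1, lt_of_le_of_lt hx.2 (by linarith [hδ1m.1])⟩
    have hKcomp : IsCompact K := isCompact_Icc.inter_right (isClosed_compl_iff.2 hUopen)
    have hKsub : K ⊆ Set.Ioo (0:ℝ) 1 := fun x hx => hKIoo hx.1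
    have hTK : {u : ℝ | u ∈ Set.Ioo (0:ℝ) 1 ∧ deriv G u = 0} = K := by
      ext u
      simp only [hK, Set.mem_setOf_eq, Set.mem_inter_iff, Set.mem_compl_iff]
      constructor
      · rintro ⟨huIoo, hder⟩
        have hHu : H u = 0 := by rw [← (hd1 u huIoo).deriv]; exact hder
        have hnb : ¬ ENNReal.ofReal (𝒱 σ u) < F.aplus u := by
          intro hbr
          have hp := F.Hfun_pos (Set.mem_Icc_of_Ioo huIoo) (hzpos u huIoo) hbr
          rw [show Hfun F u (𝒱 σ u) = H u from rfl, hHu] at hp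
          exact lt_irrefl _ hp
        refine ⟨⟨?_, ?_⟩, fun h => hnb h.2⟩
        · by_contra hlt
          push_neg at hlt
          have hle : c0 / u ≤ H u := hlow0 u ⟨huIoo.1, hlt.le⟩
          rw [hHu] at hle
          have : 0 < c0 / u := div_pos hc00 huIoo.1
          linarith
        · by_contra hlt
          push_neg at hlt
          have hle : c1 / (1 - u) ≤ H u := hlow1 u ⟨by linarith, huIoo.2⟩
          rw [hHu] at hle
          have : 0 < c1 / (1 - u) := div_pos hc10 (by linarith [huIoo.2])
          linarith
      · rintro ⟨hIcc, hnU⟩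
        have huIoo := hKIoo hIcc
        refine ⟨huIoo, ?_⟩
        rw [(hd1 u huIoo).deriv]
        show Hfun F u (𝒱 σ u) = 0
        have hnb : ¬ ENNReal.ofReal (𝒱 σ u) < F.aplus u := fun h => hnU ⟨huIoo, h⟩
        unfold Hfun
        rw [if_neg hnb]
    have himg : {ξ : ℝ | ∃ u ∈ Set.Ioo (0:ℝ) 1, G u = ξ ∧ deriv G u = 0} = G '' K := by
      rw [← hTK]
      ext ξ
      simp only [Set.mem_image, Set.mem_setOf_eq]
      constructor
      · rintro ⟨u, hu, hGu, hd⟩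
        exact ⟨u, ⟨hu, hd⟩, hGu⟩
      · rintro ⟨u, ⟨hu, hd⟩, hGu⟩
        exact ⟨u, hu, hGu, hd⟩
    rw [himg]
    exact hKcomp.image_of_continuousOn (hGc.mono hKsub)
end
end

section
/- Assume (H_c). Fix σ ≥ 0 and suppose 0 < μ < ν < 1 satisfy: a₊(u) ≤ 𝒱_σ(u) for all u ∈ [μ,ν], 𝒱_σ(μ) = a₊(μ), and 𝒱_σ(ν) = a₊(ν). Then (a₊(ν) − a₊(μ))/(ν − μ) = σ (Rankine–Hugoniot), and for every u ∈ (μ,ν]: (a₊(u) − a₊(μ))/(u − μ) ≤ (a₊(ν) − a₊(μ))/(ν − μ) (Bertsch–Dal Passo condition). -/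
open Set Filter Topology
open scoped ENNReal

noncomputable section

theorem stmt12 (F : FluxData) (hc : ContinuousOn F.aplus (Set.Icc (0:ℝ) 1))
    (σ : ℝ) (hσ : 0 ≤ σ) (𝒱σ : ℝ → ℝ) (h𝒱σ : IsVsol F σ 𝒱σ)
    (μ ν : ℝ) (hμ : 0 < μ) (hμν : μ < ν) (hν : ν < 1)
    (hle : ∀ u ∈ Set.Icc μ ν, F.aplus u ≤ ENNReal.ofReal (𝒱σ u))
    (heqμ : F.aplus μ = ENNReal.ofReal (𝒱σ μ))
    (heqν : F.aplus ν = ENNReal.ofReal (𝒱σ ν)) :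
    ((F.aplus ν).toReal - (F.aplus μ).toReal) / (ν - μ) = σ ∧
    ∀ u ∈ Set.Ioc μ ν,
      ((F.aplus u).toReal - (F.aplus μ).toReal) / (u - μ) ≤
        ((F.aplus ν).toReal - (F.aplus μ).toReal) / (ν - μ) := by
  obtain ⟨hcont, hV1, hVpos, hVderiv⟩ := h𝒱σ
  have hμ1 : μ ∈ Set.Ioo (0:ℝ) 1 := ⟨hμ, hμν.trans hν⟩
  have hVμpos : 0 < 𝒱σ μ := hVpos μ hμ1
  -- key: 𝒱σ u = 𝒱σ μ + σ * (u - μ) for u ∈ (μ, ν]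
  have key : ∀ u ∈ Set.Ioc μ ν, 𝒱σ u = 𝒱σ μ + σ * (u - μ) := by
    intro u hu
    have hμu : μ < u := hu.1
    have hderiv : ∀ x ∈ Set.Ioo μ u, HasDerivAt 𝒱σ σ x := by
      intro x hx
      have hx01 : x ∈ Set.Ioo (0:ℝ) 1 :=
        ⟨hμ.trans hx.1, lt_of_lt_of_le hx.2 (hu.2.trans hν.le)⟩
      have hxμν : x ∈ Set.Icc μ ν := ⟨hx.1.le, hx.2.le.trans hu.2⟩
      have hH : Hfun F x (𝒱σ x) = 0 := by
        rw [Hfun, if_neg (not_lt.2 (hle x hxμν))]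
      have := hVderiv x hx01
      rw [hH] at this
      simpa using this
    have hcont' : ContinuousOn 𝒱σ (Set.Icc μ u) := by
      apply hcont.mono
      intro x hx
      exact ⟨hμ.le.trans hx.1, hx.2.trans (hu.2.trans hν.le)⟩
    obtain ⟨c, _, hc⟩ := exists_hasDerivAt_eq_slope 𝒱σ (fun _ => σ) hμu hcont' hderiv
    have hne : u - μ ≠ 0 := by linarith
    field_simp at hc
    linarith
  -- finiteness and toReal facts
  have htμ : (F.aplus μ).toReal = 𝒱σ μ := by
    rw [heqμ, ENNReal.toReal_ofReal hVμpos.le]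
  have hνIoc : ν ∈ Set.Ioc μ ν := ⟨hμν, le_refl ν⟩
  have hVν : 𝒱σ ν = 𝒱σ μ + σ * (ν - μ) := key ν hνIoc
  have hVνpos : 0 < 𝒱σ ν := hVpos ν ⟨hμ.trans hμν, hν⟩
  have htν : (F.aplus ν).toReal = 𝒱σ ν := by
    rw [heqν, ENNReal.toReal_ofReal hVνpos.le]
  have hνμ : (0:ℝ) < ν - μ := by linarith
  have hfirst : ((F.aplus ν).toReal - (F.aplus μ).toReal) / (ν - μ) = σ := by
    rw [htν, htμ, hVν]
    field_simp
    ring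
  refine ⟨hfirst, ?_⟩
  intro u hu
  rw [hfirst]
  have huμ : (0:ℝ) < u - μ := by linarith [hu.1]
  rw [div_le_iff₀ huμ]
  have hVu : 𝒱σ u = 𝒱σ μ + σ * (u - μ) := key u hu
  have hfin : F.aplus u ≠ ⊤ :=
    ne_top_of_le_ne_top ENNReal.ofReal_ne_top (hle u ⟨hu.1.le, hu.2⟩)
  have htu : (F.aplus u).toReal ≤ 𝒱σ u := by
    calc (F.aplus u).toReal ≤ (ENNReal.ofReal (𝒱σ u)).toReal :=
          ENNReal.toReal_mono ENNReal.ofReal_ne_top (hle u ⟨hu.1.le, hu.2⟩)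
      _ ≤ 𝒱σ u := le_of_eq (ENNReal.toReal_ofReal (hVpos u ⟨hμ.trans hu.1, lt_of_le_of_lt hu.2 hν⟩).le)
  rw [htμ]
  linarith [htu, hVu.ge]
end
end

section
/- Assume (H_c), and assume a₊ is differentiable at every point u with a₊(u) < +∞. Fix σ ≥ σ_s and u₀ ∈ (0,1), and define 𝒢_σ(u) := ∫_{u₀}^u ℋ(δ,𝒱_σ(δ)) dδ for u ∈ (0,1) and S_σ := {ξ ∈ ℝ : there exists u ∈ (0,1) with 𝒢_σ(u) = ξ and 𝒢_σ'(u) = 0}. If the set W_σ := {u ∈ [0,1] : a₊(u) < +∞ and a₊'(u) = σ} is finite, then S_σ is finite. -/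
open Set Filter Topology
open scoped ENNReal

noncomputable section

namespace Stmt13Aux

/-- The `s`-section of `Ω` at `u`. -/
def sec (F : FluxData) (u : ℝ) : Set ℝ := {s : ℝ | ENNReal.ofReal |s| < F.ω u}

variable {F : FluxData}

lemma mem_omega_iff {u s : ℝ} :
    (u, s) ∈ OmegaSet F.ω ↔ u ∈ Set.Icc (0:ℝ) 1 ∧ s ∈ sec F u := Iff.rfl

lemma sec_open (u : ℝ) : IsOpen (sec F u) :=
  (ENNReal.continuous_ofReal.comp continuous_abs).isOpen_preimage (Set.Iio (F.ω u)) isOpen_Iio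

lemma zero_mem_sec {u : ℝ} (hu : u ∈ Set.Icc (0:ℝ) 1) : (0:ℝ) ∈ sec F u := by
  simp only [sec, Set.mem_setOf_eq, abs_zero, ENNReal.ofReal_zero]
  exact F.ω_pos u hu

lemma sec_convex (u : ℝ) : Convex ℝ (sec F u) := by
  intro x hx y hy a b ha hb hab
  simp only [sec, Set.mem_setOf_eq] at *
  have h1 : |a • x + b • y| ≤ max |x| |y| := by
    calc |a • x + b • y| ≤ |a • x| + |b • y| := abs_add_le _ _
      _ = a * |x| + b * |y| := by
          simp [smul_eq_mul, abs_mul, abs_of_nonneg ha, abs_of_nonneg hb]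
      _ ≤ a * max |x| |y| + b * max |x| |y| := by
          gcongr <;> simp [le_max_left, le_max_right]
      _ = max |x| |y| := by rw [← add_mul, hab, one_mul]
  refine lt_of_le_of_lt (ENNReal.ofReal_le_ofReal h1) ?_
  rcases le_total |x| |y| with h | h
  · rw [max_eq_right h]; exact hy
  · rw [max_eq_left h]; exact hx

lemma a_zero {u : ℝ} (hu : u ∈ Set.Icc (0:ℝ) 1) : F.a u 0 = 0 := by
  have h := F.a_odd u 0 ⟨hu, by simpa [ENNReal.ofReal_zero] using F.ω_pos u hu⟩
  simp only [neg_zero] at h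
  linarith

lemma a_strictMonoOn {u : ℝ} (hu : u ∈ Set.Icc (0:ℝ) 1) :
    StrictMonoOn (F.a u) (sec F u) := by
  have hd : ∀ s ∈ sec F u, ∃ d : ℝ, 0 < d ∧ HasDerivAt (F.a u) d s :=
    fun s hs => F.a_deriv_pos u s ⟨hu, hs⟩
  refine StrictMonoOn.mono ?_ (le_refl (sec F u))
  refine strictMonoOn_of_deriv_pos (sec_convex u) ?_ ?_
  · intro s hs
    obtain ⟨d, _, hder⟩ := hd s hs
    exact hder.continuousAt.continuousWithinAt
  · intro s hs
    rw [(sec_open u).interior_eq] at hs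
    obtain ⟨d, hdpos, hder⟩ := hd s hs
    rw [hder.deriv]; exact hdpos

lemma g_mem_sec {u v : ℝ} (h : (u, v) ∈ DSet F.aplus) : F.g u v ∈ sec F u :=
  ((F.g_spec (u, v) h).1).2

lemma a_g {u v : ℝ} (h : (u, v) ∈ DSet F.aplus) : F.a u (F.g u v) = v :=
  (F.g_spec (u, v) h).2

lemma g_pos {u v : ℝ} (h : (u, v) ∈ DSet F.aplus) (hv : 0 < v) : 0 < F.g u v := by
  have hu : u ∈ Set.Icc (0:ℝ) 1 := h.1
  by_contra hle
  push_neg at hle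
  have := (a_strictMonoOn hu).monotoneOn (g_mem_sec h) (zero_mem_sec hu) hle
  rw [a_g h, a_zero hu] at this
  linarith



lemma icc_mem_nhds {q : ℝ} (hq : q ∈ Set.Ioo (0:ℝ) 1) : Set.Icc (0:ℝ) 1 ∈ 𝓝 q :=
  Filter.mem_of_superset (Ioo_mem_nhds hq.1 hq.2) Set.Ioo_subset_Icc_self

lemma omega_mem_nhds {p : ℝ × ℝ} (h1 : p.1 ∈ Set.Ioo (0:ℝ) 1) (h2 : p ∈ OmegaSet F.ω) :
    OmegaSet F.ω ∈ 𝓝 p := by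
  obtain ⟨c, hc1, hc2⟩ := exists_between h2.2
  have hω : ∀ᶠ u in 𝓝 p.1, c < F.ω u := by
    have := F.ω_lsc p.1 (Set.Ioo_subset_Icc_self h1) c hc2
    rw [nhdsWithin_eq_nhds.2 (icc_mem_nhds h1)] at this
    exact this
  have hu : ∀ᶠ u in 𝓝 p.1, u ∈ Set.Icc (0:ℝ) 1 ∧ c < F.ω u :=
    Filter.eventually_and.2 ⟨icc_mem_nhds h1, hω⟩
  have hs : ∀ᶠ s in 𝓝 p.2, ENNReal.ofReal |s| < c := by
    have hcont : Continuous fun s : ℝ => ENNReal.ofReal |s| :=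
      ENNReal.continuous_ofReal.comp continuous_abs
    exact hcont.continuousAt.preimage_mem_nhds (Iio_mem_nhds hc1)
  have := Filter.prod_mem_prod hu hs
  rw [← nhds_prod_eq] at this
  exact Filter.mem_of_superset this
    (by rintro ⟨u, s⟩ ⟨⟨h1', h2'⟩, h3'⟩; exact ⟨h1', h3'.trans h2'⟩)

/-- Locally uniform positive lower bound on `g` where `v` is bounded below. -/
lemma g_lower_bound {q : ℝ} (hq : q ∈ Set.Ioo (0:ℝ) 1) {c : ℝ} (hc : 0 < c) :
    ∃ s₀ : ℝ, 0 < s₀ ∧ ∃ N ∈ 𝓝 q, ∀ t ∈ N, ∀ v : ℝ, c ≤ v →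
      (t, v) ∈ DSet F.aplus → s₀ ≤ F.g t v := by
  have hq01 : q ∈ Set.Icc (0:ℝ) 1 := Set.Ioo_subset_Icc_self hq
  have hp : ((q, 0) : ℝ × ℝ) ∈ OmegaSet F.ω := ⟨hq01, by simpa using F.ω_pos q hq01⟩
  have hnb : OmegaSet F.ω ∈ 𝓝 ((q, 0) : ℝ × ℝ) := omega_mem_nhds hq hp
  have hca : ContinuousAt (fun p : ℝ × ℝ => F.a p.1 p.2) (q, 0) :=
    (F.a_C1.continuousOn.continuousAt hnb)
  have ha0 : F.a q 0 = 0 := a_zero hq01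
  have hev : ∀ᶠ x : ℝ × ℝ in 𝓝 (q, 0), |F.a x.1 x.2| < c := by
    have : ∀ᶠ x : ℝ × ℝ in 𝓝 (q, 0), F.a x.1 x.2 ∈ Set.Ioo (-c) c := by
      refine hca.preimage_mem_nhds ?_
      rw [ha0]; exact Ioo_mem_nhds (by linarith) hc
    exact this.mono (fun x hx => abs_lt.2 hx)
  obtain ⟨Nu, hNu, Ns, hNs, hsub⟩ := Filter.mem_prod_iff.1
    (by rw [nhds_prod_eq] at hev hnb; exact (Filter.inter_mem hev hnb : _))
  obtain ⟨ε, hε, hball⟩ := Metric.mem_nhds_iff.1 hNs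
  refine ⟨ε / 2, by linarith, Nu, hNu, ?_⟩
  intro t ht v hv hD
  have hmem : (t, ε / 2) ∈ OmegaSet F.ω ∧ |F.a t (ε / 2)| < c := by
    have : (t, ε / 2) ∈ Nu ×ˢ Ns :=
      ⟨ht, hball (by
        simp only [Metric.mem_ball, Real.dist_eq, sub_zero,
          abs_of_nonneg (by linarith : (0:ℝ) ≤ ε / 2)]
        linarith)⟩
    have := hsub this
    exact ⟨this.2, this.1⟩
  have ht01 : t ∈ Set.Icc (0:ℝ) 1 := hmem.1.1
  by_contra hlt
  push_neg at hlt
  have h1 : F.a t (F.g t v) ≤ F.a t (ε / 2) :=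
    (a_strictMonoOn ht01).monotoneOn (g_mem_sec hD) hmem.1.2 hlt.le
  rw [a_g hD] at h1
  have : F.a t (ε / 2) < c := (le_abs_self _).trans_lt hmem.2
  linarith



/-- Continuity of `t ↦ g(t, V t)` at points where `0 < V q` and `V q < a₊ q`,
via the inverse function theorem. -/
lemma g_comp_continuousAt (hc : ContinuousOn F.aplus (Set.Icc (0:ℝ) 1))
    {V : ℝ → ℝ} (hVc : ContinuousOn V (Set.Icc (0:ℝ) 1)) {q : ℝ}
    (hq : q ∈ Set.Ioo (0:ℝ) 1) (hVq : 0 < V q)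
    (hlt : ENNReal.ofReal (V q) < F.aplus q) :
    ContinuousAt (fun t => F.g t (V t)) q := by
  have hq01 : q ∈ Set.Icc (0:ℝ) 1 := Set.Ioo_subset_Icc_self hq
  have hD : ((q, V q) : ℝ × ℝ) ∈ DSet F.aplus := ⟨hq01, by rwa [abs_of_pos hVq]⟩
  set s₀ : ℝ := F.g q (V q) with hs₀
  set p : ℝ × ℝ := (q, s₀) with hp
  have hpΩ : p ∈ OmegaSet F.ω := (F.g_spec (q, V q) hD).1
  have hnb : OmegaSet F.ω ∈ 𝓝 p := omega_mem_nhds hq hpΩ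
  set F2 : ℝ × ℝ → ℝ := fun x => F.a x.1 x.2 with hF2
  have hCD : ContDiffAt ℝ 1 F2 p := F.a_C1.contDiffAt hnb
  have hdiff : DifferentiableAt ℝ F2 p := hCD.differentiableAt one_ne_zero
  set A : ℝ × ℝ →L[ℝ] ℝ := fderiv ℝ F2 p with hA
  have hFA : HasFDerivAt F2 A p := hdiff.hasFDerivAt
  obtain ⟨d, hd, hda⟩ := F.a_deriv_pos q s₀ hpΩ
  -- identify A (0,1) = d
  have hinner : HasDerivAt (fun s : ℝ => ((q, s) : ℝ × ℝ)) ((0 : ℝ), (1 : ℝ)) s₀ :=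
    (hasDerivAt_const _ _).prodMk (hasDerivAt_id _)
  have hpart : HasDerivAt (fun s : ℝ => F2 (q, s)) (A (0, 1)) s₀ :=
    hFA.comp_hasDerivAt s₀ hinner
  have hAd : A (0, 1) = d := hpart.unique hda
  set α : ℝ := A (1, 0) with hα
  have hAxy : ∀ x y : ℝ, A (x, y) = x * α + y * d := by
    intro x y
    have : ((x, y) : ℝ × ℝ) = x • ((1 : ℝ), (0 : ℝ)) + y • ((0 : ℝ), (1 : ℝ)) := by
      simp [Prod.ext_iff]
    rw [this, map_add, map_smul, map_smul, hAd, smul_eq_mul, smul_eq_mul]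
  set DΦ : ℝ × ℝ →L[ℝ] ℝ × ℝ := (ContinuousLinearMap.fst ℝ ℝ ℝ).prod A with hDΦ
  set B : ℝ × ℝ →L[ℝ] ℝ × ℝ := (ContinuousLinearMap.fst ℝ ℝ ℝ).prod
    (d⁻¹ • (ContinuousLinearMap.snd ℝ ℝ ℝ - α • ContinuousLinearMap.fst ℝ ℝ ℝ)) with hB
  have hBD : Function.LeftInverse B DΦ := by
    rintro ⟨x, y⟩
    simp only [hDΦ, hB, ContinuousLinearMap.prod_apply, ContinuousLinearMap.coe_fst',
      ContinuousLinearMap.smul_apply, ContinuousLinearMap.sub_apply,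
      ContinuousLinearMap.coe_snd', ContinuousLinearMap.coe_smul', Pi.smul_apply,
      smul_eq_mul]
    refine Prod.ext rfl ?_
    simp only [hAxy x y]
    field_simp
    ring
  have hDB : Function.RightInverse B DΦ := by
    rintro ⟨x, z⟩
    simp only [hDΦ, hB, ContinuousLinearMap.prod_apply, ContinuousLinearMap.coe_fst',
      ContinuousLinearMap.smul_apply, ContinuousLinearMap.sub_apply,
      ContinuousLinearMap.coe_snd', ContinuousLinearMap.coe_smul', Pi.smul_apply,
      smul_eq_mul]
    refine Prod.ext rfl ?_
    rw [hAxy]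
    field_simp
    ring
  set e : (ℝ × ℝ) ≃L[ℝ] (ℝ × ℝ) := ContinuousLinearEquiv.equivOfInverse DΦ B hBD hDB with he
  set Φ : ℝ × ℝ → ℝ × ℝ := fun x => (x.1, F2 x) with hΦdef
  have hΦ : HasStrictFDerivAt Φ (e : (ℝ × ℝ) →L[ℝ] (ℝ × ℝ)) p := by
    have h1 : HasStrictFDerivAt (fun x : ℝ × ℝ => x.1)
        (ContinuousLinearMap.fst ℝ ℝ ℝ) p :=
      (ContinuousLinearMap.fst ℝ ℝ ℝ).hasStrictFDerivAt
    have h2 : HasStrictFDerivAt F2 A p := hCD.hasStrictFDerivAt one_ne_zero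
    exact h1.prodMk h2
  set linv := hΦ.localInverse Φ _ p with hlinv
  have hΦp : Φ p = (q, V q) := by
    simp only [hΦdef, hp, hF2]
    exact Prod.ext rfl (a_g hD)
  have hT : Filter.Tendsto (fun t : ℝ => ((t, V t) : ℝ × ℝ)) (𝓝 q) (𝓝 (Φ p)) := by
    rw [hΦp]
    exact (continuousAt_id.prodMk (hVc.continuousAt (icc_mem_nhds hq)))
  have hTy : Filter.Tendsto (fun t : ℝ => linv (t, V t)) (𝓝 q) (𝓝 p) :=
    hΦ.localInverse_tendsto.comp hT
  have E1 : ∀ᶠ t in 𝓝 q, Φ (linv (t, V t)) = (t, V t) :=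
    hT.eventually hΦ.eventually_right_inverse
  have E2 : ∀ᶠ t in 𝓝 q, linv (t, V t) ∈ OmegaSet F.ω := hTy.eventually_mem hnb
  have E3 : ∀ᶠ t in 𝓝 q, t ∈ Set.Icc (0:ℝ) 1 := icc_mem_nhds hq
  have E4 : ∀ᶠ t in 𝓝 q, 0 < V t :=
    ContinuousAt.eventually_lt continuousAt_const (hVc.continuousAt (icc_mem_nhds hq)) hVq
  have E5 : ∀ᶠ t in 𝓝 q, ENNReal.ofReal (V t) < F.aplus t := by
    refine ContinuousAt.eventually_lt ?_ (hc.continuousAt (icc_mem_nhds hq)) hlt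
    exact ENNReal.continuous_ofReal.continuousAt.comp (hVc.continuousAt (icc_mem_nhds hq))
  have Ekey : ∀ᶠ t in 𝓝 q, F.g t (V t) = (linv (t, V t)).2 := by
    filter_upwards [E1, E2, E3, E4, E5] with t h1 h2 h3 h4 h5
    set y := linv (t, V t) with hy
    have hy1 : y.1 = t := congrArg Prod.fst h1
    have hy2 : F.a y.1 y.2 = V t := congrArg Prod.snd h1
    rw [hy1] at hy2
    have hyΩ : y.2 ∈ sec F t := by
      have := h2.2; rwa [hy1] at this
    have hDt : ((t, V t) : ℝ × ℝ) ∈ DSet F.aplus := ⟨h3, by rwa [abs_of_pos h4]⟩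
    have := (a_strictMonoOn h3).injOn (g_mem_sec hDt) hyΩ
      (by rw [a_g hDt, hy2])
    exact this
  have hfin : Filter.Tendsto (fun t : ℝ => (linv (t, V t)).2) (𝓝 q) (𝓝 s₀) :=
    (continuous_snd.continuousAt.tendsto.comp hTy : _)
  exact (hfin.congr' (Ekey.mono fun t ht => ht.symm) : _)



section VSol
open MeasureTheory

variable {σ : ℝ} {V : ℝ → ℝ}

/-- The "degenerate" set where `ℋ(t, V t) = 0`. -/
def Eset (F : FluxData) (V : ℝ → ℝ) : Set ℝ :=
  {t | t ∈ Set.Ioo (0:ℝ) 1 ∧ F.aplus t ≤ ENNReal.ofReal (V t)}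

/-- The open set where `ℋ(t, V t) > 0`. -/
def Uset (F : FluxData) (V : ℝ → ℝ) : Set ℝ :=
  {t | t ∈ Set.Ioo (0:ℝ) 1 ∧ ENNReal.ofReal (V t) < F.aplus t}

lemma hfun_eq_zero {t : ℝ} (h : ¬ ENNReal.ofReal (V t) < F.aplus t) :
    Hfun F t (V t) = 0 := by
  rw [Hfun, if_neg h]

lemma hfun_eq_inv {t : ℝ} (h : ENNReal.ofReal (V t) < F.aplus t) :
    Hfun F t (V t) = 1 / F.g t (V t) := by
  rw [Hfun, if_pos h]

lemma uset_open (hc : ContinuousOn F.aplus (Set.Icc (0:ℝ) 1))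
    (hVc : ContinuousOn V (Set.Icc (0:ℝ) 1)) : IsOpen (Uset F V) := by
  rw [isOpen_iff_mem_nhds]
  rintro t₀ ⟨ht₀, hlt⟩
  have h1 : ∀ᶠ t in 𝓝 t₀, t ∈ Set.Ioo (0:ℝ) 1 := Ioo_mem_nhds ht₀.1 ht₀.2
  have h2 : ∀ᶠ t in 𝓝 t₀, ENNReal.ofReal (V t) < F.aplus t :=
    ContinuousAt.eventually_lt
      (ENNReal.continuous_ofReal.continuousAt.comp (hVc.continuousAt (icc_mem_nhds ht₀)))
      (hc.continuousAt (icc_mem_nhds ht₀)) hlt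
  filter_upwards [h1, h2] with t a b using ⟨a, b⟩

lemma hfn_continuousAt (hc : ContinuousOn F.aplus (Set.Icc (0:ℝ) 1))
    (hV : IsVsol F σ V) {q : ℝ} (hq : q ∈ Uset F V) :
    ContinuousAt (fun t => Hfun F t (V t)) q := by
  obtain ⟨hq01, hqlt⟩ := hq
  have hVq : 0 < V q := hV.2.2.1 q hq01
  have hgc : ContinuousAt (fun t => F.g t (V t)) q :=
    g_comp_continuousAt hc hV.1 hq01 hVq hqlt
  have hgpos : 0 < F.g q (V q) :=
    g_pos ⟨Set.Ioo_subset_Icc_self hq01, by rwa [abs_of_pos hVq]⟩ hVq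
  have hev : ∀ᶠ t in 𝓝 q, Hfun F t (V t) = 1 / F.g t (V t) := by
    have := (uset_open hc hV.1).mem_nhds (⟨hq01, hqlt⟩ : q ∈ Uset F V)
    filter_upwards [this] with t ht using hfun_eq_inv ht.2
  have : ContinuousAt (fun t => 1 / F.g t (V t)) q :=
    continuousAt_const.div hgc (ne_of_gt hgpos)
  exact this.congr (hev.mono fun t ht => ht.symm)

lemma hfn_locally_bdd (hV : IsVsol F σ V) {q : ℝ} (hq : q ∈ Set.Ioo (0:ℝ) 1) :
    ∃ M : ℝ, {t : ℝ | |Hfun F t (V t)| ≤ M} ∈ 𝓝 q := by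
  have hVq : 0 < V q := hV.2.2.1 q hq
  obtain ⟨s₀, hs₀, N, hN, hbd⟩ := g_lower_bound (F := F) hq (half_pos hVq)
  refine ⟨1 / s₀, ?_⟩
  have h1 : ∀ᶠ t in 𝓝 q, V q / 2 < V t :=
    ContinuousAt.eventually_lt continuousAt_const (hV.1.continuousAt (icc_mem_nhds hq))
      (by linarith)
  have h2 : ∀ᶠ t in 𝓝 q, t ∈ Set.Icc (0:ℝ) 1 := icc_mem_nhds hq
  filter_upwards [h1, h2, hN] with t ht1 ht2 ht3
  rw [Hfun]
  split_ifs with h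
  · have hD : ((t, V t) : ℝ × ℝ) ∈ DSet F.aplus :=
      ⟨ht2, by rwa [abs_of_pos (by linarith [half_pos hVq])]⟩
    have hg : s₀ ≤ F.g t (V t) := hbd t ht3 (V t) (by linarith) hD
    have hgpos : 0 < F.g t (V t) := lt_of_lt_of_le hs₀ hg
    rw [abs_of_nonneg (one_div_nonneg.2 hgpos.le)]
    exact one_div_le_one_div_of_le hs₀ hg
  · rw [abs_zero]
    exact le_of_lt (one_div_pos.2 hs₀)

lemma hfn_bdd_uIcc (hV : IsVsol F σ V) {x y : ℝ} (hx : x ∈ Set.Ioo (0:ℝ) 1)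
    (hy : y ∈ Set.Ioo (0:ℝ) 1) :
    ∃ M : ℝ, ∀ t ∈ Set.uIcc x y, |Hfun F t (V t)| ≤ M := by
  classical
  have hsub : Set.uIcc x y ⊆ Set.Ioo (0:ℝ) 1 := Set.ordConnected_Ioo.uIcc_subset hx hy
  set Mq : ℝ → ℝ := fun q => if h : q ∈ Set.Ioo (0:ℝ) 1 then (hfn_locally_bdd hV h).choose else 0
    with hMq
  have hU : ∀ q ∈ Set.uIcc x y, {t : ℝ | |Hfun F t (V t)| ≤ Mq q} ∈ 𝓝 q := by
    intro q hq
    have hq' := hsub hq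
    simp only [hMq, dif_pos hq']
    exact (hfn_locally_bdd hV hq').choose_spec
  obtain ⟨T, hTmem, hTcov⟩ := isCompact_uIcc.elim_nhds_subcover
    (fun q => {t : ℝ | |Hfun F t (V t)| ≤ Mq q}) hU
  refine ⟨∑ q ∈ T, |Mq q|, ?_⟩
  intro t ht
  obtain ⟨q, hqT, hqt⟩ := Set.mem_iUnion₂.1 (hTcov ht)
  calc |Hfun F t (V t)| ≤ Mq q := hqt
    _ ≤ |Mq q| := le_abs_self _
    _ ≤ ∑ r ∈ T, |Mq r| :=
        Finset.single_le_sum (f := fun r => |Mq r|) (fun r _ => abs_nonneg _) hqT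

lemma hfn_intervalIntegrable (hc : ContinuousOn F.aplus (Set.Icc (0:ℝ) 1))
    (hV : IsVsol F σ V) {x y : ℝ} (hx : x ∈ Set.Ioo (0:ℝ) 1) (hy : y ∈ Set.Ioo (0:ℝ) 1) :
    IntervalIntegrable (fun t => Hfun F t (V t)) volume x y := by
  rw [intervalIntegrable_iff]
  have hsub : Set.uIcc x y ⊆ Set.Ioo (0:ℝ) 1 := Set.ordConnected_Ioo.uIcc_subset hx hy
  refine IntegrableOn.mono_set ?_ Set.uIoc_subset_uIcc
  obtain ⟨M, hM⟩ := hfn_bdd_uIcc hV hx hy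
  have hUopen := uset_open hc hV.1
  have hsplit : Set.uIcc x y = (Set.uIcc x y ∩ Uset F V) ∪ (Set.uIcc x y \ Uset F V) :=
    (Set.inter_union_diff _ _).symm
  rw [hsplit]
  refine IntegrableOn.union ?_ ?_
  · have hmeas : MeasurableSet (Set.uIcc x y ∩ Uset F V) :=
      measurableSet_uIcc.inter hUopen.measurableSet
    have hcont : ContinuousOn (fun t => Hfun F t (V t)) (Set.uIcc x y ∩ Uset F V) :=
      fun t ht => (hfn_continuousAt hc hV ht.2).continuousWithinAt
    refine ⟨hcont.aestronglyMeasurable hmeas, ?_⟩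
    refine MeasureTheory.HasFiniteIntegral.restrict_of_bounded (C := M) ?_ ?_
    · refine lt_of_le_of_lt (measure_mono Set.inter_subset_left) ?_
      exact (isCompact_uIcc.measure_lt_top)
    · refine (ae_restrict_iff' hmeas).2 (Filter.Eventually.of_forall ?_)
      intro t ht
      exact hM t ht.1
  · have hmeas : MeasurableSet (Set.uIcc x y \ Uset F V) :=
      measurableSet_uIcc.diff hUopen.measurableSet
    refine (integrableOn_zero (ε' := ℝ)).congr_fun ?_ hmeas
    intro t ht
    have ht01 := hsub ht.1
    have : ¬ ENNReal.ofReal (V t) < F.aplus t := fun hlt => ht.2 ⟨ht01, hlt⟩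
    exact (hfun_eq_zero this).symm

lemma G_hasDerivAt (hc : ContinuousOn F.aplus (Set.Icc (0:ℝ) 1)) (hV : IsVsol F σ V)
    {u₀ u : ℝ} (hu₀ : u₀ ∈ Set.Ioo (0:ℝ) 1) (hu : u ∈ Uset F V) :
    HasDerivAt (fun x => ∫ t in u₀..x, Hfun F t (V t)) (Hfun F u (V u)) u :=
  intervalIntegral.integral_hasDerivAt_right
    (hfn_intervalIntegrable hc hV hu₀ hu.1)
    ((ContinuousOn.stronglyMeasurableAtFilter (uset_open hc hV.1)
      (fun t ht => (hfn_continuousAt hc hV ht).continuousWithinAt)) u hu)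
    (hfn_continuousAt hc hV hu)

lemma G_constant (hc : ContinuousOn F.aplus (Set.Icc (0:ℝ) 1)) (hV : IsVsol F σ V)
    {u₀ u w : ℝ} (hu₀ : u₀ ∈ Set.Ioo (0:ℝ) 1) (hu : u ∈ Set.Ioo (0:ℝ) 1)
    (hw : w ∈ Set.Ioo (0:ℝ) 1)
    (hE : ∀ t ∈ Set.uIcc u w, F.aplus t ≤ ENNReal.ofReal (V t)) :
    (∫ t in u₀..u, Hfun F t (V t)) = ∫ t in u₀..w, Hfun F t (V t) := by
  have h1 := hfn_intervalIntegrable hc hV hu₀ hu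
  have h2 := hfn_intervalIntegrable hc hV hu₀ hw
  have h3 : (∫ t in u₀..w, Hfun F t (V t)) - ∫ t in u₀..u, Hfun F t (V t)
      = ∫ t in u..w, Hfun F t (V t) := intervalIntegral.integral_interval_sub_left h2 h1
  have h4 : (∫ t in u..w, Hfun F t (V t)) = 0 := by
    rw [intervalIntegral.integral_congr (g := fun _ => (0:ℝ))
      (fun t ht => hfun_eq_zero (not_lt.2 (hE t ht)))]
    simp
  linarith

lemma eset_ne_top {q : ℝ} (hq : q ∈ Eset F V) : F.aplus q ≠ ⊤ :=
  (lt_of_le_of_lt hq.2 ENNReal.ofReal_lt_top).ne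

lemma aplus_le_of_frequently (hc : ContinuousOn F.aplus (Set.Icc (0:ℝ) 1))
    (hV : IsVsol F σ V) {q : ℝ} (hq : q ∈ Set.Icc (0:ℝ) 1)
    (hfr : ∃ᶠ x in 𝓝[Set.Icc (0:ℝ) 1] q, x ∈ Eset F V) :
    F.aplus q ≤ ENNReal.ofReal (V q) := by
  by_contra hlt
  push_neg at hlt
  have h1 : ∀ᶠ x in 𝓝[Set.Icc (0:ℝ) 1] q, ENNReal.ofReal (V x) < F.aplus x := by
    have hT : Filter.Tendsto (fun x => ((ENNReal.ofReal (V x), F.aplus x) : ℝ≥0∞ × ℝ≥0∞))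
        (𝓝[Set.Icc (0:ℝ) 1] q) (𝓝 (ENNReal.ofReal (V q), F.aplus q)) :=
      ((ENNReal.continuous_ofReal.comp_continuousOn hV.1 q hq).tendsto.prodMk_nhds
        ((hc q hq).tendsto))
    have hopen : IsOpen {p : ℝ≥0∞ × ℝ≥0∞ | p.1 < p.2} := isOpen_lt continuous_fst continuous_snd
    exact hT.eventually (hopen.mem_nhds hlt)
  obtain ⟨x, hx1, hx2⟩ := (hfr.and_eventually h1).exists
  exact absurd hx1.2 (not_le.2 hx2)

section AR

variable {aR aRd : ℝ → ℝ}

/-- Abbreviation for the standing hypothesis on `aR`. -/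
def ARhyp (F : FluxData) (aR aRd : ℝ → ℝ) : Prop :=
  ∀ u ∈ Set.Icc (0:ℝ) 1, F.aplus u ≠ ⊤ →
    F.aplus u = ENNReal.ofReal (aR u) ∧ HasDerivWithinAt aR (aRd u) (Set.Icc (0:ℝ) 1) u

lemma aR_pos (haR : ARhyp F aR aRd) {q : ℝ} (hq : q ∈ Set.Icc (0:ℝ) 1)
    (hne : F.aplus q ≠ ⊤) : 0 < aR q := by
  by_contra h
  push_neg at h
  have := (haR q hq hne).1
  rw [ENNReal.ofReal_eq_zero.2 h] at this
  exact absurd this (ne_of_gt (F.aplus_pos q hq))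

lemma aR_le_V (hV : IsVsol F σ V) (haR : ARhyp F aR aRd) {q : ℝ} (hq : q ∈ Eset F V) :
    aR q ≤ V q := by
  have h1 := (haR q (Set.Ioo_subset_Icc_self hq.1) (eset_ne_top hq)).1
  have h2 : ENNReal.ofReal (aR q) ≤ ENNReal.ofReal (V q) := h1 ▸ hq.2
  exact (ENNReal.ofReal_le_ofReal_iff (hV.2.2.1 q hq.1).le).1 h2

lemma aR_eventually_ne_top (hc : ContinuousOn F.aplus (Set.Icc (0:ℝ) 1))
    {q : ℝ} (hq : q ∈ Set.Ioo (0:ℝ) 1) (hne : F.aplus q ≠ ⊤) :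
    ∀ᶠ t in 𝓝 q, t ∈ Set.Icc (0:ℝ) 1 ∧ F.aplus t ≠ ⊤ := by
  have h1 : ∀ᶠ t in 𝓝 q, F.aplus t < ⊤ :=
    (hc.continuousAt (icc_mem_nhds hq)).preimage_mem_nhds
      (Iio_mem_nhds (lt_top_iff_ne_top.2 hne))
  filter_upwards [icc_mem_nhds hq, h1] with t h h' using ⟨h, h'.ne⟩

lemma aR_continuousAt (hc : ContinuousOn F.aplus (Set.Icc (0:ℝ) 1))
    (haR : ARhyp F aR aRd) {q : ℝ} (hq : q ∈ Set.Ioo (0:ℝ) 1) (hne : F.aplus q ≠ ⊤) :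
    ContinuousAt aR q := by
  have hev : ∀ᶠ t in 𝓝 q, aR t = (F.aplus t).toReal := by
    filter_upwards [aR_eventually_ne_top hc hq hne] with t ht
    rw [(haR t ht.1 ht.2).1, ENNReal.toReal_ofReal (aR_pos haR ht.1 ht.2).le]
  have hcont : ContinuousAt (fun t => (F.aplus t).toReal) q :=
    (ENNReal.tendsto_toReal hne).comp (hc.continuousAt (icc_mem_nhds hq))
  exact hcont.congr (hev.mono fun t ht => ht.symm)

lemma psi_zero (hc : ContinuousOn F.aplus (Set.Icc (0:ℝ) 1)) (hV : IsVsol F σ V)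
    (haR : ARhyp F aR aRd) {q : ℝ} (hq : q ∈ Eset F V)
    (hfr : ∃ᶠ x in 𝓝 q, x ∈ Set.Ioo (0:ℝ) 1 ∧ x ∉ Eset F V) :
    V q = aR q := by
  have hne := eset_ne_top hq
  have hq01 := hq.1
  have hge : aR q ≤ V q := aR_le_V hV haR hq
  have hfr2 : ∃ᶠ x in 𝓝 q, V x - aR x < 0 := by
    refine (hfr.and_eventually (aR_eventually_ne_top hc hq01 hne)).mono ?_
    rintro x ⟨⟨hx1, hx2⟩, hx3, hx4⟩
    have hlt : ENNReal.ofReal (V x) < F.aplus x := not_le.1 (fun h => hx2 ⟨hx1, h⟩)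
    rw [(haR x hx3 hx4).1] at hlt
    have : V x < aR x := by
      by_contra hcon
      push_neg at hcon
      exact absurd (ENNReal.ofReal_le_ofReal hcon) (not_le.2 hlt)
    linarith
  have hcontψ : ContinuousAt (fun t => V t - aR t) q :=
    (hV.1.continuousAt (icc_mem_nhds hq01)).sub (aR_continuousAt hc haR hq01 hne)
  by_contra hcon
  have hpos : 0 < V q - aR q := lt_of_le_of_ne (by linarith) (by intro h; exact hcon (by linarith))
  have hev : ∀ᶠ x in 𝓝 q, 0 < V x - aR x :=
    ContinuousAt.eventually_lt continuousAt_const hcontψ hpos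
  obtain ⟨x, hx1, hx2⟩ := (hfr2.and_eventually hev).exists
  linarith

lemma psi_hasDerivAt (hV : IsVsol F σ V) (haR : ARhyp F aR aRd) {q : ℝ}
    (hq : q ∈ Eset F V) :
    HasDerivAt (fun t => V t - aR t) (σ - aRd q) q := by
  have h1 : HasDerivAt V (σ - F.f q * Hfun F q (V q)) q := hV.2.2.2 q hq.1
  rw [hfun_eq_zero (not_lt.2 hq.2), mul_zero, sub_zero] at h1
  have h2 : HasDerivAt aR (aRd q) q :=
    ((haR q (Set.Ioo_subset_Icc_self hq.1) (eset_ne_top hq)).2).hasDerivAt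
      (icc_mem_nhds hq.1)
  exact h1.sub h2

lemma psi_neg_of_not_mem (hV : IsVsol F σ V) (haR : ARhyp F aR aRd) {t : ℝ}
    (ht : t ∈ Set.Ioo (0:ℝ) 1) (htE : t ∉ Eset F V) (htop : F.aplus t ≠ ⊤) :
    V t - aR t < 0 := by
  have hlt : ENNReal.ofReal (V t) < F.aplus t := not_le.1 (fun h => htE ⟨ht, h⟩)
  rw [(haR t (Set.Ioo_subset_Icc_self ht) htop).1] at hlt
  have : V t < aR t := by
    by_contra hcon
    push_neg at hcon
    exact absurd (ENNReal.ofReal_le_ofReal hcon) (not_le.2 hlt)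
  linarith

/-- Structure of points of `E`: either there is a `W`-point in the same component,
or the component clings to `0`. -/
lemma crit_point_structure (hc : ContinuousOn F.aplus (Set.Icc (0:ℝ) 1))
    (hV : IsVsol F σ V) (haR : ARhyp F aR aRd) {u : ℝ} (hu : u ∈ Eset F V) :
    (∃ c, c ∈ Set.Ioo (0:ℝ) 1 ∧ F.aplus c ≠ ⊤ ∧ aRd c = σ ∧
      ∀ t ∈ Set.uIcc u c, F.aplus t ≤ ENNReal.ofReal (V t)) ∨
    Set.Ioc (0:ℝ) u ⊆ Eset F V := by
  obtain ⟨hu01, huE⟩ := hu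
  set E := Eset F V with hE
  -- left endpoint
  set SL : Set ℝ := {t | t ∈ Set.Ioc (0:ℝ) u ∧ Set.Icc t u ⊆ E} with hSL
  have hUSL : u ∈ SL := ⟨⟨hu01.1, le_refl u⟩, by
    rw [Set.Icc_self]; exact Set.singleton_subset_iff.2 ⟨hu01, huE⟩⟩
  have hSLne : SL.Nonempty := ⟨u, hUSL⟩
  have hbddL : BddBelow SL := ⟨0, fun t ht => ht.1.1.le⟩
  set a : ℝ := sInf SL with ha
  have ha0 : 0 ≤ a := le_csInf hSLne (fun t ht => ht.1.1.le)
  have hau : a ≤ u := csInf_le hbddL hUSL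
  have hIocE : ∀ x, a < x → x ≤ u → x ∈ E := by
    intro x hax hxu
    obtain ⟨y, hy, hyx⟩ := (csInf_lt_iff hbddL hSLne).1 hax
    exact hy.2 ⟨hyx.le, hxu⟩
  rcases eq_or_lt_of_le ha0 with ha0' | hapos
  · -- clinging case
    right
    rintro t ⟨ht0, htu⟩
    exact hIocE t (by rw [← ha0']; exact ht0) htu
  left
  -- a ∈ E and Icc a u ⊆ E
  have haE : a ∈ E := by
    rcases eq_or_lt_of_le hau with h | hau'
    · rw [h]; exact ⟨hu01, huE⟩
    have haIoo : a ∈ Set.Ioo (0:ℝ) 1 := ⟨hapos, lt_trans hau' hu01.2⟩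
    have hfr : ∃ᶠ x in 𝓝[Set.Icc (0:ℝ) 1] a, x ∈ E := by
      rw [nhdsWithin_eq_nhds.2 (icc_mem_nhds haIoo)]
      rw [Filter.frequently_iff]
      intro U hU
      obtain ⟨ε, hε, hball⟩ := Metric.mem_nhds_iff.1 hU
      refine ⟨min u (a + ε / 2), hball ?_, ?_⟩
      · rw [Metric.mem_ball, Real.dist_eq, abs_of_pos (by
          simp only [lt_min_iff, sub_pos]
          exact ⟨hau', by linarith⟩ : (0:ℝ) < min u (a + ε / 2) - a)]
        have : min u (a + ε / 2) ≤ a + ε / 2 := min_le_right _ _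
        linarith
      · exact hIocE _ (lt_min hau' (by linarith)) (min_le_left _ _)
    exact ⟨haIoo, aplus_le_of_frequently hc hV (Set.Ioo_subset_Icc_self haIoo) hfr⟩
  have hIccaE : Set.Icc a u ⊆ E := by
    rintro x ⟨hax, hxu⟩
    rcases eq_or_lt_of_le hax with h | h
    · rw [← h]; exact haE
    · exact hIocE x h hxu
  have hL : ∀ t, 0 < t → t < a → ∃ x, x ∈ Set.Ico t a ∧ x ∉ E := by
    intro t ht0 hta
    have hnotsub : ¬ Set.Icc t u ⊆ E := by
      intro hsub
      have : t ∈ SL := ⟨⟨ht0, le_trans hta.le hau⟩, hsub⟩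
      exact absurd (csInf_le hbddL this) (not_le.2 hta)
    obtain ⟨x, hx1, hx2⟩ := Set.not_subset.1 hnotsub
    refine ⟨x, ⟨hx1.1, ?_⟩, hx2⟩
    by_contra hge
    push_neg at hge
    exact hx2 (hIccaE ⟨hge, hx1.2⟩)
  -- right endpoint
  set SR : Set ℝ := {t | t ∈ Set.Ico u 1 ∧ Set.Icc u t ⊆ E} with hSR
  have hUSR : u ∈ SR := ⟨⟨le_refl u, hu01.2⟩, by
    rw [Set.Icc_self]; exact Set.singleton_subset_iff.2 ⟨hu01, huE⟩⟩
  have hSRne : SR.Nonempty := ⟨u, hUSR⟩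
  have hbddR : BddAbove SR := ⟨1, fun t ht => ht.1.2.le⟩
  set b : ℝ := sSup SR with hb
  have hub : u ≤ b := le_csSup hbddR hUSR
  have hIcoE : ∀ x, u ≤ x → x < b → x ∈ E := by
    intro x hux hxb
    obtain ⟨y, hy, hxy⟩ := exists_lt_of_lt_csSup hSRne hxb
    exact hy.2 ⟨hux, hxy.le⟩
  have hb1 : b < 1 := by
    rcases lt_or_ge b 1 with h | h
    · exact h
    exfalso
    have hfr : ∃ᶠ x in 𝓝[Set.Icc (0:ℝ) 1] 1, x ∈ E := by
      rw [Filter.frequently_iff]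
      intro U hU
      obtain ⟨ε, hε, hball⟩ := Metric.mem_nhdsWithin_iff.1 hU
      obtain ⟨t', ht', htgt⟩ := exists_lt_of_lt_csSup hSRne
        (show (1:ℝ) - ε < b by linarith)
      have ht'E : t' ∈ E := ht'.2 ⟨ht'.1.1, le_refl t'⟩
      refine ⟨t', hball ⟨?_, ⟨ht'E.1.1.le, ht'E.1.2.le⟩⟩, ht'E⟩
      rw [Metric.mem_ball, Real.dist_eq, abs_of_neg (by linarith [ht'.1.2] : t' - 1 < 0)]
      linarith [ht'.1.2]
    have := aplus_le_of_frequently hc hV (Set.right_mem_Icc.2 zero_le_one) hfr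
    rw [hV.2.1, ENNReal.ofReal_zero] at this
    exact absurd this (not_le.2 (F.aplus_pos 1 (Set.right_mem_Icc.2 zero_le_one)))
  have hbE : b ∈ E := by
    rcases eq_or_lt_of_le hub with h | hub'
    · rw [← h]; exact ⟨hu01, huE⟩
    have hbIoo : b ∈ Set.Ioo (0:ℝ) 1 := ⟨lt_of_lt_of_le hu01.1 hub, hb1⟩
    have hfr : ∃ᶠ x in 𝓝[Set.Icc (0:ℝ) 1] b, x ∈ E := by
      rw [nhdsWithin_eq_nhds.2 (icc_mem_nhds hbIoo)]
      rw [Filter.frequently_iff]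
      intro U hU
      obtain ⟨ε, hε, hball⟩ := Metric.mem_nhds_iff.1 hU
      refine ⟨max u (b - ε / 2), hball ?_, ?_⟩
      · rw [Metric.mem_ball, Real.dist_eq, abs_of_neg (by
          simp only [sub_neg, max_lt_iff]
          exact ⟨hub', by linarith⟩ : max u (b - ε / 2) - b < 0)]
        have : b - ε / 2 ≤ max u (b - ε / 2) := le_max_right _ _
        linarith
      · exact hIcoE _ (le_max_left _ _) (max_lt hub' (by linarith))
    exact ⟨hbIoo, aplus_le_of_frequently hc hV (Set.Ioo_subset_Icc_self hbIoo) hfr⟩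
  have hIccbE : Set.Icc u b ⊆ E := by
    rintro x ⟨hux, hxb⟩
    rcases eq_or_lt_of_le hxb with h | h
    · rw [h]; exact hbE
    · exact hIcoE x hux h
  have hR : ∀ t, b < t → t < 1 → ∃ x, x ∈ Set.Ioc b t ∧ x ∉ E := by
    intro t hbt ht1
    have hnotsub : ¬ Set.Icc u t ⊆ E := by
      intro hsub
      have : t ∈ SR := ⟨⟨le_trans hub hbt.le, ht1⟩, hsub⟩
      exact absurd (le_csSup hbddR this) (not_le.2 hbt)
    obtain ⟨x, hx1, hx2⟩ := Set.not_subset.1 hnotsub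
    refine ⟨x, ⟨?_, hx1.2⟩, hx2⟩
    by_contra hge
    push_neg at hge
    exact hx2 (hIccbE ⟨hx1.1, hge⟩)
  -- both endpoints are zeros of ψ
  have hIccabE : Set.Icc a b ⊆ E := by
    rintro x ⟨hax, hxb⟩
    rcases le_total x u with h | h
    · exact hIccaE ⟨hax, h⟩
    · exact hIccbE ⟨h, hxb⟩
  have hψa : V a = aR a := by
    refine psi_zero hc hV haR haE ?_
    rw [Filter.frequently_iff]
    intro U hU
    obtain ⟨ε, hε, hball⟩ := Metric.mem_nhds_iff.1 hU
    obtain ⟨x, hx1, hx2⟩ := hL (max (a / 2) (a - ε / 2))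
      (lt_max_of_lt_left (by linarith)) (max_lt (by linarith) (by linarith))
    have hxlb : a - ε / 2 ≤ x := le_trans (le_max_right _ _) hx1.1
    have hx0 : 0 < x :=
      lt_of_lt_of_le (by linarith : (0:ℝ) < a / 2) (le_trans (le_max_left _ _) hx1.1)
    refine ⟨x, hball ?_, ⟨hx0, lt_of_lt_of_le hx1.2 (hau.trans hu01.2.le)⟩, hx2⟩
    rw [Metric.mem_ball, Real.dist_eq, abs_of_neg (by linarith [hx1.2] : x - a < 0)]
    linarith [hx1.2]
  have hψb : V b = aR b := by
    refine psi_zero hc hV haR hbE ?_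
    rw [Filter.frequently_iff]
    intro U hU
    obtain ⟨ε, hε, hball⟩ := Metric.mem_nhds_iff.1 hU
    obtain ⟨x, hx1, hx2⟩ := hR (min ((b + 1) / 2) (b + ε / 2))
      (lt_min (by linarith) (by linarith)) (lt_of_le_of_lt (min_le_left _ _) (by linarith))
    have hxub : x ≤ b + ε / 2 := le_trans hx1.2 (min_le_right _ _)
    refine ⟨x, hball ?_, ⟨lt_trans (lt_of_lt_of_le hu01.1 hub) hx1.1, ?_⟩, hx2⟩
    · rw [Metric.mem_ball, Real.dist_eq, abs_of_pos (by linarith [hx1.1] : (0:ℝ) < x - b)]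
      linarith [hx1.1]
    · exact lt_of_le_of_lt hx1.2 (lt_of_le_of_lt (min_le_left _ _) (by linarith))
  -- Rolle or singleton
  rcases eq_or_lt_of_le (hau.trans hub) with hab | hab
  · -- singleton : a = b, hence a = u = b
    have hua : u = a := le_antisymm (by rw [hab]; exact hub) hau
    have hψu : V u = aR u := by rw [hua]; exact hψa
    have hd : HasDerivAt (fun t => V t - aR t) (σ - aRd u) u :=
      psi_hasDerivAt hV haR ⟨hu01, huE⟩
    have hdz : σ - aRd u = 0 := by
      by_contra hd0
      have hslope := hasDerivAt_iff_tendsto_slope.1 hd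
      rcases lt_or_gt_of_ne hd0 with hneg | hpos
      · -- negative derivative: ψ > 0 on the left, contradiction
        have hslopeL : Filter.Tendsto (slope (fun t => V t - aR t) u) (𝓝[<] u)
            (𝓝 (σ - aRd u)) :=
          hslope.mono_left (nhdsWithin_mono u (fun x hx => ne_of_lt hx))
        have hev1 : ∀ᶠ t in 𝓝[<] u, slope (fun t => V t - aR t) u t < 0 :=
          hslopeL.eventually (Filter.Tendsto.eventually_lt_const hneg Filter.tendsto_id)
        have hev2 : ∀ᶠ t in 𝓝[<] u, t < u := self_mem_nhdsWithin
        have hev3 : ∀ᶠ t in 𝓝[<] u, t ∈ Set.Icc (0:ℝ) 1 ∧ F.aplus t ≠ ⊤ :=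
          (aR_eventually_ne_top hc hu01 (eset_ne_top ⟨hu01, huE⟩)).filter_mono
            nhdsWithin_le_nhds
        have hfrL : ∃ᶠ t in 𝓝[<] u, t ∈ Set.Ioo (0:ℝ) 1 ∧ t ∉ E := by
          rw [Filter.frequently_iff]
          intro U hU
          obtain ⟨l, hl, hsub⟩ := mem_nhdsLT_iff_exists_Ioo_subset.1 hU
          have hlu : l < u := hl
          have ht0pos : 0 < max ((l + u) / 2) (u / 2) :=
            lt_of_lt_of_le (by linarith [hu01.1]) (le_max_right _ _)
          have ht0lt : max ((l + u) / 2) (u / 2) < a :=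
            hua ▸ (max_lt (by linarith) (by linarith [hu01.1]))
          obtain ⟨x, hx1, hx2⟩ := hL _ ht0pos ht0lt
          have hxu : x < u := by rw [hua]; exact hx1.2
          have hxl : l < x :=
            lt_of_lt_of_le (by linarith) ((le_max_left _ _).trans hx1.1)
          have hx0 : 0 < x := lt_of_lt_of_le ht0pos hx1.1
          exact ⟨x, hsub ⟨hxl, hxu⟩, ⟨hx0, hxu.trans hu01.2⟩, hx2⟩
        obtain ⟨t, ⟨ht1, ht2⟩, ht3, ht4, ht5, ht6⟩ :=
          (hfrL.and_eventually (hev1.and (hev2.and hev3))).exists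
        have hψt : V t - aR t < 0 := psi_neg_of_not_mem hV haR ht1 ht2 ht6
        have htu : t - u ≠ 0 := sub_ne_zero.2 (ne_of_lt ht4)
        have hslope_eq : (V t - aR t) - (V u - aR u)
            = slope (fun t => V t - aR t) u t * (t - u) := by
          rw [slope_def_field]; field_simp
        have hzero : V u - aR u = 0 := by rw [hψu]; ring
        nlinarith [mul_pos_of_neg_of_neg ht3 (by linarith : t - u < 0)]
      · have hub2 : u = b := hua.trans hab
        have hslopeR : Filter.Tendsto (slope (fun t => V t - aR t) u) (𝓝[>] u)
            (𝓝 (σ - aRd u)) :=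
          hslope.mono_left (nhdsWithin_mono u (fun x hx => ne_of_gt hx))
        have hev1 : ∀ᶠ t in 𝓝[>] u, 0 < slope (fun t => V t - aR t) u t :=
          hslopeR.eventually (Filter.Tendsto.eventually_const_lt hpos Filter.tendsto_id)
        have hev2 : ∀ᶠ t in 𝓝[>] u, u < t := self_mem_nhdsWithin
        have hev3 : ∀ᶠ t in 𝓝[>] u, t ∈ Set.Icc (0:ℝ) 1 ∧ F.aplus t ≠ ⊤ :=
          (aR_eventually_ne_top hc hu01 (eset_ne_top ⟨hu01, huE⟩)).filter_mono
            nhdsWithin_le_nhds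
        have hfrR : ∃ᶠ t in 𝓝[>] u, t ∈ Set.Ioo (0:ℝ) 1 ∧ t ∉ E := by
          rw [Filter.frequently_iff]
          intro U hU
          obtain ⟨r, hr, hsub⟩ := mem_nhdsGT_iff_exists_Ioo_subset.1 hU
          have hur : u < r := hr
          have ht0gt : b < min ((u + r) / 2) ((u + 1) / 2) :=
            hub2 ▸ (lt_min (by linarith) (by linarith [hu01.2]))
          have ht0lt : min ((u + r) / 2) ((u + 1) / 2) < 1 :=
            lt_of_le_of_lt (min_le_right _ _) (by linarith [hu01.2])
          obtain ⟨x, hx1, hx2⟩ := hR _ ht0gt ht0lt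
          have hux : u < x := by
            have := hx1.1; rw [← hub2] at this; exact this
          have hxr : x < r :=
            lt_of_le_of_lt (hx1.2.trans (min_le_left _ _)) (by linarith)
          have hx1' : x < 1 := lt_of_le_of_lt hx1.2 ht0lt
          exact ⟨x, hsub ⟨hux, hxr⟩, ⟨hu01.1.trans hux, hx1'⟩, hx2⟩
        obtain ⟨t, ⟨ht1, ht2⟩, ht3, ht4, ht5, ht6⟩ :=
          (hfrR.and_eventually (hev1.and (hev2.and hev3))).exists
        have hψt : V t - aR t < 0 := psi_neg_of_not_mem hV haR ht1 ht2 ht6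
        have htu : t - u ≠ 0 := sub_ne_zero.2 (ne_of_gt ht4)
        have hslope_eq : (V t - aR t) - (V u - aR u)
            = slope (fun t => V t - aR t) u t * (t - u) := by
          rw [slope_def_field]; field_simp
        have hzero : V u - aR u = 0 := by rw [hψu]; ring
        nlinarith [mul_pos ht3 (by linarith : 0 < t - u)]
    refine ⟨u, hu01, eset_ne_top ⟨hu01, huE⟩, by linarith, ?_⟩
    rw [Set.uIcc_self]
    rintro t ht
    rw [Set.mem_singleton_iff.1 ht]
    exact huE
  · -- nondegenerate : Rolle
    have hcont : ContinuousOn (fun t => V t - aR t) (Set.Icc a b) :=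
      fun x hx => (psi_hasDerivAt hV haR (hIccabE hx)).continuousAt.continuousWithinAt
    have hderiv : ∀ x ∈ Set.Ioo a b, HasDerivAt (fun t => V t - aR t) (σ - aRd x) x :=
      fun x hx => psi_hasDerivAt hV haR (hIccabE (Set.Ioo_subset_Icc_self hx))
    have hfI : V a - aR a = V b - aR b := by rw [hψa, hψb, sub_self, sub_self]
    obtain ⟨c, hcmem, hc0⟩ := exists_hasDerivAt_eq_zero hab hcont hfI hderiv
    have hcE : c ∈ E := hIccabE (Set.Ioo_subset_Icc_self hcmem)
    refine ⟨c, hcE.1, eset_ne_top hcE, by linarith, ?_⟩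
    intro t ht
    have hsubuc : Set.uIcc u c ⊆ Set.Icc a b :=
      Set.ordConnected_Icc.uIcc_subset ⟨hau, hub⟩ (Set.Ioo_subset_Icc_self hcmem)
    exact (hIccabE (hsubuc ht)).2

end AR

end VSol

end Stmt13Aux

theorem stmt13 (F : FluxData) (hc : ContinuousOn F.aplus (Set.Icc (0:ℝ) 1))
    (𝒱 : ℝ → ℝ → ℝ) (h𝒱 : ∀ σ : ℝ, 0 ≤ σ → IsVsol F σ (𝒱 σ))
    (σs : ℝ) (hσs : σs = sInf {σ : ℝ | 0 ≤ σ ∧ 𝒱 σ 0 = 0})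
    (hne : {σ : ℝ | 0 ≤ σ ∧ 𝒱 σ 0 = 0}.Nonempty)
    (aR aRd : ℝ → ℝ)
    (haR : ∀ u ∈ Set.Icc (0:ℝ) 1, F.aplus u ≠ ⊤ →
      F.aplus u = ENNReal.ofReal (aR u) ∧ HasDerivWithinAt aR (aRd u) (Set.Icc (0:ℝ) 1) u)
    (σ : ℝ) (hσ : σs ≤ σ) (u₀ : ℝ) (hu₀ : u₀ ∈ Set.Ioo (0:ℝ) 1)
    (G : ℝ → ℝ) (hG : ∀ u : ℝ, G u = ∫ t in u₀..u, Hfun F t (𝒱 σ t))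
    (hW : {u : ℝ | u ∈ Set.Icc (0:ℝ) 1 ∧ F.aplus u ≠ ⊤ ∧ aRd u = σ}.Finite) :
    {ξ : ℝ | ∃ u ∈ Set.Ioo (0:ℝ) 1, G u = ξ ∧ deriv G u = 0}.Finite := by
  classical
  set V : ℝ → ℝ := 𝒱 σ with hVdef
  have hσ0 : 0 ≤ σ := by
    have h0 : 0 ≤ σs := by
      rw [hσs]
      exact Real.sInf_nonneg (fun x hx => hx.1)
    linarith
  have hV : IsVsol F σ V := h𝒱 σ hσ0
  have haR' : Stmt13Aux.ARhyp F aR aRd := haR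
  set P : Set ℝ :=
    {u : ℝ | u ∈ Set.Ioo (0:ℝ) 1 ∧ Set.Ioc (0:ℝ) u ⊆ Stmt13Aux.Eset F V} with hP
  have hconst : ∀ u w, u ∈ Set.Ioo (0:ℝ) 1 → w ∈ Set.Ioo (0:ℝ) 1 →
      (∀ t ∈ Set.uIcc u w, F.aplus t ≤ ENNReal.ofReal (V t)) → G u = G w := by
    intro u w hu hw hE
    rw [hG u, hG w]
    exact Stmt13Aux.G_constant hc hV hu₀ hu hw hE
  have hsub : {ξ : ℝ | ∃ u ∈ Set.Ioo (0:ℝ) 1, G u = ξ ∧ deriv G u = 0} ⊆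
      (G '' {u : ℝ | u ∈ Set.Icc (0:ℝ) 1 ∧ F.aplus u ≠ ⊤ ∧ aRd u = σ}) ∪ (G '' P) := by
    rintro ξ ⟨u, hu, hGu, hcrit⟩
    have huE : u ∈ Stmt13Aux.Eset F V := by
      by_contra hnot
      have hlt : ENNReal.ofReal (V u) < F.aplus u :=
        not_le.1 (fun h => hnot ⟨hu, h⟩)
      have hd := Stmt13Aux.G_hasDerivAt hc hV hu₀ (⟨hu, hlt⟩ : u ∈ Stmt13Aux.Uset F V)
      have hd' : HasDerivAt G (Hfun F u (V u)) u := by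
        have hfun : G = fun x => ∫ t in u₀..x, Hfun F t (V t) := funext hG
        rw [hfun]; exact hd
      have hder : deriv G u = Hfun F u (V u) := hd'.deriv
      rw [hcrit] at hder
      have hVpos : 0 < V u := hV.2.2.1 u hu
      have hgpos : 0 < F.g u (V u) :=
        Stmt13Aux.g_pos ⟨Set.Ioo_subset_Icc_self hu, by rwa [abs_of_pos hVpos]⟩ hVpos
      rw [Stmt13Aux.hfun_eq_inv hlt] at hder
      exact absurd hder.symm (ne_of_gt (one_div_pos.2 hgpos))
    rcases Stmt13Aux.crit_point_structure hc hV haR' huE with ⟨c, hc1, hc2, hc3, hc4⟩ | hPu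
    · left
      refine ⟨c, ⟨Set.Ioo_subset_Icc_self hc1, hc2, hc3⟩, ?_⟩
      rw [← hGu]
      exact (hconst u c hu hc1 hc4).symm
    · right
      exact ⟨u, ⟨hu, hPu⟩, hGu⟩
  refine Set.Finite.subset (Set.Finite.union (hW.image G) ?_) hsub
  apply Set.Subsingleton.finite
  rintro x ⟨p, hp, rfl⟩ y ⟨q, hq, rfl⟩
  have key : ∀ p q : ℝ, p ∈ P → q ∈ P → p ≤ q → G p = G q := by
    intro p q hp hq hpq
    refine hconst p q hp.1 hq.1 ?_
    intro t ht
    rw [Set.uIcc_of_le hpq] at ht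
    exact (hq.2 ⟨lt_of_lt_of_le hp.1.1 ht.1, ht.2⟩).2
  rcases le_total p q with h | h
  · exact key p q hp hq h
  · exact (key q p hq hp h).symm
end
end
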